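/- arXiv:1810.03907 — 5 statements merged into one kernel-verified Lean document; each statement's English description precedes it below -/
import Mathlib

section
/- (A priori estimate form of Corollary 2.2.) For every M ∈ ℤ⁺ and all A₁, A₂, T > 0 there exists c = c(A₁, A₂, T) > 0 such that: if b : ℝ → ℂ satisfies hypothesis (H) with constants M, A₁, A₂, if f : ℝ × [0,T] → ℂ is continuous and, for each t, f(·,t) is a Schwartz function depending continuously on t, and if u : ℝ × [0,T] → ℂ is C¹ in t and C² in x, with u(·,t) Schwartz for each t, and satisfies pointwise ∂_t u = i ∂_x² u + b(x) ∂_x u + f(x,t) on ℝ × [0,T], then sup_{t∈[0,T]} ‖u(·,t)‖₂ ≤ c ( ‖u(·,0)‖₂ + ∫₀^T ‖f(·,t)‖₂ dt ). -/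
open MeasureTheory Complex Filter Set Topology ENNReal

lemma HasDerivAt.creal {f : ℝ → ℂ} {f' : ℂ} {x : ℝ} (h : HasDerivAt f f' x) :
    HasDerivAt (fun y => (f y).re) f'.re x :=
  (Complex.reCLM.hasFDerivAt.comp_hasDerivAt x h)

lemma HasDerivAt.cimag {f : ℝ → ℂ} {f' : ℂ} {x : ℝ} (h : HasDerivAt f f' x) :
    HasDerivAt (fun y => (f y).im) f'.im x :=
  (Complex.imCLM.hasFDerivAt.comp_hasDerivAt x h)

lemma hasDerivAt_normSq_comp {g : ℝ → ℂ} {g' : ℂ} {t : ℝ} (h : HasDerivAt g g' t) :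
    HasDerivAt (fun s => Complex.normSq (g s)) (2 * ((starRingEnd ℂ) (g t) * g').re) t := by
  have hr := h.creal; have hi := h.cimag
  have H := (hr.mul hr).add (hi.mul hi)
  simp only [Complex.normSq_apply]
  refine H.congr_deriv ?_
  simp [Complex.mul_re]; ring

lemma aux_integrable (g : ℝ → ℝ) (C : ℝ) (hm : AEStronglyMeasurable g volume)
    (h : ∀ x, ‖g x‖ ≤ C * (1 + x ^ 2)⁻¹) : Integrable g :=
  ((integrable_inv_one_add_sq).const_mul C).mono' hm (ae_of_all _ h)

lemma aux_unif_bound (V : ℝ → SchwartzMap ℝ ℂ) (hV : Continuous V) (a b : ℝ) :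
    ∃ C : ℝ, 0 ≤ C ∧ ∀ t ∈ Set.Icc a b, ∀ x : ℝ, (1 + x ^ 2) * ‖V t x‖ ≤ C := by
  have hq : Continuous fun t => (SchwartzMap.seminorm ℝ 0 0 (V t) : ℝ) +
      SchwartzMap.seminorm ℝ 2 0 (V t) :=
    (((schwartz_withSeminorms ℝ ℝ ℂ).continuous_seminorm (0, 0)).comp hV).add
      (((schwartz_withSeminorms ℝ ℝ ℂ).continuous_seminorm (2, 0)).comp hV)
  obtain ⟨C, hC⟩ := (isCompact_Icc (a := a) (b := b)).exists_bound_of_continuousOn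
    hq.continuousOn
  refine ⟨max C 0, le_max_right _ _, fun t ht x => ?_⟩
  have h1 : ‖V t x‖ ≤ SchwartzMap.seminorm ℝ 0 0 (V t) := SchwartzMap.norm_le_seminorm ℝ _ _
  have h2 : ‖x‖ ^ 2 * ‖V t x‖ ≤ SchwartzMap.seminorm ℝ 2 0 (V t) :=
    SchwartzMap.norm_pow_mul_le_seminorm ℝ _ _ _
  have h2' : x ^ 2 * ‖V t x‖ ≤ SchwartzMap.seminorm ℝ 2 0 (V t) := by
    rwa [Real.norm_eq_abs, _root_.sq_abs] at h2
  have := hC t ht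
  rw [Real.norm_eq_abs] at this
  have habs := le_abs_self ((SchwartzMap.seminorm ℝ 0 0 (V t) : ℝ) +
      SchwartzMap.seminorm ℝ 2 0 (V t))
  refine le_trans ?_ (le_max_left C 0)
  nlinarith [norm_nonneg (V t x)]


lemma aux_pointwise_deriv (b : ℝ → ℂ) (hb : ∀ x, HasDerivAt b (deriv b x) x)
    (w : ℝ → ℝ) (hw : ∀ x, HasDerivAt w ((b x).im * w x) x)
    (u u' u'' : ℝ → ℂ) (hu : ∀ x, HasDerivAt u (u' x) x) (hu' : ∀ x, HasDerivAt u' (u'' x) x)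
    (x : ℝ) :
    HasDerivAt (fun y => w y * ((b y).re * Complex.normSq (u y)
        - 2 * ((starRingEnd ℂ) (u y) * u' y).im))
      (2 * w x * ((starRingEnd ℂ) (u x) * (Complex.I * u'' x + b x * u' x)).re
        + w x * ((b x).im * (b x).re + (deriv b x).re) * Complex.normSq (u x)) x := by
  have hβ := (hb x).creal
  have hns := hasDerivAt_normSq_comp (hu x)
  have him : HasDerivAt (fun y => ((starRingEnd ℂ) (u y) * u' y).im)
      ((u' x).re * (u' x).im + (u x).re * (u'' x).im
        - ((u' x).im * (u' x).re + (u x).im * (u'' x).re)) x := by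
    have h1 := ((hu x).creal.mul (hu' x).cimag).sub ((hu x).cimag.mul (hu' x).creal)
    apply h1.congr_of_eventuallyEq
    filter_upwards with y
    simp [Complex.mul_im]; ring
  have H := (hw x).mul ((hβ.mul hns).sub (him.const_mul (2:ℝ)))
  refine H.congr_deriv ?_
  simp only [Complex.mul_re, Complex.mul_im, Complex.add_re, Complex.add_im,
    Complex.I_re, Complex.I_im, Complex.normSq_apply, Complex.conj_re, Complex.conj_im,
    Pi.mul_apply, Pi.sub_apply]
  ring


lemma aux_integral_deriv_eq_zero {P P' : ℝ → ℝ} (h : ∀ x, HasDerivAt P (P' x) x)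
    (hint : Integrable P')
    (htop : Tendsto P atTop (𝓝 0)) (hbot : Tendsto P atBot (𝓝 0)) :
    ∫ x, P' x = 0 := by
  have h1 : ∫ x in Set.Ioi (0:ℝ), P' x = 0 - P 0 :=
    integral_Ioi_of_hasDerivAt_of_tendsto' (fun x _ => h x) hint.integrableOn htop
  have h2 : ∫ x in Set.Iic (0:ℝ), P' x = P 0 - 0 :=
    integral_Iic_of_hasDerivAt_of_tendsto' (fun x _ => h x) hint.integrableOn hbot
  rw [← intervalIntegral.integral_Iic_add_Ioi (b := (0:ℝ)) hint.integrableOn hint.integrableOn, h1, h2]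
  ring

lemma aux_schwartz_tendsto (f : SchwartzMap ℝ ℂ) :
    Tendsto (⇑f) atTop (𝓝 0) ∧ Tendsto (⇑f) atBot (𝓝 0) := by
  have h : Tendsto (⇑f) (cocompact ℝ) (𝓝 0) := by
    have := f.toZeroAtInfty.zero_at_infty'
    exact this
  exact ⟨h.mono_left atTop_le_cocompact, h.mono_left atBot_le_cocompact⟩

lemma aux_cauchy_schwarz {f g : ℝ → ℝ} (hf : AEStronglyMeasurable f volume)
    (hg : AEStronglyMeasurable g volume) (hfn : ∀ x, 0 ≤ f x) (hgn : ∀ x, 0 ≤ g x)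
    (hf2 : Integrable (fun x => f x ^ 2)) (hg2 : Integrable (fun x => g x ^ 2)) :
    ∫ x, f x * g x ≤ Real.sqrt (∫ x, f x ^ 2) * Real.sqrt (∫ x, g x ^ 2) := by
  have hpq : Real.HolderConjugate 2 2 := Real.HolderConjugate.two_two
  have hfm : MemLp f (ENNReal.ofReal 2) volume := by
    rw [show ENNReal.ofReal (2:ℝ) = 2 by simp [ENNReal.ofReal_ofNat]]
    exact (memLp_two_iff_integrable_sq hf).2 hf2
  have hgm : MemLp g (ENNReal.ofReal 2) volume := by
    rw [show ENNReal.ofReal (2:ℝ) = 2 by simp [ENNReal.ofReal_ofNat]]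
    exact (memLp_two_iff_integrable_sq hg).2 hg2
  have H := integral_mul_le_Lp_mul_Lq_of_nonneg hpq (ae_of_all _ hfn) (ae_of_all _ hgn) hfm hgm
  have e1 : ∀ (h : ℝ → ℝ), (∫ x, h x ^ (2:ℝ)) = ∫ x, h x ^ (2:ℕ) := by
    intro h
    apply integral_congr_ae
    filter_upwards with x
    rw [show ((2:ℝ)) = ((2:ℕ):ℝ) by norm_num, Real.rpow_natCast]
  calc ∫ x, f x * g x ≤ (∫ x, f x ^ (2:ℝ)) ^ (1/(2:ℝ)) * (∫ x, g x ^ (2:ℝ)) ^ (1/(2:ℝ)) := H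
    _ = Real.sqrt (∫ x, f x ^ 2) * Real.sqrt (∫ x, g x ^ 2) := by
        rw [e1 f, e1 g, ← Real.sqrt_eq_rpow, ← Real.sqrt_eq_rpow]


lemma aux_b_L1 (A₂ : ℝ) (hA₂ : 0 ≤ A₂) (α : ℤ → ℂ) (φ : ℤ → ℝ → ℂ) (b : ℝ → ℂ)
    (hb_cont : Continuous b)
    (hφc : ∀ j, Continuous (φ j))
    (hφ_supp : ∀ j : ℤ, ∀ x : ℝ, x ∉ Set.Icc ((j : ℝ) - 1) ((j : ℝ) + 2) → φ j x = 0)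
    (hφ_bd : ∀ j, ∀ x, ‖φ j x‖ ≤ 1)
    (A : ℝ) (hA : HasSum (fun j => ‖α j‖) A) (hAA : A ≤ A₂)
    (hsum : ∀ x : ℝ, HasSum (fun j => α j * φ j x) (b x)) :
    Integrable (fun x => ‖b x‖) ∧ ∫ x, ‖b x‖ ≤ 3 * A₂ := by
  have hterm_le : ∀ x j, ‖α j * φ j x‖ ≤ ‖α j‖ := by
    intro x j
    rw [norm_mul]
    exact mul_le_of_le_one_right (norm_nonneg _) (hφ_bd j x)
  have hsummable : ∀ x, Summable (fun j => ‖α j * φ j x‖) :=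
    fun x => hA.summable.of_nonneg_of_le (fun j => norm_nonneg _) (hterm_le x)
  have step1 : ∀ x, ‖b x‖ ≤ ∑' j, ‖α j * φ j x‖ := by
    intro x
    rw [← (hsum x).tsum_eq]
    exact norm_tsum_le_tsum_norm (hsummable x)
  -- lintegral bound
  have hφint : ∀ j, ∫⁻ x, ENNReal.ofReal ‖φ j x‖ ≤ ENNReal.ofReal 3 := by
    intro j
    have hle : ∀ x, ENNReal.ofReal ‖φ j x‖ ≤
        (Set.Icc ((j : ℝ) - 1) ((j : ℝ) + 2)).indicator (fun _ => (1 : ℝ≥0∞)) x := by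
      intro x
      by_cases hx : x ∈ Set.Icc ((j : ℝ) - 1) ((j : ℝ) + 2)
      · rw [Set.indicator_of_mem hx]
        calc ENNReal.ofReal ‖φ j x‖ ≤ ENNReal.ofReal 1 := ENNReal.ofReal_le_ofReal (hφ_bd j x)
          _ = 1 := ENNReal.ofReal_one
      · rw [Set.indicator_of_notMem hx, hφ_supp j x hx]
        simp
    calc ∫⁻ x, ENNReal.ofReal ‖φ j x‖
        ≤ ∫⁻ x, (Set.Icc ((j : ℝ) - 1) ((j : ℝ) + 2)).indicator (fun _ => (1:ℝ≥0∞)) x :=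
          lintegral_mono hle
      _ = volume (Set.Icc ((j : ℝ) - 1) ((j : ℝ) + 2)) := by
          rw [lintegral_indicator measurableSet_Icc]; simp
      _ = ENNReal.ofReal 3 := by
          rw [Real.volume_Icc]; norm_num
  have key : ∫⁻ x, ENNReal.ofReal ‖b x‖ ≤ ENNReal.ofReal (3 * A₂) := by
    calc ∫⁻ x, ENNReal.ofReal ‖b x‖
        ≤ ∫⁻ x, ∑' j, ENNReal.ofReal ‖α j * φ j x‖ := by
          apply lintegral_mono
          intro x
          calc ENNReal.ofReal ‖b x‖ ≤ ENNReal.ofReal (∑' j, ‖α j * φ j x‖) :=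
                ENNReal.ofReal_le_ofReal (step1 x)
            _ = ∑' j, ENNReal.ofReal ‖α j * φ j x‖ :=
                ENNReal.ofReal_tsum_of_nonneg (fun j => norm_nonneg _) (hsummable x)
      _ = ∑' j, ∫⁻ x, ENNReal.ofReal ‖α j * φ j x‖ := by
          apply lintegral_tsum
          intro j
          exact (ENNReal.continuous_ofReal.comp
            ((continuous_const.mul (hφc j)).norm)).measurable.aemeasurable
      _ ≤ ∑' j, ENNReal.ofReal ‖α j‖ * ENNReal.ofReal 3 := by
          apply ENNReal.tsum_le_tsum
          intro j
          calc ∫⁻ x, ENNReal.ofReal ‖α j * φ j x‖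
              = ∫⁻ x, ENNReal.ofReal ‖α j‖ * ENNReal.ofReal ‖φ j x‖ := by
                congr 1; funext x; rw [norm_mul, ENNReal.ofReal_mul (norm_nonneg _)]
            _ = ENNReal.ofReal ‖α j‖ * ∫⁻ x, ENNReal.ofReal ‖φ j x‖ := by
                rw [lintegral_const_mul']
                exact ENNReal.ofReal_ne_top
            _ ≤ ENNReal.ofReal ‖α j‖ * ENNReal.ofReal 3 := by
                exact mul_le_mul_right (hφint j) _
      _ = ENNReal.ofReal 3 * ∑' j, ENNReal.ofReal ‖α j‖ := by
          rw [ENNReal.tsum_mul_right, mul_comm]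
      _ = ENNReal.ofReal 3 * ENNReal.ofReal A := by
          congr 1
          rw [← ENNReal.ofReal_tsum_of_nonneg (fun j => norm_nonneg _) hA.summable,
            hA.tsum_eq]
      _ ≤ ENNReal.ofReal (3 * A₂) := by
          rw [← ENNReal.ofReal_mul (by norm_num : (0:ℝ) ≤ 3)]
          exact ENNReal.ofReal_le_ofReal (by nlinarith)
  have hmeas : AEStronglyMeasurable (fun x => ‖b x‖) volume :=
    hb_cont.norm.aestronglyMeasurable
  have hfi : HasFiniteIntegral (fun x => ‖b x‖) volume := by
    rw [hasFiniteIntegral_iff_ofReal (ae_of_all _ fun x => norm_nonneg _)]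
    exact lt_of_le_of_lt key ENNReal.ofReal_lt_top
  refine ⟨⟨hmeas, hfi⟩, ?_⟩
  rw [integral_eq_lintegral_of_nonneg_ae (ae_of_all _ fun x => norm_nonneg _) hmeas]
  calc (∫⁻ x, ENNReal.ofReal ‖b x‖).toReal ≤ (ENNReal.ofReal (3 * A₂)).toReal :=
        ENNReal.toReal_mono ENNReal.ofReal_ne_top key
    _ = 3 * A₂ := ENNReal.toReal_ofReal (by nlinarith)


lemma aux_weight (b : ℝ → ℂ) (hb : Continuous b) (C : ℝ)
    (hbL1 : Integrable (fun x => ‖b x‖)) (hbI : ∫ x, ‖b x‖ ≤ C) :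
    ∃ w : ℝ → ℝ, (∀ x, HasDerivAt w ((b x).im * w x) x) ∧ Continuous w ∧
      (∀ x, Real.exp (-C) ≤ w x) ∧ (∀ x, w x ≤ Real.exp C) := by
  have hbim : Continuous fun y => (b y).im := Complex.continuous_im.comp hb
  set G : ℝ → ℝ := fun x => ∫ y in (0:ℝ)..x, (b y).im with hGdef
  have hG : ∀ x, HasDerivAt G ((b x).im) x := by
    intro x
    exact intervalIntegral.integral_hasDerivAt_right (hbim.intervalIntegrable _ _)
      hbim.stronglyMeasurable.stronglyMeasurableAtFilter hbim.continuousAt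
  have him_le : ∀ y : ℝ, |(b y).im| ≤ ‖b y‖ := fun y => by
    exact Complex.abs_im_le_norm (b y)
  have key : ∀ u v : ℝ, u ≤ v → |∫ y in u..v, (b y).im| ≤ ∫ x, ‖b x‖ := by
    intro u v huv
    have h0 : |∫ y in u..v, (b y).im| ≤ ∫ y in u..v, |(b y).im| := by
      have := intervalIntegral.norm_integral_le_integral_norm (μ := volume)
        (f := fun y => (b y).im) (a := u) (b := v) huv
      simpa only [Real.norm_eq_abs] using this
    have h1 : (∫ y in u..v, |(b y).im|) ≤ ∫ y in u..v, ‖b y‖ := by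
      apply intervalIntegral.integral_mono_on huv
      · exact hbim.abs.intervalIntegrable _ _
      · exact hbL1.intervalIntegrable
      · exact fun y _ => him_le y
    have h2 : (∫ y in u..v, ‖b y‖) ≤ ∫ x, ‖b x‖ := by
      rw [intervalIntegral.integral_of_le huv]
      exact setIntegral_le_integral hbL1 (ae_of_all _ fun y => norm_nonneg _)
    linarith
  have hGbd : ∀ x, |G x| ≤ C := by
    intro x
    rcases le_total 0 x with hx | hx
    · exact ((key 0 x hx).trans hbI)
    · have h3 := key x 0 hx
      have h4 : |G x| = |∫ y in x..(0:ℝ), (b y).im| := by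
        rw [hGdef]
        simp only
        rw [intervalIntegral.integral_symm x 0, abs_neg]
      rw [h4]
      exact h3.trans hbI
  have hGcont : Continuous G := continuous_iff_continuousAt.2 fun x => (hG x).continuousAt
  refine ⟨fun x => Real.exp (G x), fun x => ?_, Real.continuous_exp.comp hGcont, ?_, ?_⟩
  · have h5 := (hG x).exp
    convert h5 using 1
    ring
  · intro x
    apply Real.exp_le_exp.2
    have := (abs_le.1 (hGbd x)).1; linarith
  · intro x
    exact Real.exp_le_exp.2 (abs_le.1 (hGbd x)).2


lemma aux_drop {a C x : ℝ} (ha : 0 ≤ a) (h : (1 + x ^ 2) * a ≤ C) : a ≤ C := by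
  nlinarith [sq_nonneg x]


lemma aux_integrable' (g : ℝ → ℝ) (C : ℝ) (hm : AEStronglyMeasurable g volume)
    (h : ∀ x, (1 + x ^ 2) * ‖g x‖ ≤ C) : Integrable g := by
  refine aux_integrable g C hm (fun x => ?_)
  have h1 : (0:ℝ) < 1 + x ^ 2 := by positivity
  calc ‖g x‖ = (1 + x ^ 2)⁻¹ * ((1 + x ^ 2) * ‖g x‖) := by field_simp
    _ ≤ (1 + x ^ 2)⁻¹ * C := mul_le_mul_of_nonneg_left (h x) (by positivity)
    _ = C * (1 + x ^ 2)⁻¹ := mul_comm _ _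


lemma hasDerivAt_normSq_comp' {g : ℝ → ℂ} {g' : ℂ} {t : ℝ} (h : HasDerivAt g g' t) :
    HasDerivAt (fun s => Complex.normSq (g s)) (2 * ((starRingEnd ℂ) (g t) * g').re) t := by
  have hr := (Complex.reCLM.hasFDerivAt.comp_hasDerivAt t h)
  have hi := (Complex.imCLM.hasFDerivAt.comp_hasDerivAt t h)
  have H := (hr.mul hr).add (hi.mul hi)
  simp only [Complex.normSq_apply]
  refine H.congr_deriv ?_
  simp [Complex.mul_re]; ring


lemma aux_cont_integral (w : ℝ → ℝ) (hw : Continuous w) (E : ℝ) (hwub : ∀ x, |w x| ≤ E)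
    (V : ℝ → SchwartzMap ℝ ℂ) (hV : Continuous V) :
    Continuous fun t => ∫ x, w x * Complex.normSq (V t x) := by
  rw [continuous_iff_continuousAt]
  intro t₀
  obtain ⟨C, hC0, hC⟩ := aux_unif_bound V hV (t₀ - 1) (t₀ + 1)
  apply continuousAt_of_dominated (bound := fun x => E * C ^ 2 * (1 + x ^ 2)⁻¹)
  · filter_upwards with s
    exact (hw.mul (Complex.continuous_normSq.comp (V s).continuous)).aestronglyMeasurable
  · have hmem : Set.Icc (t₀ - 1) (t₀ + 1) ∈ 𝓝 t₀ := Icc_mem_nhds (by linarith) (by linarith)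
    filter_upwards [hmem] with s hs
    filter_upwards with x
    have hb := hC s hs x
    have hn : ‖V s x‖ ≤ C := aux_drop (norm_nonneg _) hb
    have h1 : (0:ℝ) < 1 + x ^ 2 := by positivity
    rw [Real.norm_eq_abs, abs_mul]
    have hns : |Complex.normSq (V s x)| = ‖V s x‖ * ‖V s x‖ := by
      rw [_root_.abs_of_nonneg (Complex.normSq_nonneg _), Complex.normSq_eq_norm_sq]
      ring
    rw [hns]
    have key : (1 + x ^ 2) * (|w x| * (‖V s x‖ * ‖V s x‖)) ≤ E * C ^ 2 := by
      have hE : 0 ≤ E := le_trans (abs_nonneg _) (hwub x)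
      have k1 : ((1 + x ^ 2) * ‖V s x‖) * ‖V s x‖ ≤ C * C :=
        mul_le_mul hb hn (norm_nonneg _) hC0
      have k2 : |w x| * (((1 + x ^ 2) * ‖V s x‖) * ‖V s x‖) ≤ E * (C * C) :=
        mul_le_mul (hwub x) k1 (by positivity) hE
      nlinarith [k2]
    calc |w x| * (‖V s x‖ * ‖V s x‖)
        = (1 + x ^ 2)⁻¹ * ((1 + x ^ 2) * (|w x| * (‖V s x‖ * ‖V s x‖))) := by field_simp
      _ ≤ (1 + x ^ 2)⁻¹ * (E * C ^ 2) := mul_le_mul_of_nonneg_left key (by positivity)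
      _ = E * C ^ 2 * (1 + x ^ 2)⁻¹ := mul_comm _ _
  · exact (integrable_inv_one_add_sq).const_mul _
  · filter_upwards with x
    have : Continuous fun s => Complex.normSq (V s x) :=
      Complex.continuous_normSq.comp (((BoundedContinuousFunction.evalCLM ℂ x).comp (SchwartzMap.toBoundedContinuousFunctionCLM ℂ ℝ ℂ)).continuous.comp hV)
    exact (continuous_const.mul this).continuousAt


lemma aux_N_deriv (w : ℝ → ℝ) (hw_cont : Continuous w) (E : ℝ) (hwub : ∀ x, |w x| ≤ E)
    (U : ℝ → SchwartzMap ℝ ℂ) (hU : Continuous U) (T : ℝ)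
    (D : ℝ → ℝ → ℂ) (hDm : ∀ s ∈ Set.Ioo (0:ℝ) T, Continuous (D s))
    (CD : ℝ) (hDbd : ∀ s ∈ Set.Icc (0:ℝ) T, ∀ x, (1 + x ^ 2) * ‖D s x‖ ≤ CD)
    (hderiv : ∀ x : ℝ, ∀ s ∈ Set.Ioo (0:ℝ) T, HasDerivAt (fun τ => U τ x) (D s x) s)
    (t : ℝ) (ht : t ∈ Set.Ioo (0:ℝ) T) :
    HasDerivAt (fun s => ∫ x, w x * Complex.normSq (U s x))
      (∫ x, w x * (2 * ((starRingEnd ℂ) (U t x) * D t x).re)) t := by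
  obtain ⟨ht0, htT⟩ := ht
  obtain ⟨C₀, hC₀0, hC₀⟩ := aux_unif_bound U hU 0 T
  have hE : 0 ≤ E := le_trans (abs_nonneg _) (hwub 0)
  set ε : ℝ := min t (T - t) with hε
  have hεpos : 0 < ε := lt_min ht0 (by linarith)
  have hball : Metric.ball t ε ⊆ Set.Ioo 0 T := by
    intro s hs
    rw [Metric.mem_ball, Real.dist_eq, abs_lt] at hs
    constructor
    · have := min_le_left t (T - t); linarith [hs.1]
    · have := min_le_right t (T - t); linarith [hs.2]
  have key := hasDerivAt_integral_of_dominated_loc_of_deriv_le (μ := volume)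
    (F := fun s x => w x * Complex.normSq (U s x))
    (F' := fun s x => w x * (2 * ((starRingEnd ℂ) (U s x) * D s x).re))
    (x₀ := t) (bound := fun x => E * (2 * C₀ * CD) * (1 + x ^ 2)⁻¹) (Metric.ball_mem_nhds t hεpos)
    ?_ ?_ ?_ ?_ ?_ ?_
  · exact key.2
  · filter_upwards with s
    exact (hw_cont.mul (Complex.continuous_normSq.comp (U s).continuous)).aestronglyMeasurable
  · -- integrability at t
    apply aux_integrable' _ (E * C₀ ^ 2)
    · exact (hw_cont.mul (Complex.continuous_normSq.comp (U t).continuous)).aestronglyMeasurable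
    · intro x
      have hb := hC₀ t ⟨le_of_lt ht0, le_of_lt htT⟩ x
      have hn : ‖U t x‖ ≤ C₀ := aux_drop (norm_nonneg _) hb
      rw [Real.norm_eq_abs, abs_mul, _root_.abs_of_nonneg (Complex.normSq_nonneg _),
        Complex.normSq_eq_norm_sq]
      have k1 : ((1 + x ^ 2) * ‖U t x‖) * ‖U t x‖ ≤ C₀ * C₀ :=
        mul_le_mul hb hn (norm_nonneg _) hC₀0
      have k2 : |w x| * (((1 + x ^ 2) * ‖U t x‖) * ‖U t x‖) ≤ E * (C₀ * C₀) :=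
        mul_le_mul (hwub x) k1 (by positivity) hE
      nlinarith [k2]
  · -- measurability of F' t
    exact (hw_cont.mul (continuous_const.mul (Complex.continuous_re.comp
      ((Complex.continuous_conj.comp (U t).continuous).mul
        (hDm t ⟨ht0, htT⟩))))).aestronglyMeasurable
  · -- bound
    filter_upwards with x
    intro s hs
    have hsIoo := hball hs
    have hsIcc : s ∈ Set.Icc (0:ℝ) T := ⟨le_of_lt hsIoo.1, le_of_lt hsIoo.2⟩
    have hu := hC₀ s hsIcc x
    have hun : ‖U s x‖ ≤ C₀ := aux_drop (norm_nonneg _) hu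
    have hd := hDbd s hsIcc x
    have h1 : (0:ℝ) < 1 + x ^ 2 := by positivity
    have hre : |((starRingEnd ℂ) (U s x) * D s x).re| ≤ ‖U s x‖ * ‖D s x‖ := by
      calc |((starRingEnd ℂ) (U s x) * D s x).re| ≤ ‖(starRingEnd ℂ) (U s x) * D s x‖ := by
            exact Complex.abs_re_le_norm _
        _ = ‖U s x‖ * ‖D s x‖ := by rw [norm_mul, RCLike.norm_conj]
    rw [Real.norm_eq_abs, abs_mul, abs_mul]
    have h2 : |(2:ℝ)| = 2 := by norm_num
    rw [h2]
    have hDn : 0 ≤ ‖D s x‖ := norm_nonneg _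
    have hCD0 : 0 ≤ CD :=
      le_trans (by positivity) (hDbd t ⟨le_of_lt ht0, le_of_lt htT⟩ 0)
    have key2 : (1 + x ^ 2) * (|w x| * (2 * |((starRingEnd ℂ) (U s x) * D s x).re|))
        ≤ E * (2 * C₀ * CD) := by
      have k0 : (1 + x ^ 2) * |((starRingEnd ℂ) (U s x) * D s x).re|
          ≤ (1 + x ^ 2) * (‖U s x‖ * ‖D s x‖) := mul_le_mul_of_nonneg_left hre h1.le
      have k1 : ‖U s x‖ * ((1 + x ^ 2) * ‖D s x‖) ≤ C₀ * CD :=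
        mul_le_mul hun hd (by positivity) hC₀0
      have k2 : |w x| * (‖U s x‖ * ((1 + x ^ 2) * ‖D s x‖)) ≤ E * (C₀ * CD) :=
        mul_le_mul (hwub x) k1 (by positivity) hE
      nlinarith [k2, k0, abs_nonneg (w x), hwub x]
    calc |w x| * (2 * |((starRingEnd ℂ) (U s x) * D s x).re|)
        = (1 + x ^ 2)⁻¹ * ((1 + x ^ 2) * (|w x| * (2 * |((starRingEnd ℂ) (U s x) * D s x).re|))) := by
          field_simp
      _ ≤ (1 + x ^ 2)⁻¹ * (E * (2 * C₀ * CD)) := mul_le_mul_of_nonneg_left key2 (by positivity)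
      _ = E * (2 * C₀ * CD) * (1 + x ^ 2)⁻¹ := mul_comm _ _
  · exact (integrable_inv_one_add_sq).const_mul _
  · filter_upwards with x
    intro s hs
    exact (hasDerivAt_normSq_comp' (hderiv x s (hball hs))).const_mul (w x)


set_option maxHeartbeats 1000000 in
lemma aux_diff_ineq
    (b : ℝ → ℂ) (hb_cont : Continuous b) (hb_diff : ∀ x, HasDerivAt b (deriv b x) x)
    (hdb_cont : Continuous (deriv b))
    (A₁ : ℝ) (hA₁ : 0 ≤ A₁) (hb0 : ∀ x, ‖b x‖ ≤ A₁) (hb1 : ∀ x, ‖deriv b x‖ ≤ A₁)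
    (w : ℝ → ℝ) (hw_deriv : ∀ x, HasDerivAt w ((b x).im * w x) x) (hw_cont : Continuous w)
    (hw_pos : ∀ x, 0 < w x) (E : ℝ) (hw_ub : ∀ x, w x ≤ E)
    (u f : SchwartzMap ℝ ℂ)
    (C₀ C₁ C₂ CF : ℝ) (hC₀0 : 0 ≤ C₀)
    (hC₀ : ∀ x, (1 + x ^ 2) * ‖u x‖ ≤ C₀)
    (hC₁ : ∀ x, (1 + x ^ 2) * ‖deriv (⇑u) x‖ ≤ C₁)
    (hC₂ : ∀ x, (1 + x ^ 2) * ‖deriv (deriv (⇑u)) x‖ ≤ C₂)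
    (hCF : ∀ x, (1 + x ^ 2) * ‖f x‖ ≤ CF)
    (hu' : ∀ x, HasDerivAt (⇑u) (deriv (⇑u) x) x)
    (hu'' : ∀ x, HasDerivAt (deriv (⇑u)) (deriv (deriv (⇑u)) x) x)
    (hu'c : Continuous (deriv (⇑u))) (hu''c : Continuous (deriv (deriv (⇑u)))) :
    (∫ x, w x * (2 * ((starRingEnd ℂ) (u x) *
        (Complex.I * deriv (deriv (⇑u)) x + b x * deriv (⇑u) x + f x)).re))
      ≤ (A₁ * A₁ + A₁) * (∫ x, w x * Complex.normSq (u x))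
        + 2 * Real.sqrt (∫ x, w x * Complex.normSq (u x))
            * Real.sqrt (∫ x, w x * Complex.normSq (f x)) := by
  have hE0 : 0 ≤ E := le_trans (hw_pos 0).le (hw_ub 0)
  have hw_abs : ∀ x, |w x| ≤ E := fun x => by
    rw [abs_of_pos (hw_pos x)]; exact hw_ub x
  set K : ℝ := A₁ * A₁ + A₁ with hK
  have hK0 : 0 ≤ K := by positivity
  have hreC : ∀ z : ℂ, |z.re| ≤ ‖z‖ := fun z => by
    exact Complex.abs_re_le_norm z
  have himC : ∀ z : ℂ, |z.im| ≤ ‖z‖ := fun z => by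
    exact Complex.abs_im_le_norm z
  have hnsC : ∀ z : ℂ, Complex.normSq z = ‖z‖ * ‖z‖ := fun z => by
    rw [Complex.normSq_eq_norm_sq]; ring
  -- basic sup bounds
  have hu_le : ∀ x, ‖u x‖ ≤ C₀ := fun x => aux_drop (norm_nonneg _) (hC₀ x)
  have hu'_le : ∀ x, ‖deriv (⇑u) x‖ ≤ C₁ := fun x => aux_drop (norm_nonneg _) (hC₁ x)
  have hu''_le : ∀ x, ‖deriv (deriv (⇑u)) x‖ ≤ C₂ := fun x => aux_drop (norm_nonneg _) (hC₂ x)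
  have hf_le : ∀ x, ‖f x‖ ≤ CF := fun x => aux_drop (norm_nonneg _) (hCF x)
  have hC₁0 : 0 ≤ C₁ := le_trans (norm_nonneg _) (hu'_le 0)
  have hC₂0 : 0 ≤ C₂ := le_trans (norm_nonneg _) (hu''_le 0)
  have hCF0 : 0 ≤ CF := le_trans (norm_nonneg _) (hf_le 0)
  -- coefficient bound
  set c : ℝ → ℝ := fun x => (b x).im * (b x).re + (deriv b x).re with hc_def
  have hc : ∀ x, |c x| ≤ K := by
    intro x
    have h1 : |(b x).im| ≤ A₁ := le_trans (himC _) (hb0 x)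
    have h2 : |(b x).re| ≤ A₁ := le_trans (hreC _) (hb0 x)
    have h3 : |(deriv b x).re| ≤ A₁ := le_trans (hreC _) (hb1 x)
    calc |c x| ≤ |(b x).im * (b x).re| + |(deriv b x).re| := abs_add_le _ _
      _ = |(b x).im| * |(b x).re| + |(deriv b x).re| := by rw [abs_mul]
      _ ≤ A₁ * A₁ + A₁ := by
          have := abs_nonneg ((b x).im)
          have := abs_nonneg ((b x).re)
          nlinarith
  have hc_cont : Continuous c :=
    ((Complex.continuous_im.comp hb_cont).mul (Complex.continuous_re.comp hb_cont)).add
      (Complex.continuous_re.comp hdb_cont)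
  -- P and Q
  set Q : ℝ → ℝ := fun x =>
    2 * w x * ((starRingEnd ℂ) (u x) * (Complex.I * deriv (deriv (⇑u)) x
      + b x * deriv (⇑u) x)).re + w x * c x * Complex.normSq (u x) with hQ_def
  have hP : ∀ x, HasDerivAt (fun y => w y * ((b y).re * Complex.normSq (u y)
      - 2 * ((starRingEnd ℂ) (u y) * deriv (⇑u) y).im)) (Q x) x :=
    fun x => aux_pointwise_deriv b hb_diff w hw_deriv (⇑u) (deriv (⇑u))
      (deriv (deriv (⇑u))) hu' hu'' x
  -- bound on the first re-term
  have e1 : ∀ x, |((starRingEnd ℂ) (u x) * (Complex.I * deriv (deriv (⇑u)) x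
      + b x * deriv (⇑u) x)).re| ≤ ‖u x‖ * (‖deriv (deriv (⇑u)) x‖ + A₁ * ‖deriv (⇑u) x‖) := by
    intro x
    refine (hreC _).trans ?_
    rw [norm_mul, RCLike.norm_conj]
    apply mul_le_mul_of_nonneg_left _ (norm_nonneg _)
    calc ‖Complex.I * deriv (deriv (⇑u)) x + b x * deriv (⇑u) x‖
        ≤ ‖Complex.I * deriv (deriv (⇑u)) x‖ + ‖b x * deriv (⇑u) x‖ := norm_add_le _ _
      _ = ‖deriv (deriv (⇑u)) x‖ + ‖b x‖ * ‖deriv (⇑u) x‖ := by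
          rw [norm_mul, norm_mul, Complex.norm_I, one_mul]
      _ ≤ ‖deriv (deriv (⇑u)) x‖ + A₁ * ‖deriv (⇑u) x‖ := by
          have := mul_le_mul_of_nonneg_right (hb0 x) (norm_nonneg (deriv (⇑u) x))
          linarith
  -- Q is integrable
  have hQcont : Continuous Q := by
    apply Continuous.add
    · exact (continuous_const.mul hw_cont).mul (Complex.continuous_re.comp
        (((Complex.continuous_conj.comp u.continuous)).mul
          ((continuous_const.mul hu''c).add (hb_cont.mul hu'c))))
    · exact (hw_cont.mul hc_cont).mul (Complex.continuous_normSq.comp u.continuous)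
  have hQint : Integrable Q := by
    apply aux_integrable' Q (2 * E * (C₀ * C₂ + A₁ * (C₀ * C₁)) + E * K * (C₀ * C₀))
      hQcont.aestronglyMeasurable
    intro x
    have h1 : (0:ℝ) < 1 + x ^ 2 := by positivity
    have k1 : ‖u x‖ * ((1 + x ^ 2) * ‖deriv (deriv (⇑u)) x‖) ≤ C₀ * C₂ :=
      mul_le_mul (hu_le x) (hC₂ x) (by positivity) hC₀0
    have k2 : ‖u x‖ * ((1 + x ^ 2) * ‖deriv (⇑u) x‖) ≤ C₀ * C₁ :=
      mul_le_mul (hu_le x) (hC₁ x) (by positivity) hC₀0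
    have k3 : ‖u x‖ * ((1 + x ^ 2) * ‖u x‖) ≤ C₀ * C₀ :=
      mul_le_mul (hu_le x) (hC₀ x) (by positivity) hC₀0
    have e1x := e1 x
    have habs : |Q x| ≤ 2 * E * |((starRingEnd ℂ) (u x) * (Complex.I * deriv (deriv (⇑u)) x
        + b x * deriv (⇑u) x)).re| + E * K * Complex.normSq (u x) := by
      have t1 : |2 * w x * ((starRingEnd ℂ) (u x) * (Complex.I * deriv (deriv (⇑u)) x
          + b x * deriv (⇑u) x)).re| ≤ 2 * E * |((starRingEnd ℂ) (u x)
          * (Complex.I * deriv (deriv (⇑u)) x + b x * deriv (⇑u) x)).re| := by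
        rw [abs_mul, abs_mul, show |(2:ℝ)| = 2 by norm_num]
        nlinarith [mul_le_mul_of_nonneg_right (hw_abs x)
          (abs_nonneg (((starRingEnd ℂ) (u x) * (Complex.I * deriv (deriv (⇑u)) x
            + b x * deriv (⇑u) x)).re))]
      have t2 : |w x * c x * Complex.normSq (u x)| ≤ E * K * Complex.normSq (u x) := by
        rw [abs_mul, abs_mul, _root_.abs_of_nonneg (Complex.normSq_nonneg (u x))]
        nlinarith [mul_le_mul_of_nonneg_right
          (mul_le_mul (hw_abs x) (hc x) (abs_nonneg _) hE0) (Complex.normSq_nonneg (u x))]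
      calc |Q x| ≤ _ + _ := abs_add_le _ _
        _ ≤ _ := add_le_add t1 t2
    rw [Real.norm_eq_abs]
    have hns : Complex.normSq (u x) = ‖u x‖ * ‖u x‖ := hnsC _
    have step : (1 + x ^ 2) * |Q x| ≤ (1 + x ^ 2) * (2 * E * |((starRingEnd ℂ) (u x)
        * (Complex.I * deriv (deriv (⇑u)) x + b x * deriv (⇑u) x)).re|
        + E * K * Complex.normSq (u x)) := mul_le_mul_of_nonneg_left habs h1.le
    refine step.trans ?_
    rw [hns]
    have e1' : (1 + x ^ 2) * |((starRingEnd ℂ) (u x) * (Complex.I * deriv (deriv (⇑u)) x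
        + b x * deriv (⇑u) x)).re| ≤ C₀ * C₂ + A₁ * (C₀ * C₁) := by
      have := mul_le_mul_of_nonneg_left e1x h1.le
      nlinarith [k1, k2, mul_le_mul_of_nonneg_left (hC₁ x) (mul_nonneg hA₁ (norm_nonneg (u x)))]
    nlinarith [k3, e1', abs_nonneg (((starRingEnd ℂ) (u x) * (Complex.I * deriv (deriv (⇑u)) x
      + b x * deriv (⇑u) x)).re), mul_le_mul_of_nonneg_left e1' (mul_nonneg (by norm_num : (0:ℝ) ≤ 2) hE0),
      mul_le_mul_of_nonneg_left k3 (mul_nonneg hE0 hK0)]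
  -- P tends to zero at ±∞
  have hPbd : ∀ x, ‖w x * ((b x).re * Complex.normSq (u x)
      - 2 * ((starRingEnd ℂ) (u x) * deriv (⇑u) x).im)‖ ≤ E * (A₁ * C₀ + 2 * C₁) * ‖u x‖ := by
    intro x
    rw [Real.norm_eq_abs, abs_mul]
    have h2 : |(b x).re * Complex.normSq (u x) - 2 * ((starRingEnd ℂ) (u x) * deriv (⇑u) x).im|
        ≤ A₁ * C₀ * ‖u x‖ + 2 * C₁ * ‖u x‖ := by
      have i1 : |(b x).re * Complex.normSq (u x)| ≤ A₁ * C₀ * ‖u x‖ := by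
        rw [abs_mul, _root_.abs_of_nonneg (Complex.normSq_nonneg _), hnsC]
        have hbr : |(b x).re| ≤ A₁ := le_trans (hreC _) (hb0 x)
        have m1 : |(b x).re| * ‖u x‖ ≤ A₁ * C₀ :=
          mul_le_mul hbr (hu_le x) (norm_nonneg _) hA₁
        nlinarith [mul_le_mul_of_nonneg_right m1 (norm_nonneg (u x))]
      have i2 : |2 * ((starRingEnd ℂ) (u x) * deriv (⇑u) x).im| ≤ 2 * C₁ * ‖u x‖ := by
        rw [abs_mul, show |(2:ℝ)| = 2 by norm_num]
        have i2a : |((starRingEnd ℂ) (u x) * deriv (⇑u) x).im| ≤ C₁ * ‖u x‖ := by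
          refine (himC _).trans ?_
          rw [norm_mul, RCLike.norm_conj]
          calc ‖u x‖ * ‖deriv (⇑u) x‖ ≤ ‖u x‖ * C₁ :=
              mul_le_mul_of_nonneg_left (hu'_le x) (norm_nonneg _)
            _ = C₁ * ‖u x‖ := mul_comm _ _
        linarith
      calc |(b x).re * Complex.normSq (u x) - 2 * ((starRingEnd ℂ) (u x) * deriv (⇑u) x).im|
          ≤ |(b x).re * Complex.normSq (u x)| + |2 * ((starRingEnd ℂ) (u x) * deriv (⇑u) x).im| :=
            abs_sub _ _
        _ ≤ A₁ * C₀ * ‖u x‖ + 2 * C₁ * ‖u x‖ := add_le_add i1 i2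
    have := mul_le_mul (hw_abs x) h2 (abs_nonneg _) hE0
    nlinarith [this]
  have htends : Tendsto (fun x => E * (A₁ * C₀ + 2 * C₁) * ‖u x‖) atTop (𝓝 0) ∧
      Tendsto (fun x => E * (A₁ * C₀ + 2 * C₁) * ‖u x‖) atBot (𝓝 0) := by
    obtain ⟨h1, h2⟩ := aux_schwartz_tendsto u
    constructor
    · simpa using (h1.norm.const_mul (E * (A₁ * C₀ + 2 * C₁)))
    · simpa using (h2.norm.const_mul (E * (A₁ * C₀ + 2 * C₁)))
  have hPtop : Tendsto (fun y => w y * ((b y).re * Complex.normSq (u y)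
      - 2 * ((starRingEnd ℂ) (u y) * deriv (⇑u) y).im)) atTop (𝓝 0) :=
    squeeze_zero_norm hPbd htends.1
  have hPbot : Tendsto (fun y => w y * ((b y).re * Complex.normSq (u y)
      - 2 * ((starRingEnd ℂ) (u y) * deriv (⇑u) y).im)) atBot (𝓝 0) :=
    squeeze_zero_norm hPbd htends.2
  have hIBP : ∫ x, Q x = 0 := aux_integral_deriv_eq_zero hP hQint hPtop hPbot
  -- split integrand
  set R : ℝ → ℝ := fun x => -(w x * c x * Complex.normSq (u x))
      + w x * (2 * ((starRingEnd ℂ) (u x) * f x).re) with hR_def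
  have hsplit : ∀ x, w x * (2 * ((starRingEnd ℂ) (u x) *
      (Complex.I * deriv (deriv (⇑u)) x + b x * deriv (⇑u) x + f x)).re) = Q x + R x := by
    intro x
    have : (starRingEnd ℂ) (u x) * (Complex.I * deriv (deriv (⇑u)) x
        + b x * deriv (⇑u) x + f x) = (starRingEnd ℂ) (u x) * (Complex.I * deriv (deriv (⇑u)) x
        + b x * deriv (⇑u) x) + (starRingEnd ℂ) (u x) * f x := by ring
    rw [this, Complex.add_re, hQ_def, hR_def]
    ring
  -- integrability of the pieces
  have hR1int : Integrable (fun x => w x * c x * Complex.normSq (u x)) := by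
    apply aux_integrable' (fun x => w x * c x * Complex.normSq (u x)) (E * K * (C₀ * C₀))
      (((hw_cont.mul hc_cont).mul
        ((Complex.continuous_normSq).comp u.continuous)).aestronglyMeasurable)
    intro x
    have h1 : (0:ℝ) < 1 + x ^ 2 := by positivity
    have k3 : ‖u x‖ * ((1 + x ^ 2) * ‖u x‖) ≤ C₀ * C₀ :=
      mul_le_mul (hu_le x) (hC₀ x) (by positivity) hC₀0
    rw [Real.norm_eq_abs, abs_mul, abs_mul, _root_.abs_of_nonneg (Complex.normSq_nonneg _), hnsC]
    have m1 : |w x| * |c x| ≤ E * K := mul_le_mul (hw_abs x) (hc x) (abs_nonneg _) hE0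
    nlinarith [mul_le_mul m1 k3 (by positivity) (mul_nonneg hE0 hK0)]
  have hR2int : Integrable (fun x => w x * (2 * ((starRingEnd ℂ) (u x) * f x).re)) := by
    apply aux_integrable' (fun x => w x * (2 * ((starRingEnd ℂ) (u x) * f x).re))
      (E * (2 * (C₀ * CF)))
      ((hw_cont.mul (continuous_const.mul (Complex.continuous_re.comp
        ((Complex.continuous_conj.comp u.continuous).mul f.continuous)))).aestronglyMeasurable)
    intro x
    have h1 : (0:ℝ) < 1 + x ^ 2 := by positivity
    have hre2 : |((starRingEnd ℂ) (u x) * f x).re| ≤ ‖u x‖ * ‖f x‖ := by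
      refine (hreC _).trans ?_
      rw [norm_mul, RCLike.norm_conj]
    have k4 : ‖u x‖ * ((1 + x ^ 2) * ‖f x‖) ≤ C₀ * CF :=
      mul_le_mul (hu_le x) (hCF x) (by positivity) hC₀0
    rw [Real.norm_eq_abs, abs_mul, abs_mul, show |(2:ℝ)| = 2 by norm_num]
    have m2 : (1 + x ^ 2) * |((starRingEnd ℂ) (u x) * f x).re| ≤ C₀ * CF := by
      nlinarith [k4, mul_le_mul_of_nonneg_left hre2 h1.le]
    nlinarith [mul_le_mul (hw_abs x) m2 (by positivity) hE0,
      abs_nonneg (((starRingEnd ℂ) (u x) * f x).re), abs_nonneg (w x)]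
  have hRint : Integrable (fun x => R x) := hR1int.neg.add hR2int
  -- integrability of weighted squares
  have int_wns : Integrable (fun x => w x * Complex.normSq (u x)) := by
    apply aux_integrable' (fun x => w x * Complex.normSq (u x)) (E * (C₀ * C₀))
      ((hw_cont.mul ((Complex.continuous_normSq).comp u.continuous)).aestronglyMeasurable)
    intro x
    have h1 : (0:ℝ) < 1 + x ^ 2 := by positivity
    have k3 : ‖u x‖ * ((1 + x ^ 2) * ‖u x‖) ≤ C₀ * C₀ :=
      mul_le_mul (hu_le x) (hC₀ x) (by positivity) hC₀0
    rw [Real.norm_eq_abs, abs_mul, _root_.abs_of_nonneg (Complex.normSq_nonneg _), hnsC]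
    nlinarith [mul_le_mul (hw_abs x) k3 (by positivity) hE0]
  have int_wnsf : Integrable (fun x => w x * Complex.normSq (f x)) := by
    apply aux_integrable' (fun x => w x * Complex.normSq (f x)) (E * (CF * CF))
      ((hw_cont.mul ((Complex.continuous_normSq).comp f.continuous)).aestronglyMeasurable)
    intro x
    have h1 : (0:ℝ) < 1 + x ^ 2 := by positivity
    have k3 : ‖f x‖ * ((1 + x ^ 2) * ‖f x‖) ≤ CF * CF :=
      mul_le_mul (hf_le x) (hCF x) (by positivity) hCF0
    rw [Real.norm_eq_abs, abs_mul, _root_.abs_of_nonneg (Complex.normSq_nonneg _), hnsC]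
    nlinarith [mul_le_mul (hw_abs x) k3 (by positivity) hE0]
  -- Cauchy-Schwarz functions
  set a : ℝ → ℝ := fun x => Real.sqrt (w x) * ‖u x‖ with ha_def
  set g : ℝ → ℝ := fun x => Real.sqrt (w x) * ‖f x‖ with hg_def
  have hsq_a : (fun x => a x ^ 2) = fun x => w x * Complex.normSq (u x) := by
    funext x
    rw [ha_def]
    simp only []
    rw [mul_pow, Real.sq_sqrt (hw_pos x).le, hnsC]
    ring
  have hsq_g : (fun x => g x ^ 2) = fun x => w x * Complex.normSq (f x) := by
    funext x
    rw [hg_def]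
    simp only []
    rw [mul_pow, Real.sq_sqrt (hw_pos x).le, hnsC]
    ring
  have ha_m : AEStronglyMeasurable a volume :=
    ((Real.continuous_sqrt.comp hw_cont).mul u.continuous.norm).aestronglyMeasurable
  have hg_m : AEStronglyMeasurable g volume :=
    ((Real.continuous_sqrt.comp hw_cont).mul f.continuous.norm).aestronglyMeasurable
  have ha2 : Integrable (fun x => a x ^ 2) := by rw [hsq_a]; exact int_wns
  have hg2 : Integrable (fun x => g x ^ 2) := by rw [hsq_g]; exact int_wnsf
  have hag : ∀ x, a x * g x = w x * (‖u x‖ * ‖f x‖) := by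
    intro x
    rw [ha_def, hg_def]
    simp only []
    have h5 : Real.sqrt (w x) * Real.sqrt (w x) = w x := Real.mul_self_sqrt (hw_pos x).le
    calc Real.sqrt (w x) * ‖u x‖ * (Real.sqrt (w x) * ‖f x‖)
        = Real.sqrt (w x) * Real.sqrt (w x) * (‖u x‖ * ‖f x‖) := by ring
      _ = w x * (‖u x‖ * ‖f x‖) := by rw [h5]
  have hprod_int : Integrable (fun x => a x * g x) := by
    apply aux_integrable' (fun x => a x * g x) (E * (C₀ * CF)) (ha_m.mul hg_m)
    intro x
    have h1 : (0:ℝ) < 1 + x ^ 2 := by positivity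
    have k4 : ‖u x‖ * ((1 + x ^ 2) * ‖f x‖) ≤ C₀ * CF :=
      mul_le_mul (hu_le x) (hCF x) (by positivity) hC₀0
    rw [hag x, Real.norm_eq_abs, abs_mul, abs_of_pos (hw_pos x),
      _root_.abs_of_nonneg (mul_nonneg (norm_nonneg _) (norm_nonneg _))]
    have hwE : w x ≤ E := hw_ub x
    nlinarith [mul_le_mul hwE k4 (by positivity) hE0, (hw_pos x).le,
      mul_nonneg (norm_nonneg (u x)) (norm_nonneg (f x))]
  -- pointwise bound on R
  have hRb : ∀ x, R x ≤ K * (w x * Complex.normSq (u x)) + 2 * (a x * g x) := by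
    intro x
    have p1 : -(w x * c x * Complex.normSq (u x)) ≤ K * (w x * Complex.normSq (u x)) := by
      have habs1 : |w x * c x * Complex.normSq (u x)| ≤ K * (w x * Complex.normSq (u x)) := by
        rw [abs_mul, abs_mul, abs_of_pos (hw_pos x),
          _root_.abs_of_nonneg (Complex.normSq_nonneg _)]
        nlinarith [mul_le_mul_of_nonneg_right
          (mul_le_mul_of_nonneg_left (hc x) (hw_pos x).le) (Complex.normSq_nonneg (u x))]
      linarith [neg_abs_le (w x * c x * Complex.normSq (u x))]
    have p2 : w x * (2 * ((starRingEnd ℂ) (u x) * f x).re) ≤ 2 * (a x * g x) := by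
      rw [hag x]
      have hre2 : ((starRingEnd ℂ) (u x) * f x).re ≤ ‖u x‖ * ‖f x‖ := by
        refine le_trans (le_abs_self _) ((hreC _).trans ?_)
        rw [norm_mul, RCLike.norm_conj]
      nlinarith [mul_le_mul_of_nonneg_left hre2 (hw_pos x).le]
    calc R x = -(w x * c x * Complex.normSq (u x))
        + w x * (2 * ((starRingEnd ℂ) (u x) * f x).re) := by rw [hR_def]
      _ ≤ K * (w x * Complex.normSq (u x)) + 2 * (a x * g x) := add_le_add p1 p2
  -- assemble
  have hLHS : (∫ x, w x * (2 * ((starRingEnd ℂ) (u x) *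
      (Complex.I * deriv (deriv (⇑u)) x + b x * deriv (⇑u) x + f x)).re)) = ∫ x, R x := by
    have e : (∫ x, w x * (2 * ((starRingEnd ℂ) (u x) *
        (Complex.I * deriv (deriv (⇑u)) x + b x * deriv (⇑u) x + f x)).re))
        = ∫ x, (Q x + R x) := integral_congr_ae (ae_of_all _ hsplit)
    rw [e, integral_add hQint hRint, hIBP, zero_add]
  rw [hLHS]
  have hint_rhs : Integrable (fun x => K * (w x * Complex.normSq (u x)) + 2 * (a x * g x)) :=
    (int_wns.const_mul K).add (hprod_int.const_mul 2)
  have step1 : (∫ x, R x) ≤ ∫ x, (K * (w x * Complex.normSq (u x)) + 2 * (a x * g x)) :=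
    integral_mono hRint hint_rhs hRb
  have step2 : (∫ x, (K * (w x * Complex.normSq (u x)) + 2 * (a x * g x)))
      = K * (∫ x, w x * Complex.normSq (u x)) + 2 * ∫ x, a x * g x := by
    rw [integral_add (int_wns.const_mul K) (hprod_int.const_mul 2),
      integral_const_mul, integral_const_mul]
  have step3 : (∫ x, a x * g x) ≤ Real.sqrt (∫ x, w x * Complex.normSq (u x))
      * Real.sqrt (∫ x, w x * Complex.normSq (f x)) := by
    have hCS := aux_cauchy_schwarz ha_m hg_m
      (fun x => mul_nonneg (Real.sqrt_nonneg _) (norm_nonneg _))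
      (fun x => mul_nonneg (Real.sqrt_nonneg _) (norm_nonneg _)) ha2 hg2
    rw [hsq_a, hsq_g] at hCS
    exact hCS
  linarith [step1, step2, step3]


/-- Hypothesis (H) on the coefficient `b : ℝ → ℂ` with constants `M ∈ ℤ⁺`, `A₁, A₂ > 0`:
`b` is `M` times continuously differentiable with `∑_{k=0}^{M} sup_x |b^{(k)}(x)| ≤ A₁`,
and `b = ∑_{j∈ℤ} α_j φ_j` with each `φ_j` a `C^M` function supported in `[j-1, j+2]`
satisfying `∑_{k=0}^{M} sup_x |φ_j^{(k)}(x)| ≤ 1`, and `∑_{j∈ℤ} |α_j| ≤ A₂`. -/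
def HypothesisH (M : ℕ) (A₁ A₂ : ℝ) (b : ℝ → ℂ) : Prop :=
  ContDiff ℝ M b ∧
  (∃ B : ℕ → ℝ, (∀ k ≤ M, ∀ x : ℝ, ‖iteratedDeriv k b x‖ ≤ B k) ∧
      ∑ k ∈ Finset.range (M + 1), B k ≤ A₁) ∧
  ∃ (α : ℤ → ℂ) (φ : ℤ → ℝ → ℂ),
    (∀ j, ContDiff ℝ M (φ j)) ∧
    (∀ j : ℤ, ∀ x : ℝ, x ∉ Set.Icc ((j : ℝ) - 1) ((j : ℝ) + 2) → φ j x = 0) ∧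
    (∀ j, ∃ B : ℕ → ℝ, (∀ k ≤ M, ∀ x : ℝ, ‖iteratedDeriv k (φ j) x‖ ≤ B k) ∧
        ∑ k ∈ Finset.range (M + 1), B k ≤ 1) ∧
    (∃ A : ℝ, HasSum (fun j => ‖α j‖) A ∧ A ≤ A₂) ∧
    (∀ x : ℝ, HasSum (fun j => α j * φ j x) (b x))

set_option maxHeartbeats 2000000 in
/-- **A priori estimate form of Corollary 2.2.** For every `M ∈ ℤ⁺` and `A₁, A₂, T > 0`
there is `c = c(A₁,A₂,T) > 0` such that any solution (Schwartz in `x`, depending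
continuously on `t`, `C¹` in `t`) of `∂_t u = i∂_x²u + b(x)∂_x u + f` on `ℝ × [0,T]`,
with `b` satisfying hypothesis (H), obeys
`sup_{[0,T]} ‖u(·,t)‖₂ ≤ c (‖u(·,0)‖₂ + ∫₀ᵀ ‖f(·,t)‖₂ dt)`. -/
theorem linear_L2_apriori (M : ℕ) (hM : 1 ≤ M) (A₁ A₂ T : ℝ)
    (hA₁ : 0 < A₁) (hA₂ : 0 < A₂) (hT : 0 < T) :
    ∃ c : ℝ, 0 < c ∧
      ∀ b : ℝ → ℂ, HypothesisH M A₁ A₂ b →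
      ∀ F : ℝ → SchwartzMap ℝ ℂ, Continuous F →
      ∀ U : ℝ → SchwartzMap ℝ ℂ, Continuous U →
      (∀ x : ℝ, ∀ t ∈ Set.Icc (0 : ℝ) T,
        HasDerivWithinAt (fun s => U s x)
          (Complex.I * deriv (deriv (⇑(U t))) x + b x * deriv (⇑(U t)) x + F t x)
          (Set.Icc (0 : ℝ) T) t) →
      ∀ t ∈ Set.Icc (0 : ℝ) T,
        Real.sqrt (∫ x : ℝ, ‖U t x‖ ^ 2) ≤
          c * (Real.sqrt (∫ x : ℝ, ‖U 0 x‖ ^ 2) +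
            ∫ s in Set.Icc (0 : ℝ) T, Real.sqrt (∫ x : ℝ, ‖F s x‖ ^ 2)) := by
  have hK0 : (0:ℝ) ≤ A₁ * A₁ + A₁ := by positivity
  set K : ℝ := A₁ * A₁ + A₁ with hKdef
  set E : ℝ := Real.exp (3 * A₂) with hEdef
  have hE0 : 0 < E := Real.exp_pos _
  refine ⟨E * Real.exp (K / 2 * T), by positivity, ?_⟩
  intro b hH F hF U hU heq t ht
  obtain ⟨hb_smooth, ⟨B, hB, hBsum⟩, α, φ, hφ_smooth, hφ_supp, hφ_bd, ⟨A, hA, hAA⟩, hsum⟩ := hH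
  have hM1 : (1 : WithTop ℕ∞) ≤ (M : WithTop ℕ∞) := by exact_mod_cast hM
  have hb_cont : Continuous b := hb_smooth.continuous
  have hb_diff : ∀ x, HasDerivAt b (deriv b x) x := fun x =>
    ((hb_smooth.differentiable (lt_of_lt_of_le zero_lt_one hM1).ne') x).hasDerivAt
  have hdb_cont : Continuous (deriv b) := hb_smooth.continuous_deriv hM1
  have hBnn : ∀ k, k ≤ M → 0 ≤ B k := fun k hk => le_trans (norm_nonneg _) (hB k hk 0)
  have hsingle : ∀ k, k ≤ M → B k ≤ A₁ := by
    intro k hk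
    have h := Finset.single_le_sum (f := B)
      (fun i hi => hBnn i (Finset.mem_range_succ_iff.1 hi)) (Finset.mem_range_succ_iff.2 hk)
    linarith
  have hb0 : ∀ x, ‖b x‖ ≤ A₁ := fun x => by
    have h := hB 0 (Nat.zero_le M) x
    rw [iteratedDeriv_zero] at h
    exact h.trans (hsingle 0 (Nat.zero_le M))
  have hb1 : ∀ x, ‖deriv b x‖ ≤ A₁ := fun x => by
    have h := hB 1 hM x
    rw [iteratedDeriv_one] at h
    exact h.trans (hsingle 1 hM)
  have hφ_bd1 : ∀ j, ∀ x, ‖φ j x‖ ≤ 1 := by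
    intro j x
    obtain ⟨B', hB', hB'sum⟩ := hφ_bd j
    have hB'nn : ∀ k, k ≤ M → 0 ≤ B' k := fun k hk => le_trans (norm_nonneg _) (hB' k hk 0)
    have h := Finset.single_le_sum (f := B')
      (fun i hi => hB'nn i (Finset.mem_range_succ_iff.1 hi))
      (Finset.mem_range_succ_iff.2 (Nat.zero_le M))
    have h0 := hB' 0 (Nat.zero_le M) x
    rw [iteratedDeriv_zero] at h0
    linarith
  obtain ⟨hbL1, hbI⟩ := aux_b_L1 A₂ hA₂.le α φ b hb_cont
    (fun j => (hφ_smooth j).continuous) hφ_supp hφ_bd1 A hA hAA hsum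
  obtain ⟨w, hw_deriv, hw_cont, hw_lb, hw_ub⟩ := aux_weight b hb_cont (3 * A₂) hbL1 hbI
  have hw_pos : ∀ x, 0 < w x := fun x => lt_of_lt_of_le (Real.exp_pos _) (hw_lb x)
  have hw_ub' : ∀ x, w x ≤ E := fun x => hw_ub x
  have hw_abs : ∀ x, |w x| ≤ E := fun x => by
    rw [abs_of_pos (hw_pos x)]; exact hw_ub' x
  -- derivCLM identities
  have hder1 : ∀ s : ℝ, (⇑(SchwartzMap.derivCLM ℝ ℂ (U s)) : ℝ → ℂ) = deriv (⇑(U s)) :=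
    fun s => funext fun x => SchwartzMap.derivCLM_apply ℝ (U s) x
  have hder2 : ∀ s : ℝ, (⇑(SchwartzMap.derivCLM ℝ ℂ (SchwartzMap.derivCLM ℝ ℂ (U s))) : ℝ → ℂ)
      = deriv (deriv (⇑(U s))) := by
    intro s
    funext x
    have h : deriv (⇑(SchwartzMap.derivCLM ℝ ℂ (U s))) x = deriv (deriv (⇑(U s))) x := by
      rw [hder1 s]
    rw [SchwartzMap.derivCLM_apply, h]
  have hu's : ∀ s : ℝ, ∀ x, HasDerivAt (⇑(U s)) (deriv (⇑(U s)) x) x :=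
    fun s x => (U s).differentiableAt.hasDerivAt
  have hu''s : ∀ s : ℝ, ∀ x, HasDerivAt (deriv (⇑(U s))) (deriv (deriv (⇑(U s))) x) x := by
    intro s x
    have h := ((SchwartzMap.derivCLM ℝ ℂ (U s)).differentiableAt (x := x)).hasDerivAt
    rwa [hder1 s] at h
  have hu'c : ∀ s : ℝ, Continuous (deriv (⇑(U s))) := fun s => by
    rw [← hder1 s]; exact (SchwartzMap.derivCLM ℝ ℂ (U s)).continuous
  have hu''c : ∀ s : ℝ, Continuous (deriv (deriv (⇑(U s)))) := fun s => by
    rw [← hder2 s]; exact (SchwartzMap.derivCLM ℝ ℂ (SchwartzMap.derivCLM ℝ ℂ (U s))).continuous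
  -- uniform bounds
  have hU1cont : Continuous fun s => SchwartzMap.derivCLM ℝ ℂ (U s) :=
    (SchwartzMap.derivCLM ℝ ℂ).continuous.comp hU
  have hU2cont : Continuous fun s => SchwartzMap.derivCLM ℝ ℂ (SchwartzMap.derivCLM ℝ ℂ (U s)) :=
    (SchwartzMap.derivCLM ℝ ℂ).continuous.comp hU1cont
  obtain ⟨C₀, hC₀0, hC₀⟩ := aux_unif_bound U hU 0 T
  obtain ⟨C₁, hC₁0, hC₁'⟩ := aux_unif_bound _ hU1cont 0 T
  obtain ⟨C₂, hC₂0, hC₂'⟩ := aux_unif_bound _ hU2cont 0 T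
  obtain ⟨CF, hCF0, hCF⟩ := aux_unif_bound F hF 0 T
  have hC₁ : ∀ s ∈ Set.Icc (0:ℝ) T, ∀ x, (1 + x ^ 2) * ‖deriv (⇑(U s)) x‖ ≤ C₁ := by
    intro s hs x
    have h := hC₁' s hs x
    rwa [hder1 s] at h
  have hC₂ : ∀ s ∈ Set.Icc (0:ℝ) T, ∀ x, (1 + x ^ 2) * ‖deriv (deriv (⇑(U s))) x‖ ≤ C₂ := by
    intro s hs x
    have h := hC₂' s hs x
    rwa [hder2 s] at h
  -- the time-derivative function
  set D : ℝ → ℝ → ℂ := fun s x => Complex.I * deriv (deriv (⇑(U s))) x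
      + b x * deriv (⇑(U s)) x + F s x with hDdef
  have hD_cont : ∀ s : ℝ, Continuous (D s) := by
    intro s
    rw [hDdef]
    exact ((continuous_const.mul (hu''c s)).add (hb_cont.mul (hu'c s))).add (F s).continuous
  have hCD : ∀ s ∈ Set.Icc (0:ℝ) T, ∀ x, (1 + x ^ 2) * ‖D s x‖ ≤ C₂ + A₁ * C₁ + CF := by
    intro s hs x
    have h1 : (0:ℝ) < 1 + x ^ 2 := by positivity
    have hD_le : ‖D s x‖ ≤ ‖deriv (deriv (⇑(U s))) x‖ + A₁ * ‖deriv (⇑(U s)) x‖ + ‖F s x‖ := by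
      rw [hDdef]
      calc ‖Complex.I * deriv (deriv (⇑(U s))) x + b x * deriv (⇑(U s)) x + F s x‖
          ≤ ‖Complex.I * deriv (deriv (⇑(U s))) x + b x * deriv (⇑(U s)) x‖ + ‖F s x‖ :=
            norm_add_le _ _
        _ ≤ ‖Complex.I * deriv (deriv (⇑(U s))) x‖ + ‖b x * deriv (⇑(U s)) x‖ + ‖F s x‖ := by
            linarith [norm_add_le (Complex.I * deriv (deriv (⇑(U s))) x)
              (b x * deriv (⇑(U s)) x)]
        _ ≤ ‖deriv (deriv (⇑(U s))) x‖ + A₁ * ‖deriv (⇑(U s)) x‖ + ‖F s x‖ := by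
            rw [norm_mul, norm_mul, Complex.norm_I, one_mul]
            have := mul_le_mul_of_nonneg_right (hb0 x) (norm_nonneg (deriv (⇑(U s)) x))
            linarith
    have h2 := hC₂ s hs x
    have h3 := hC₁ s hs x
    have h4 := hCF s hs x
    have h5 := mul_le_mul_of_nonneg_left hD_le h1.le
    have h6 : A₁ * ((1 + x ^ 2) * ‖deriv (⇑(U s)) x‖) ≤ A₁ * C₁ :=
      mul_le_mul_of_nonneg_left h3 hA₁.le
    nlinarith [h5]
  have hderivt : ∀ x : ℝ, ∀ s ∈ Set.Ioo (0:ℝ) T, HasDerivAt (fun τ => U τ x) (D s x) s := by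
    intro x s hs
    have h := heq x s (Set.Ioo_subset_Icc_self hs)
    rw [hDdef]
    exact h.hasDerivAt (Icc_mem_nhds hs.1 hs.2)
  -- N, L and their continuity
  set N : ℝ → ℝ := fun s => ∫ x, w x * Complex.normSq (U s x) with hNdef
  set LL : ℝ → ℝ := fun s => ∫ x, w x * Complex.normSq (F s x) with hLLdef
  set L : ℝ → ℝ := fun s => Real.sqrt (LL s) with hLdef
  have hNcont : Continuous N := aux_cont_integral w hw_cont E hw_abs U hU
  have hLLcont : Continuous LL := aux_cont_integral w hw_cont E hw_abs F hF
  have hLcont : Continuous L := Real.continuous_sqrt.comp hLLcont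
  have hNnn : ∀ s, 0 ≤ N s := fun s =>
    integral_nonneg fun x => mul_nonneg (hw_pos x).le (Complex.normSq_nonneg _)
  have hLnn : ∀ s, 0 ≤ L s := fun s => Real.sqrt_nonneg _
  -- derivative and differential inequality
  have hNderiv : ∀ s ∈ Set.Ioo (0:ℝ) T,
      HasDerivAt N (∫ x, w x * (2 * ((starRingEnd ℂ) (U s x) * D s x).re)) s :=
    fun s hs => aux_N_deriv w hw_cont E hw_abs U hU T D (fun σ _ => hD_cont σ)
      (C₂ + A₁ * C₁ + CF) hCD hderivt s hs
  have hNineq : ∀ s ∈ Set.Ioo (0:ℝ) T,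
      (∫ x, w x * (2 * ((starRingEnd ℂ) (U s x) * D s x).re))
        ≤ K * N s + 2 * Real.sqrt (N s) * L s := by
    intro s hs
    have hsIcc : s ∈ Set.Icc (0:ℝ) T := Set.Ioo_subset_Icc_self hs
    have h := aux_diff_ineq b hb_cont hb_diff hdb_cont A₁ hA₁.le hb0 hb1 w hw_deriv
      hw_cont hw_pos E hw_ub' (U s) (F s) C₀ C₁ C₂ CF hC₀0 (hC₀ s hsIcc) (hC₁ s hsIcc)
      (hC₂ s hsIcc) (hCF s hsIcc) (hu's s) (hu''s s) (hu'c s) (hu''c s)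
    rw [hDdef]
    exact h
  -- Gronwall setup
  set Rint : ℝ → ℝ := fun τ => ∫ σ in (0:ℝ)..τ, L σ with hRdef
  have hRd : ∀ τ, HasDerivAt Rint (L τ) τ := fun τ =>
    intervalIntegral.integral_hasDerivAt_right (hLcont.intervalIntegrable (μ := volume) _ _)
      (hLcont.stronglyMeasurable.stronglyMeasurableAtFilter (μ := volume))
      hLcont.continuousAt
  have hRcont : Continuous Rint := continuous_iff_continuousAt.2 fun τ => (hRd τ).continuousAt
  have hRnn : ∀ τ ∈ Set.Icc (0:ℝ) T, 0 ≤ Rint τ := by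
    intro τ hτ
    rw [hRdef]
    exact intervalIntegral.integral_nonneg hτ.1 (fun σ _ => hLnn σ)
  have hRmono : ∀ τ ∈ Set.Icc (0:ℝ) T, Rint τ ≤ Rint T := by
    intro τ hτ
    have hadd := intervalIntegral.integral_add_adjacent_intervals
      (a := (0:ℝ)) (b := τ) (c := T) (hLcont.intervalIntegrable (μ := volume) _ _)
      (hLcont.intervalIntegrable (μ := volume) _ _)
    have hpos : 0 ≤ ∫ σ in τ..T, L σ :=
      intervalIntegral.integral_nonneg hτ.2 (fun σ _ => hLnn σ)
    rw [hRdef]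
    simp only []
    linarith [hadd]
  have hgron : ∀ δ : ℝ, 0 < δ → ∀ τ ∈ Set.Icc (0:ℝ) T,
      Real.sqrt (N τ + δ) ≤ Real.exp (K / 2 * τ) * (Real.sqrt (N 0 + δ) + Rint τ) := by
    intro δ hδ τ hτ
    set Φ : ℝ → ℝ := fun σ => Real.exp (-(K/2) * σ) * Real.sqrt (N σ + δ) - Rint σ with hΦdef
    have hsqcont : Continuous fun σ => Real.sqrt (N σ + δ) :=
      Real.continuous_sqrt.comp (hNcont.add continuous_const)
    have hΦcont : Continuous Φ := by
      rw [hΦdef]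
      exact ((Real.continuous_exp.comp (continuous_const.mul continuous_id)).mul hsqcont).sub
        hRcont
    have hΦd : ∀ σ ∈ Set.Ioo (0:ℝ) T, HasDerivAt Φ
        ((-(K/2) * Real.exp (-(K/2) * σ)) * Real.sqrt (N σ + δ)
          + Real.exp (-(K/2) * σ) * (1 / (2 * Real.sqrt (N σ + δ))
              * (∫ x, w x * (2 * ((starRingEnd ℂ) (U σ x) * D σ x).re)))
          - L σ) σ := by
      intro σ hσ
      have hNpos : 0 < N σ + δ := by have := hNnn σ; linarith
      have he : HasDerivAt (fun σ : ℝ => Real.exp (-(K/2) * σ))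
          (-(K/2) * Real.exp (-(K/2) * σ)) σ := by
        have h1 := ((hasDerivAt_id σ).const_mul (-(K/2))).exp
        simpa [mul_comm] using h1
      have hin : HasDerivAt (fun σ => N σ + δ)
          (∫ x, w x * (2 * ((starRingEnd ℂ) (U σ x) * D σ x).re)) σ :=
        (hNderiv σ hσ).add_const δ
      have hsq : HasDerivAt (fun σ => Real.sqrt (N σ + δ))
          (1 / (2 * Real.sqrt (N σ + δ))
            * (∫ x, w x * (2 * ((starRingEnd ℂ) (U σ x) * D σ x).re))) σ :=
        (Real.hasDerivAt_sqrt hNpos.ne').comp σ hin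
      rw [hΦdef]
      exact (he.mul hsq).sub (hRd σ)
    have hΦanti : AntitoneOn Φ (Set.Icc (0:ℝ) T) := by
      apply antitoneOn_of_deriv_nonpos (convex_Icc (0:ℝ) T) hΦcont.continuousOn
      · intro σ hσ
        rw [interior_Icc] at hσ
        exact ((hΦd σ hσ).differentiableAt).differentiableWithinAt
      · intro σ hσ
        rw [interior_Icc] at hσ
        rw [(hΦd σ hσ).deriv]
        set S := Real.sqrt (N σ + δ) with hSdef
        have hNpos : 0 < N σ + δ := by have := hNnn σ; linarith
        have hS : 0 < S := Real.sqrt_pos.2 hNpos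
        set e := Real.exp (-(K/2) * σ) with hedef
        have he0 : 0 < e := Real.exp_pos _
        have he1 : e ≤ 1 := by
          rw [hedef]
          have h1 : Real.exp (-(K/2) * σ) ≤ Real.exp 0 :=
            Real.exp_le_exp.2 (by nlinarith [hσ.1, hK0])
          rwa [Real.exp_zero] at h1
        have hN' := hNineq σ hσ
        have hS2 : N σ ≤ S ^ 2 := by
          rw [hSdef, Real.sq_sqrt hNpos.le]; linarith
        have hsqN : Real.sqrt (N σ) ≤ S := by
          rw [hSdef]
          exact Real.sqrt_le_sqrt (by linarith)
        have b1 : (∫ x, w x * (2 * ((starRingEnd ℂ) (U σ x) * D σ x).re))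
            ≤ K * S ^ 2 + 2 * S * L σ := by
          have m1 : K * N σ ≤ K * S ^ 2 := mul_le_mul_of_nonneg_left hS2 hK0
          have m2 : 2 * Real.sqrt (N σ) * L σ ≤ 2 * S * L σ := by
            nlinarith [hLnn σ, hsqN]
          linarith [hN']
        have key : 1 / (2 * S) * (∫ x, w x * (2 * ((starRingEnd ℂ) (U σ x) * D σ x).re))
            ≤ K / 2 * S + L σ := by
          calc 1 / (2 * S) * (∫ x, w x * (2 * ((starRingEnd ℂ) (U σ x) * D σ x).re))
              ≤ 1 / (2 * S) * (K * S ^ 2 + 2 * S * L σ) :=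
                mul_le_mul_of_nonneg_left b1 (by positivity)
            _ = K / 2 * S + L σ := by field_simp
        have hmul : e * (1 / (2 * S) * (∫ x, w x * (2 * ((starRingEnd ℂ) (U σ x) * D σ x).re)))
            ≤ e * (K / 2 * S + L σ) := mul_le_mul_of_nonneg_left key he0.le
        have hexp : e * (K / 2 * S + L σ) = e * (K / 2 * S) + e * L σ := by ring
        have hz : -(K / 2) * e * S + e * (K / 2 * S) = 0 := by ring
        have heL : e * L σ ≤ L σ := mul_le_of_le_one_left (hLnn σ) he1
        nlinarith [hmul]
    have hΦle : Φ τ ≤ Φ 0 := hΦanti (Set.left_mem_Icc.2 hT.le) hτ hτ.1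
    have hΦ0 : Φ 0 = Real.sqrt (N 0 + δ) := by
      rw [hΦdef]
      simp [hRdef, intervalIntegral.integral_same]
    rw [hΦ0] at hΦle
    have hstep : Real.exp (-(K/2) * τ) * Real.sqrt (N τ + δ)
        ≤ Real.sqrt (N 0 + δ) + Rint τ := by
      rw [hΦdef] at hΦle
      simp only [] at hΦle
      linarith
    have hpos : (0:ℝ) < Real.exp (K/2 * τ) := Real.exp_pos _
    have h6 := mul_le_mul_of_nonneg_left hstep hpos.le
    calc Real.sqrt (N τ + δ)
        = Real.exp (K/2 * τ) * (Real.exp (-(K/2) * τ) * Real.sqrt (N τ + δ)) := by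
          rw [← mul_assoc, ← Real.exp_add]
          norm_num
      _ ≤ Real.exp (K/2 * τ) * (Real.sqrt (N 0 + δ) + Rint τ) := h6
  -- unweighted integrals
  have hns_norm : ∀ (h : SchwartzMap ℝ ℂ), (∫ x, ‖h x‖ ^ 2) = ∫ x, Complex.normSq (h x) :=
    fun h => integral_congr_ae (ae_of_all _ fun x => by
      simp only []
      rw [Complex.sq_norm])
  set J : ℝ → ℝ := fun s => ∫ x, Complex.normSq (U s x) with hJdef
  set JF : ℝ → ℝ := fun s => ∫ x, Complex.normSq (F s x) with hJFdef
  have hJFcont : Continuous JF := by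
    have h := aux_cont_integral (fun _ => (1:ℝ)) continuous_const 1 (fun x => by norm_num) F hF
    simpa [hJFdef] using h
  have hnsC : ∀ z : ℂ, Complex.normSq z = ‖z‖ * ‖z‖ := fun z => by
    rw [Complex.normSq_eq_norm_sq]; ring
  have int_ns : ∀ (V : ℝ → SchwartzMap ℝ ℂ) (C : ℝ), 0 ≤ C → ∀ s,
      (∀ x, (1 + x ^ 2) * ‖V s x‖ ≤ C) → Integrable (fun x => Complex.normSq (V s x)) := by
    intro V C hC0' s hC
    apply aux_integrable' (fun x => Complex.normSq (V s x)) (C * C)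
      ((Complex.continuous_normSq.comp (V s).continuous).aestronglyMeasurable)
    intro x
    have h := hC x
    have hle : ‖V s x‖ ≤ C := aux_drop (norm_nonneg _) h
    rw [Real.norm_eq_abs, _root_.abs_of_nonneg (Complex.normSq_nonneg _), hnsC]
    nlinarith [mul_le_mul h hle (norm_nonneg _) hC0']
  have int_wns : ∀ (V : ℝ → SchwartzMap ℝ ℂ) (C : ℝ), 0 ≤ C → ∀ s,
      (∀ x, (1 + x ^ 2) * ‖V s x‖ ≤ C) →
      Integrable (fun x => w x * Complex.normSq (V s x)) := by
    intro V C hC0' s hC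
    apply aux_integrable' (fun x => w x * Complex.normSq (V s x)) (E * (C * C))
      ((hw_cont.mul (Complex.continuous_normSq.comp (V s).continuous)).aestronglyMeasurable)
    intro x
    have h := hC x
    have hle : ‖V s x‖ ≤ C := aux_drop (norm_nonneg _) h
    rw [Real.norm_eq_abs, abs_mul, _root_.abs_of_nonneg (Complex.normSq_nonneg _), hnsC]
    nlinarith [mul_le_mul (hw_abs x) (mul_le_mul h hle (norm_nonneg _) hC0')
      (by positivity) hE0.le]
  have hJN : ∀ s ∈ Set.Icc (0:ℝ) T, J s ≤ E * N s := by
    intro s hs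
    have hpt : ∀ x, Complex.normSq (U s x) ≤ E * (w x * Complex.normSq (U s x)) := by
      intro x
      have h1 : 1 ≤ E * w x := by
        have h2 : Real.exp (3 * A₂) * Real.exp (-(3 * A₂)) = 1 := by
          rw [← Real.exp_add]; norm_num
        calc (1:ℝ) = Real.exp (3 * A₂) * Real.exp (-(3 * A₂)) := h2.symm
          _ ≤ Real.exp (3 * A₂) * w x :=
            mul_le_mul_of_nonneg_left (hw_lb x) (Real.exp_pos _).le
          _ = E * w x := by rw [hEdef]
      nlinarith [Complex.normSq_nonneg (U s x)]
    calc J s ≤ ∫ x, E * (w x * Complex.normSq (U s x)) :=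
        integral_mono (int_ns U C₀ hC₀0 s (hC₀ s hs))
          ((int_wns U C₀ hC₀0 s (hC₀ s hs)).const_mul E) hpt
      _ = E * N s := integral_const_mul E _
  have hNJ : ∀ s ∈ Set.Icc (0:ℝ) T, N s ≤ E * J s := by
    intro s hs
    have hpt : ∀ x, w x * Complex.normSq (U s x) ≤ E * Complex.normSq (U s x) := fun x =>
      mul_le_mul_of_nonneg_right (hw_ub' x) (Complex.normSq_nonneg _)
    calc N s ≤ ∫ x, E * Complex.normSq (U s x) :=
        integral_mono (int_wns U C₀ hC₀0 s (hC₀ s hs))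
          ((int_ns U C₀ hC₀0 s (hC₀ s hs)).const_mul E) hpt
      _ = E * J s := integral_const_mul E _
  have hLLJ : ∀ s ∈ Set.Icc (0:ℝ) T, LL s ≤ E * JF s := by
    intro s hs
    have hpt : ∀ x, w x * Complex.normSq (F s x) ≤ E * Complex.normSq (F s x) := fun x =>
      mul_le_mul_of_nonneg_right (hw_ub' x) (Complex.normSq_nonneg _)
    calc LL s ≤ ∫ x, E * Complex.normSq (F s x) :=
        integral_mono (int_wns F CF hCF0 s (hCF s hs))
          ((int_ns F CF hCF0 s (hCF s hs)).const_mul E) hpt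
      _ = E * JF s := integral_const_mul E _
  -- rewrite the goal
  rw [hns_norm (U t), hns_norm (U 0)]
  have hFrw : (∫ s in Set.Icc (0:ℝ) T, Real.sqrt (∫ x, ‖F s x‖ ^ 2))
      = ∫ s in Set.Icc (0:ℝ) T, Real.sqrt (JF s) :=
    integral_congr_ae (ae_of_all _ fun s => by
      simp only []
      rw [hns_norm (F s)])
  rw [hFrw]
  set IF := ∫ s in Set.Icc (0:ℝ) T, Real.sqrt (JF s) with hIFdef
  have hIFnn : 0 ≤ IF :=
    setIntegral_nonneg measurableSet_Icc (fun s _ => Real.sqrt_nonneg _)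
  have hRT : Rint T ≤ Real.sqrt E * IF := by
    have hLle : ∀ σ ∈ Set.Icc (0:ℝ) T, L σ ≤ Real.sqrt E * Real.sqrt (JF σ) := by
      intro σ hσ
      rw [hLdef]
      calc Real.sqrt (LL σ) ≤ Real.sqrt (E * JF σ) := Real.sqrt_le_sqrt (hLLJ σ hσ)
        _ = Real.sqrt E * Real.sqrt (JF σ) := Real.sqrt_mul hE0.le _
    have hicont : Continuous fun σ => Real.sqrt E * Real.sqrt (JF σ) :=
      continuous_const.mul (Real.continuous_sqrt.comp hJFcont)
    have h1 : Rint T ≤ ∫ σ in (0:ℝ)..T, Real.sqrt E * Real.sqrt (JF σ) := by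
      rw [hRdef]
      exact intervalIntegral.integral_mono_on hT.le (hLcont.intervalIntegrable (μ := volume) _ _)
        (hicont.intervalIntegrable (μ := volume) _ _) hLle
    have h2 : (∫ σ in (0:ℝ)..T, Real.sqrt E * Real.sqrt (JF σ))
        = Real.sqrt E * ∫ σ in (0:ℝ)..T, Real.sqrt (JF σ) := by
      rw [intervalIntegral.integral_const_mul]
    have h3 : (∫ σ in (0:ℝ)..T, Real.sqrt (JF σ)) = IF := by
      rw [intervalIntegral.integral_of_le hT.le, hIFdef, ← integral_Icc_eq_integral_Ioc]
    rw [h2, h3] at h1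
    exact h1
  -- epsilon argument
  refine le_of_forall_pos_le_add ?_
  intro ε hε
  have hcoef : (0:ℝ) < Real.sqrt E * Real.exp (K/2 * T) := by positivity
  set δ := (ε / (Real.sqrt E * Real.exp (K/2 * T))) ^ 2 with hδdef
  have hδpos : 0 < δ := by positivity
  have hδs : Real.sqrt δ = ε / (Real.sqrt E * Real.exp (K/2 * T)) := by
    rw [hδdef]; exact Real.sqrt_sq (by positivity)
  have hmain := hgron δ hδpos t ht
  have s1 : Real.sqrt (J t) ≤ Real.sqrt E * Real.sqrt (N t + δ) := by
    calc Real.sqrt (J t) ≤ Real.sqrt (E * N t) := Real.sqrt_le_sqrt (hJN t ht)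
      _ = Real.sqrt E * Real.sqrt (N t) := Real.sqrt_mul hE0.le _
      _ ≤ Real.sqrt E * Real.sqrt (N t + δ) :=
        mul_le_mul_of_nonneg_left (Real.sqrt_le_sqrt (by linarith)) (Real.sqrt_nonneg _)
  have s2 : Real.sqrt (N 0 + δ) ≤ Real.sqrt (N 0) + Real.sqrt δ := by
    have h := Real.sqrt_le_sqrt (show N 0 + δ ≤ (Real.sqrt (N 0) + Real.sqrt δ) ^ 2 by
      nlinarith [Real.sq_sqrt (hNnn 0), Real.sq_sqrt hδpos.le, Real.sqrt_nonneg (N 0),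
        Real.sqrt_nonneg δ])
    rwa [Real.sqrt_sq (by positivity)] at h
  have s3 : Real.sqrt (N 0) ≤ Real.sqrt E * Real.sqrt (J 0) := by
    calc Real.sqrt (N 0) ≤ Real.sqrt (E * J 0) :=
        Real.sqrt_le_sqrt (hNJ 0 (Set.left_mem_Icc.2 hT.le))
      _ = Real.sqrt E * Real.sqrt (J 0) := Real.sqrt_mul hE0.le _
  have s4 : Real.exp (K/2 * t) ≤ Real.exp (K/2 * T) :=
    Real.exp_le_exp.2 (by nlinarith [ht.1, ht.2, hK0])
  have hEss : Real.sqrt E * Real.sqrt E = E := Real.mul_self_sqrt hE0.le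
  have sqrtE_nn : (0:ℝ) ≤ Real.sqrt E := Real.sqrt_nonneg E
  have hRt_le := hRmono t ht
  have hbig : Real.sqrt (N t + δ) ≤ Real.exp (K/2 * T)
      * (Real.sqrt E * Real.sqrt (J 0) + Real.sqrt δ + Real.sqrt E * IF) := by
    have hinner : Real.sqrt (N 0 + δ) + Rint t
        ≤ Real.sqrt E * Real.sqrt (J 0) + Real.sqrt δ + Real.sqrt E * IF := by
      linarith [s2, s3, hRt_le, hRT]
    have hinner_nn : 0 ≤ Real.sqrt (N 0 + δ) + Rint t := by
      have h7 := hRnn t ht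
      have h8 := Real.sqrt_nonneg (N 0 + δ)
      linarith
    calc Real.sqrt (N t + δ)
        ≤ Real.exp (K/2 * t) * (Real.sqrt (N 0 + δ) + Rint t) := hmain
      _ ≤ Real.exp (K/2 * T) * (Real.sqrt (N 0 + δ) + Rint t) :=
          mul_le_mul_of_nonneg_right s4 hinner_nn
      _ ≤ Real.exp (K/2 * T)
          * (Real.sqrt E * Real.sqrt (J 0) + Real.sqrt δ + Real.sqrt E * IF) :=
          mul_le_mul_of_nonneg_left hinner (Real.exp_pos _).le
  have h5 := mul_le_mul_of_nonneg_left hbig sqrtE_nn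
  have hexpand : Real.sqrt E * (Real.exp (K/2 * T)
      * (Real.sqrt E * Real.sqrt (J 0) + Real.sqrt δ + Real.sqrt E * IF))
      = E * Real.exp (K/2 * T) * (Real.sqrt (J 0) + IF)
        + (Real.sqrt E * Real.exp (K/2 * T)) * Real.sqrt δ := by
    linear_combination (Real.exp (K/2 * T) * (Real.sqrt (J 0) + IF)) * hEss
  have hδterm : (Real.sqrt E * Real.exp (K/2 * T)) * Real.sqrt δ = ε := by
    rw [hδs, mul_comm, div_mul_cancel₀ _ hcoef.ne']
  linarith [s1, h5, hexpand, hδterm]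
end

section
/- (Lemma 2.5, first inequality.) For all integers j, k ≥ 1 there exists c = c(k,j) > 0 such that for every Schwartz function f : ℝ → ℂ, ‖⟨x⟩^k ∂_x^j f‖₂² ≤ c ‖⟨x⟩^k ∂_x^{j+1} f‖₂ · ‖⟨x⟩^k ∂_x^{j-1} f‖₂ + c ‖⟨x⟩^{k-1} ∂_x^{j-1} f‖₂². -/
open MeasureTheory

namespace WIBPAux

open SchwartzMap

noncomputable section

/-- The weight `(1+x^2)^m`. -/
def W (m : ℕ) (x : ℝ) : ℝ := (1 + x ^ 2) ^ m

lemma one_le_base (x : ℝ) : (1:ℝ) ≤ 1 + x ^ 2 := by nlinarith [sq_nonneg x]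

lemma W_nonneg (m : ℕ) (x : ℝ) : 0 ≤ W m x :=
  pow_nonneg (by nlinarith [sq_nonneg x]) m

lemma W_mono {m n : ℕ} (h : m ≤ n) (x : ℝ) : W m x ≤ W n x :=
  pow_le_pow_right₀ (one_le_base x) h

/-- Derivative of `W k`. -/
def W1 (k : ℕ) (x : ℝ) : ℝ := (k:ℝ) * (1 + x ^ 2) ^ (k - 1) * (2 * x)

/-- Second derivative of `W k`. -/
def W2 (k : ℕ) (x : ℝ) : ℝ :=
  (k:ℝ) * (((k - 1 : ℕ):ℝ) * (1 + x ^ 2) ^ (k - 1 - 1) * (2 * x)) * (2 * x)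
    + (k:ℝ) * (1 + x ^ 2) ^ (k - 1) * 2

lemma continuous_W (m : ℕ) : Continuous (W m) :=
  (continuous_const.add (continuous_pow 2)).pow m

lemma continuous_W1 (k : ℕ) : Continuous (W1 k) :=
  (continuous_const.mul ((continuous_const.add (continuous_pow 2)).pow _)).mul
    (continuous_const.mul continuous_id)

lemma continuous_W2 (k : ℕ) : Continuous (W2 k) := by
  unfold W2
  exact ((continuous_const.mul ((continuous_const.mul
    ((continuous_const.add (continuous_pow 2)).pow _)).mul
      (continuous_const.mul continuous_id))).mul
        (continuous_const.mul continuous_id)).add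
    ((continuous_const.mul ((continuous_const.add (continuous_pow 2)).pow _)).mul
      continuous_const)

lemma hasDerivAt_inner (x : ℝ) : HasDerivAt (fun y : ℝ => 1 + y ^ 2) (2 * x) x := by
  simpa using ((hasDerivAt_pow 2 x).const_add 1)

lemma hasDerivAt_W (k : ℕ) (x : ℝ) : HasDerivAt (W k) (W1 k x) x := by
  exact (hasDerivAt_inner x).pow k

lemma hasDerivAt_W1 (k : ℕ) (x : ℝ) : HasDerivAt (W1 k) (W2 k x) x := by
  have h1 : HasDerivAt (fun y : ℝ => (k:ℝ) * (1 + y ^ 2) ^ (k - 1))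
      ((k:ℝ) * (((k - 1 : ℕ):ℝ) * (1 + x ^ 2) ^ (k - 1 - 1) * (2 * x))) x :=
    ((hasDerivAt_inner x).pow (k - 1)).const_mul _
  have h2 : HasDerivAt (fun y : ℝ => 2 * y) (2:ℝ) x := by
    simpa using (hasDerivAt_id x).const_mul (2:ℝ)
  exact h1.mul h2

lemma W2_nonneg (k : ℕ) (x : ℝ) : 0 ≤ W2 k x := by
  have h1 : (0:ℝ) ≤ (k:ℝ) := k.cast_nonneg
  have h2 : (0:ℝ) ≤ ((k - 1 : ℕ):ℝ) := Nat.cast_nonneg _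
  have h3 : (0:ℝ) ≤ (1 + x ^ 2) ^ (k - 1 - 1) := W_nonneg _ x
  have h4 : (0:ℝ) ≤ (1 + x ^ 2) ^ (k - 1) := W_nonneg _ x
  have key : W2 k x = (k:ℝ) * ((k - 1 : ℕ):ℝ) * (1 + x ^ 2) ^ (k - 1 - 1) * (2 * x) ^ 2
      + (k:ℝ) * (1 + x ^ 2) ^ (k - 1) * 2 := by unfold W2; ring
  rw [key]; positivity

lemma W2_le (k : ℕ) (hk : 1 ≤ k) (x : ℝ) : W2 k x ≤ 4 * (k:ℝ) ^ 2 * W (k - 1) x := by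
  obtain ⟨m, rfl⟩ : ∃ m, k = m + 1 := ⟨k - 1, (Nat.succ_pred_eq_of_pos hk).symm⟩
  simp only [Nat.add_sub_cancel] at *
  unfold W2 W
  simp only [Nat.add_sub_cancel]
  rcases Nat.eq_zero_or_pos m with hm | hm
  · subst hm; norm_num
  · obtain ⟨n, rfl⟩ : ∃ n, m = n + 1 := ⟨m - 1, (Nat.succ_pred_eq_of_pos hm).symm⟩
    simp only [Nat.add_sub_cancel]
    have hA : (0:ℝ) ≤ (1 + x ^ 2) ^ n := W_nonneg n x
    have hx : x ^ 2 * (1 + x ^ 2) ^ n ≤ (1 + x ^ 2) ^ (n + 1) := by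
      rw [pow_succ (1 + x ^ 2) n, mul_comm ((1 + x ^ 2) ^ n) (1 + x ^ 2)]
      exact mul_le_mul_of_nonneg_right (by linarith [sq_nonneg x]) hA
    have hB : (0:ℝ) ≤ (1 + x ^ 2) ^ (n + 1) := W_nonneg (n+1) x
    push_cast
    calc ((n:ℝ) + 1 + 1) * (((n:ℝ) + 1) * (1 + x ^ 2) ^ n * (2 * x)) * (2 * x)
          + ((n:ℝ) + 1 + 1) * (1 + x ^ 2) ^ (n + 1) * 2
        = 4 * ((n:ℝ) + 1 + 1) * ((n:ℝ) + 1) * (x ^ 2 * (1 + x ^ 2) ^ n)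
          + 2 * ((n:ℝ) + 1 + 1) * (1 + x ^ 2) ^ (n + 1) := by ring
      _ ≤ 4 * ((n:ℝ) + 1 + 1) * ((n:ℝ) + 1) * (1 + x ^ 2) ^ (n + 1)
          + 2 * ((n:ℝ) + 1 + 1) * (1 + x ^ 2) ^ (n + 1) := by gcongr
      _ ≤ 4 * ((n:ℝ) + 1 + 1) ^ 2 * (1 + x ^ 2) ^ (n + 1) := by
          nlinarith [mul_nonneg (show (0:ℝ) ≤ (n:ℝ) + 1 + 1 by positivity) hB]

lemma abs_W1_le (k : ℕ) (hk : 1 ≤ k) (x : ℝ) : |W1 k x| ≤ 2 * (k:ℝ) * W k x := by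
  obtain ⟨m, rfl⟩ : ∃ m, k = m + 1 := ⟨k - 1, (Nat.succ_pred_eq_of_pos hk).symm⟩
  unfold W1 W
  simp only [Nat.add_sub_cancel]
  have hA : (0:ℝ) ≤ (1 + x ^ 2) ^ m := W_nonneg m x
  have habs : |x| ≤ 1 + x ^ 2 := by nlinarith [sq_nonneg (|x| - 1), sq_abs x]
  rw [abs_mul, abs_mul, abs_of_nonneg (by positivity : (0:ℝ) ≤ (((m:ℕ)+1:ℕ):ℝ)),
    abs_of_nonneg hA, abs_mul, pow_succ (1 + x ^ 2) m]
  push_cast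
  have h2 : |(2:ℝ)| = 2 := by norm_num
  rw [h2]
  calc ((m:ℝ) + 1) * (1 + x ^ 2) ^ m * (2 * |x|)
      = 2 * ((m:ℝ) + 1) * ((1 + x ^ 2) ^ m * |x|) := by ring
    _ ≤ 2 * ((m:ℝ) + 1) * ((1 + x ^ 2) ^ m * (1 + x ^ 2)) := by gcongr
    _ = 2 * ((m:ℝ) + 1) * ((1 + x ^ 2) ^ m * (1 + x ^ 2)) := by ring

lemma W_le (m : ℕ) (x : ℝ) : W m x ≤ 2 ^ m * (1 + ‖x‖ ^ (2 * m)) := by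
  have hn : (0:ℝ) ≤ ‖x‖ ^ (2 * m) := by positivity
  rcases le_total (x ^ 2) 1 with h | h
  · have h1 : (1 + x ^ 2) ^ m ≤ (2:ℝ) ^ m :=
      pow_le_pow_left₀ (by positivity) (by linarith) m
    have h2 : (0:ℝ) < 2 ^ m := by positivity
    unfold W; nlinarith
  · have h1 : (1 + x ^ 2) ^ m ≤ ((2:ℝ) * x ^ 2) ^ m :=
      pow_le_pow_left₀ (by positivity) (by linarith) m
    have h2 : ((2:ℝ) * x ^ 2) ^ m = 2 ^ m * ‖x‖ ^ (2 * m) := by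
      rw [mul_pow, pow_mul, Real.norm_eq_abs, sq_abs]
    have h3 : (0:ℝ) < 2 ^ m := by positivity
    unfold W; nlinarith

lemma integrable_W_mul (m : ℕ) (G H : SchwartzMap ℝ ℂ) :
    Integrable (fun x : ℝ => W m x * (‖G x‖ * ‖H x‖)) := by
  set S : ℝ := SchwartzMap.seminorm ℝ 0 0 H with hSdef
  have hS0 : 0 ≤ S := apply_nonneg _ _
  have hS : ∀ x, ‖H x‖ ≤ S := fun x => H.norm_le_seminorm ℝ x
  have hmaj : Integrable (fun x : ℝ => 2 ^ m * S * (‖G x‖ + ‖x‖ ^ (2 * m) * ‖G x‖)) :=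
    (((G.integrable (μ := volume)).norm.add (G.integrable_pow_mul volume (2 * m))).const_mul _)
  refine hmaj.mono' ?_ ?_
  · exact ((continuous_W m).mul
      ((G.continuous.norm).mul (H.continuous.norm))).aestronglyMeasurable
  · filter_upwards with x
    have h1 := W_le m x
    have h2 := hS x
    have h3 : (0:ℝ) ≤ ‖G x‖ := norm_nonneg _
    have h4 := W_nonneg m x
    have h5 : (0:ℝ) ≤ ‖H x‖ := norm_nonneg _
    have h6 : (0:ℝ) ≤ ‖x‖ ^ (2 * m) := by positivity
    rw [Real.norm_of_nonneg (by positivity)]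
    calc W m x * (‖G x‖ * ‖H x‖) ≤ (2 ^ m * (1 + ‖x‖ ^ (2 * m))) * (‖G x‖ * S) := by
          apply mul_le_mul h1 (by nlinarith) (by positivity) (by positivity)
      _ = 2 ^ m * S * (‖G x‖ + ‖x‖ ^ (2 * m) * ‖G x‖) := by ring

lemma norm_weight_smul (m : ℕ) (x : ℝ) (v : ℂ) :
    ‖(Real.sqrt (1 + x ^ 2) ^ m : ℝ) • v‖ ^ 2 = W m x * ‖v‖ ^ 2 := by
  rw [norm_smul, mul_pow, Real.norm_eq_abs, abs_pow,
    abs_of_nonneg (Real.sqrt_nonneg _), ← pow_mul, mul_comm m 2, pow_mul,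
    Real.sq_sqrt (by positivity : (0:ℝ) ≤ 1 + x ^ 2)]
  rfl

lemma mul_star_re (z : ℂ) : (z * star z).re = ‖z‖ ^ 2 := by
  rw [Complex.star_def, Complex.mul_conj, Complex.ofReal_re, Complex.normSq_eq_norm_sq]

/-- Key integration-by-parts inequality. -/
lemma key (k : ℕ) (hk : 1 ≤ k) (G : SchwartzMap ℝ ℂ) :
    (∫ x : ℝ, W k x * ‖deriv (⇑G) x‖ ^ 2) ≤
      Real.sqrt (∫ x : ℝ, W k x * ‖deriv (deriv (⇑G)) x‖ ^ 2) *
        Real.sqrt (∫ x : ℝ, W k x * ‖G x‖ ^ 2) +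
      2 * (k:ℝ) ^ 2 * ∫ x : ℝ, W (k - 1) x * ‖G x‖ ^ 2 := by
  have hk0 : (0:ℝ) < (k:ℝ) := by exact_mod_cast hk
  set G1 : SchwartzMap ℝ ℂ := SchwartzMap.derivCLM ℝ ℂ G with hG1def
  set G2 : SchwartzMap ℝ ℂ := SchwartzMap.derivCLM ℝ ℂ G1 with hG2def
  have hG1 : (⇑G1 : ℝ → ℂ) = deriv ⇑G := funext fun x => SchwartzMap.derivCLM_apply (𝕜 := ℝ) G x
  have hG1' : (⇑G2 : ℝ → ℂ) = deriv ⇑G1 := funext fun x => SchwartzMap.derivCLM_apply (𝕜 := ℝ) G1 x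
  have hG2 : (⇑G2 : ℝ → ℂ) = deriv (deriv ⇑G) := by rw [hG1', hG1]
  rw [← hG2, ← hG1]
  -- differentiability
  have hg : ∀ x, HasDerivAt (⇑G) (G1 x) x := fun x => by
    rw [hG1]; exact G.differentiable.differentiableAt.hasDerivAt
  have hg1 : ∀ x, HasDerivAt (⇑G1) (G2 x) x := fun x => by
    rw [hG1']; exact G1.differentiable.differentiableAt.hasDerivAt
  clear_value G1 G2
  clear hG1def hG2def hG1 hG1' hG2
  -- master integrable facts
  have I10 := integrable_W_mul k G1 G
  have I11 := integrable_W_mul k G1 G1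
  have I20 := integrable_W_mul k G2 G
  have I22 := integrable_W_mul k G2 G2
  have I00 := integrable_W_mul k G G
  have J00 := integrable_W_mul (k - 1) G G
  have hWc := continuous_W k
  have hW1c := continuous_W1 k
  have hW2c := continuous_W2 k
  have hsG : Continuous (fun x : ℝ => star (G x)) := continuous_star.comp G.continuous
  have hsG1 : Continuous (fun x : ℝ => star (G1 x)) := continuous_star.comp G1.continuous
  -- the function F and its derivative φ
  set F : ℝ → ℂ := fun x =>
      W k x • (G1 x * star (G x)) - (W1 k x / 2) • (G x * star (G x)) with hFdef
  set φ : ℝ → ℂ := fun x =>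
      (W k x • (G2 x * star (G x) + G1 x * star (G1 x)) + W1 k x • (G1 x * star (G x)))
      - ((W1 k x / 2) • (G1 x * star (G x) + G x * star (G1 x))
          + (W2 k x / 2) • (G x * star (G x))) with hφdef
  have hF' : ∀ x, HasDerivAt F (φ x) x := fun x => by
    have hstar : HasDerivAt (fun y => star (G y)) (star (G1 x)) x := (hg x).star
    have hp1 : HasDerivAt (fun y => G1 y * star (G y))
        (G2 x * star (G x) + G1 x * star (G1 x)) x := (hg1 x).mul hstar
    have hp0 : HasDerivAt (fun y => G y * star (G y))
        (G1 x * star (G x) + G x * star (G1 x)) x := (hg x).mul hstar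
    exact ((hasDerivAt_W k x).smul hp1).sub (((hasDerivAt_W1 k x).div_const 2).smul hp0)
  -- continuity
  have hφcont : Continuous φ := by
    rw [hφdef]
    exact ((hWc.smul ((G2.continuous.mul hsG).add (G1.continuous.mul hsG1))).add
        (hW1c.smul (G1.continuous.mul hsG))).sub
      (((hW1c.div_const 2).smul ((G1.continuous.mul hsG).add (G.continuous.mul hsG1))).add
        ((hW2c.div_const 2).smul (G.continuous.mul hsG)))
  have hFcont : Continuous F := by
    rw [hFdef]
    exact (hWc.smul (G1.continuous.mul hsG)).sub
      ((hW1c.div_const 2).smul (G.continuous.mul hsG))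
  -- pointwise norm computations
  have hnsmul : ∀ (r : ℝ) (z w : ℂ), ‖r • (z * star w)‖ = |r| * (‖z‖ * ‖w‖) := by
    intro r z w
    rw [norm_smul, Real.norm_eq_abs, norm_mul, norm_star]
  -- integrability of φ
  have hφint : Integrable φ := by
    have hmaj : Integrable (fun x : ℝ =>
        (W k x * (‖G2 x‖ * ‖G x‖) + W k x * (‖G1 x‖ * ‖G1 x‖)
          + 2 * (k:ℝ) * (W k x * (‖G1 x‖ * ‖G x‖)))
        + (2 * (k:ℝ) * (W k x * (‖G1 x‖ * ‖G x‖))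
          + 2 * (k:ℝ) ^ 2 * (W (k - 1) x * (‖G x‖ * ‖G x‖)))) :=
      ((I20.add I11).add (I10.const_mul _)).add ((I10.const_mul _).add (J00.const_mul _))
    refine hmaj.mono' hφcont.aestronglyMeasurable ?_
    filter_upwards with x
    have hW1b := abs_W1_le k hk x
    have hW2b := W2_le k hk x
    have hW2n := W2_nonneg k x
    have hWn := W_nonneg k x
    have e1 : ‖W k x • (G2 x * star (G x) + G1 x * star (G1 x))‖
        ≤ W k x * (‖G2 x‖ * ‖G x‖) + W k x * (‖G1 x‖ * ‖G1 x‖) := by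
      rw [norm_smul, Real.norm_eq_abs, abs_of_nonneg hWn]
      calc W k x * ‖G2 x * star (G x) + G1 x * star (G1 x)‖
          ≤ W k x * (‖G2 x * star (G x)‖ + ‖G1 x * star (G1 x)‖) := by
            exact mul_le_mul_of_nonneg_left (norm_add_le _ _) hWn
        _ = W k x * (‖G2 x‖ * ‖G x‖) + W k x * (‖G1 x‖ * ‖G1 x‖) := by
            rw [norm_mul, norm_mul, norm_star, norm_star]; ring
    have e2 : ‖W1 k x • (G1 x * star (G x))‖ ≤ 2 * (k:ℝ) * (W k x * (‖G1 x‖ * ‖G x‖)) := by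
      rw [hnsmul]
      calc |W1 k x| * (‖G1 x‖ * ‖G x‖) ≤ (2 * (k:ℝ) * W k x) * (‖G1 x‖ * ‖G x‖) :=
            mul_le_mul_of_nonneg_right hW1b (by positivity)
        _ = 2 * (k:ℝ) * (W k x * (‖G1 x‖ * ‖G x‖)) := by ring
    have e3 : ‖(W1 k x / 2) • (G1 x * star (G x) + G x * star (G1 x))‖
        ≤ 2 * (k:ℝ) * (W k x * (‖G1 x‖ * ‖G x‖)) := by
      rw [norm_smul, Real.norm_eq_abs]
      calc |W1 k x / 2| * ‖G1 x * star (G x) + G x * star (G1 x)‖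
          ≤ |W1 k x / 2| * (‖G1 x‖ * ‖G x‖ + ‖G x‖ * ‖G1 x‖) := by
            refine mul_le_mul_of_nonneg_left ((norm_add_le _ _).trans_eq ?_) (abs_nonneg _)
            rw [norm_mul, norm_mul, norm_star, norm_star]
        _ = |W1 k x| * (‖G1 x‖ * ‖G x‖) := by rw [abs_div]; norm_num; ring
        _ ≤ (2 * (k:ℝ) * W k x) * (‖G1 x‖ * ‖G x‖) :=
            mul_le_mul_of_nonneg_right hW1b (by positivity)
        _ = 2 * (k:ℝ) * (W k x * (‖G1 x‖ * ‖G x‖)) := by ring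
    have e4 : ‖(W2 k x / 2) • (G x * star (G x))‖
        ≤ 2 * (k:ℝ) ^ 2 * (W (k - 1) x * (‖G x‖ * ‖G x‖)) := by
      rw [hnsmul, abs_of_nonneg (by positivity : (0:ℝ) ≤ W2 k x / 2)]
      calc W2 k x / 2 * (‖G x‖ * ‖G x‖)
          ≤ (2 * (k:ℝ) ^ 2 * W (k - 1) x) * (‖G x‖ * ‖G x‖) :=
            mul_le_mul_of_nonneg_right (by linarith) (by positivity)
        _ = 2 * (k:ℝ) ^ 2 * (W (k - 1) x * (‖G x‖ * ‖G x‖)) := by ring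
    calc ‖φ x‖ ≤ ‖W k x • (G2 x * star (G x) + G1 x * star (G1 x))
            + W1 k x • (G1 x * star (G x))‖
          + ‖(W1 k x / 2) • (G1 x * star (G x) + G x * star (G1 x))
            + (W2 k x / 2) • (G x * star (G x))‖ := by
          rw [hφdef]; exact norm_sub_le _ _
      _ ≤ (‖W k x • (G2 x * star (G x) + G1 x * star (G1 x))‖
            + ‖W1 k x • (G1 x * star (G x))‖)
          + (‖(W1 k x / 2) • (G1 x * star (G x) + G x * star (G1 x))‖
            + ‖(W2 k x / 2) • (G x * star (G x))‖) :=
          add_le_add (norm_add_le _ _) (norm_add_le _ _)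
      _ ≤ _ := by push_cast; linarith
  -- integrability of F
  have hFint : Integrable F := by
    have hmaj : Integrable (fun x : ℝ =>
        W k x * (‖G1 x‖ * ‖G x‖) + (k:ℝ) * (W k x * (‖G x‖ * ‖G x‖))) :=
      I10.add (I00.const_mul _)
    refine hmaj.mono' hFcont.aestronglyMeasurable ?_
    filter_upwards with x
    have hW1b := abs_W1_le k hk x
    have hWn := W_nonneg k x
    calc ‖F x‖ ≤ ‖W k x • (G1 x * star (G x))‖ + ‖(W1 k x / 2) • (G x * star (G x))‖ := by
          rw [hFdef]; exact norm_sub_le _ _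
      _ ≤ W k x * (‖G1 x‖ * ‖G x‖) + (k:ℝ) * (W k x * (‖G x‖ * ‖G x‖)) := by
          rw [hnsmul, hnsmul, abs_of_nonneg hWn]
          have : |W1 k x / 2| * (‖G x‖ * ‖G x‖) ≤ (k:ℝ) * (W k x * (‖G x‖ * ‖G x‖)) := by
            calc |W1 k x / 2| * (‖G x‖ * ‖G x‖)
                ≤ ((k:ℝ) * W k x) * (‖G x‖ * ‖G x‖) := by
                  refine mul_le_mul_of_nonneg_right ?_ (by positivity)
                  rw [abs_div]
                  rw [show |(2:ℝ)| = 2 by norm_num]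
                  linarith
              _ = (k:ℝ) * (W k x * (‖G x‖ * ‖G x‖)) := by ring
          linarith
  -- the fundamental identity
  have hzero : (∫ x : ℝ, φ x) = 0 :=
    integral_eq_zero_of_hasDerivAt_of_integrable hF' hφint hFint
  have hre : (∫ x : ℝ, (φ x).re) = 0 := by
    have h := integral_re hφint
    rw [hzero] at h
    simpa using h
  -- pointwise real part
  have hφre : ∀ x, (φ x).re
      = W k x * (G2 x * star (G x)).re + W k x * ‖G1 x‖ ^ 2
        - W2 k x / 2 * ‖G x‖ ^ 2 := by
    intro x
    have hsym : (G x * star (G1 x)).re = (G1 x * star (G x)).re := by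
      simp [Complex.mul_re, Complex.star_def, Complex.conj_re, Complex.conj_im]; ring
    rw [hφdef]
    simp only [Complex.sub_re, Complex.add_re, Complex.smul_re, mul_star_re, hsym,
      smul_eq_mul]
    ring
  -- integrability of the three real pieces
  have hAbd : ∀ x, |W k x * (G2 x * star (G x)).re| ≤ W k x * (‖G2 x‖ * ‖G x‖) := by
    intro x
    rw [abs_mul, abs_of_nonneg (W_nonneg k x)]
    refine mul_le_mul_of_nonneg_left ?_ (W_nonneg k x)
    calc |(G2 x * star (G x)).re| ≤ ‖G2 x * star (G x)‖ :=
          Complex.abs_re_le_norm _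
      _ = ‖G2 x‖ * ‖G x‖ := by
          rw [norm_mul, norm_star]
  have hAint : Integrable (fun x : ℝ => W k x * (G2 x * star (G x)).re) := by
    refine I20.mono' ?_ ?_
    · exact (hWc.mul (Complex.continuous_re.comp
        (G2.continuous.mul hsG))).aestronglyMeasurable
    · filter_upwards with x
      rw [Real.norm_eq_abs]
      exact hAbd x
  have hBint : Integrable (fun x : ℝ => W k x * ‖G1 x‖ ^ 2) := by
    have : (fun x : ℝ => W k x * ‖G1 x‖ ^ 2)
        = fun x : ℝ => W k x * (‖G1 x‖ * ‖G1 x‖) := by funext x; ring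
    rw [this]; exact I11
  have hCbd : ∀ x, W2 k x / 2 * ‖G x‖ ^ 2
      ≤ 2 * (k:ℝ) ^ 2 * (W (k - 1) x * (‖G x‖ * ‖G x‖)) := by
    intro x
    have hW2b := W2_le k hk x
    calc W2 k x / 2 * ‖G x‖ ^ 2 ≤ (2 * (k:ℝ) ^ 2 * W (k - 1) x) * ‖G x‖ ^ 2 :=
          mul_le_mul_of_nonneg_right (by linarith) (by positivity)
      _ = 2 * (k:ℝ) ^ 2 * (W (k - 1) x * (‖G x‖ * ‖G x‖)) := by ring
  have hCint : Integrable (fun x : ℝ => W2 k x / 2 * ‖G x‖ ^ 2) := by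
    refine (J00.const_mul (2 * (k:ℝ) ^ 2)).mono' ?_ ?_
    · exact ((hW2c.div_const 2).mul (G.continuous.norm.pow 2)).aestronglyMeasurable
    · filter_upwards with x
      rw [Real.norm_of_nonneg (mul_nonneg (by linarith [W2_nonneg k x]) (by positivity))]
      exact hCbd x
  -- split the identity
  have h1 : (∫ x : ℝ, (W k x * (G2 x * star (G x)).re + W k x * ‖G1 x‖ ^ 2
      - W2 k x / 2 * ‖G x‖ ^ 2)) = 0 := by
    refine Eq.trans ?_ hre
    exact integral_congr_ae (Filter.Eventually.of_forall fun x => (hφre x).symm)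
  have h2 : (∫ x : ℝ, (W k x * (G2 x * star (G x)).re + W k x * ‖G1 x‖ ^ 2
      - W2 k x / 2 * ‖G x‖ ^ 2))
      = (∫ x : ℝ, W k x * (G2 x * star (G x)).re)
        + (∫ x : ℝ, W k x * ‖G1 x‖ ^ 2) - (∫ x : ℝ, W2 k x / 2 * ‖G x‖ ^ 2) := by
    have hABint : Integrable (fun x : ℝ =>
        W k x * (G2 x * star (G x)).re + W k x * ‖G1 x‖ ^ 2) := hAint.add hBint
    rw [integral_sub hABint hCint, integral_add hAint hBint]
  have hsplit : (∫ x : ℝ, W k x * (G2 x * star (G x)).re)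
      + (∫ x : ℝ, W k x * ‖G1 x‖ ^ 2) - (∫ x : ℝ, W2 k x / 2 * ‖G x‖ ^ 2) = 0 :=
    h2.symm.trans h1
  -- bound -∫A
  have habsA : -(∫ x : ℝ, W k x * (G2 x * star (G x)).re)
      ≤ ∫ x : ℝ, W k x * (‖G2 x‖ * ‖G x‖) := by
    calc -(∫ x : ℝ, W k x * (G2 x * star (G x)).re)
        ≤ |∫ x : ℝ, W k x * (G2 x * star (G x)).re| := neg_le_abs _
      _ ≤ ∫ x : ℝ, |W k x * (G2 x * star (G x)).re| := by
          have := norm_integral_le_integral_norm (μ := volume)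
            (fun x : ℝ => W k x * (G2 x * star (G x)).re)
          simp only [Real.norm_eq_abs] at this
          exact this
      _ ≤ ∫ x : ℝ, W k x * (‖G2 x‖ * ‖G x‖) :=
          integral_mono hAint.abs I20 fun x => hAbd x
  -- bound ∫C
  have hJ00' : Integrable (fun x : ℝ => W (k - 1) x * ‖G x‖ ^ 2) := by
    have : (fun x : ℝ => W (k - 1) x * ‖G x‖ ^ 2)
        = fun x : ℝ => W (k - 1) x * (‖G x‖ * ‖G x‖) := by funext x; ring
    rw [this]; exact J00
  have hintC : (∫ x : ℝ, W2 k x / 2 * ‖G x‖ ^ 2)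
      ≤ 2 * (k:ℝ) ^ 2 * ∫ x : ℝ, W (k - 1) x * ‖G x‖ ^ 2 := by
    rw [← integral_const_mul]
    refine integral_mono hCint (hJ00'.const_mul _) fun x => ?_
    calc W2 k x / 2 * ‖G x‖ ^ 2
        ≤ 2 * (k:ℝ) ^ 2 * (W (k - 1) x * (‖G x‖ * ‖G x‖)) := hCbd x
      _ = 2 * (k:ℝ) ^ 2 * (W (k - 1) x * ‖G x‖ ^ 2) := by ring
  -- Cauchy-Schwarz
  have hCS : (∫ x : ℝ, W k x * (‖G2 x‖ * ‖G x‖))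
      ≤ Real.sqrt (∫ x : ℝ, W k x * ‖G2 x‖ ^ 2) *
        Real.sqrt (∫ x : ℝ, W k x * ‖G x‖ ^ 2) := by
    have hu : Continuous (fun x : ℝ => Real.sqrt (W k x) * ‖G2 x‖) :=
      (Real.continuous_sqrt.comp hWc).mul G2.continuous.norm
    have hv : Continuous (fun x : ℝ => Real.sqrt (W k x) * ‖G x‖) :=
      (Real.continuous_sqrt.comp hWc).mul G.continuous.norm
    have hu2 : (fun x : ℝ => (Real.sqrt (W k x) * ‖G2 x‖) ^ 2)
        = fun x : ℝ => W k x * (‖G2 x‖ * ‖G2 x‖) := by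
      funext x
      rw [mul_pow, Real.sq_sqrt (W_nonneg k x)]; ring
    have hv2 : (fun x : ℝ => (Real.sqrt (W k x) * ‖G x‖) ^ 2)
        = fun x : ℝ => W k x * (‖G x‖ * ‖G x‖) := by
      funext x
      rw [mul_pow, Real.sq_sqrt (W_nonneg k x)]; ring
    have hmu : MemLp (fun x : ℝ => Real.sqrt (W k x) * ‖G2 x‖) (ENNReal.ofReal 2) volume := by
      rw [ENNReal.ofReal_ofNat]
      refine (memLp_two_iff_integrable_sq hu.aestronglyMeasurable).2 ?_
      rw [hu2]; exact I22
    have hmv : MemLp (fun x : ℝ => Real.sqrt (W k x) * ‖G x‖) (ENNReal.ofReal 2) volume := by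
      rw [ENNReal.ofReal_ofNat]
      refine (memLp_two_iff_integrable_sq hv.aestronglyMeasurable).2 ?_
      rw [hv2]; exact I00
    have h := integral_mul_le_Lp_mul_Lq_of_nonneg
      (show Real.HolderConjugate 2 2 by constructor <;> norm_num)
      (Filter.Eventually.of_forall fun x => by positivity)
      (Filter.Eventually.of_forall fun x => by positivity) hmu hmv
    have hLHS : (∫ x : ℝ, (Real.sqrt (W k x) * ‖G2 x‖) * (Real.sqrt (W k x) * ‖G x‖))
        = ∫ x : ℝ, W k x * (‖G2 x‖ * ‖G x‖) := by
      refine integral_congr_ae (Filter.Eventually.of_forall fun x => ?_)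
      show (Real.sqrt (W k x) * ‖G2 x‖) * (Real.sqrt (W k x) * ‖G x‖)
        = W k x * (‖G2 x‖ * ‖G x‖)
      rw [mul_mul_mul_comm, Real.mul_self_sqrt (W_nonneg k x)]
    have e2 : (∫ x : ℝ, (Real.sqrt (W k x) * ‖G2 x‖) ^ (2:ℝ))
        = ∫ x : ℝ, W k x * ‖G2 x‖ ^ 2 := by
      refine integral_congr_ae (Filter.Eventually.of_forall fun x => ?_)
      show (Real.sqrt (W k x) * ‖G2 x‖) ^ (2:ℝ) = W k x * ‖G2 x‖ ^ 2
      rw [show (2:ℝ) = ((2:ℕ):ℝ) by norm_num, Real.rpow_natCast, mul_pow,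
        Real.sq_sqrt (W_nonneg k x)]
    have ev2 : (∫ x : ℝ, (Real.sqrt (W k x) * ‖G x‖) ^ (2:ℝ))
        = ∫ x : ℝ, W k x * ‖G x‖ ^ 2 := by
      refine integral_congr_ae (Filter.Eventually.of_forall fun x => ?_)
      show (Real.sqrt (W k x) * ‖G x‖) ^ (2:ℝ) = W k x * ‖G x‖ ^ 2
      rw [show (2:ℝ) = ((2:ℕ):ℝ) by norm_num, Real.rpow_natCast, mul_pow,
        Real.sq_sqrt (W_nonneg k x)]
    calc (∫ x : ℝ, W k x * (‖G2 x‖ * ‖G x‖))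
        = ∫ x : ℝ, (Real.sqrt (W k x) * ‖G2 x‖) * (Real.sqrt (W k x) * ‖G x‖) := hLHS.symm
      _ ≤ (∫ x : ℝ, (Real.sqrt (W k x) * ‖G2 x‖) ^ (2:ℝ)) ^ (1/(2:ℝ)) *
          (∫ x : ℝ, (Real.sqrt (W k x) * ‖G x‖) ^ (2:ℝ)) ^ (1/(2:ℝ)) := h
      _ = Real.sqrt (∫ x : ℝ, W k x * ‖G2 x‖ ^ 2) *
          Real.sqrt (∫ x : ℝ, W k x * ‖G x‖ ^ 2) := by
          rw [e2, ev2, ← Real.sqrt_eq_rpow, ← Real.sqrt_eq_rpow]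
  -- conclude
  have hB2 : Integrable (fun x : ℝ => W k x * ‖G2 x‖ ^ 2) := by
    have : (fun x : ℝ => W k x * ‖G2 x‖ ^ 2)
        = fun x : ℝ => W k x * (‖G2 x‖ * ‖G2 x‖) := by funext x; ring
    rw [this]; exact I22
  linarith [hsplit, habsA, hintC, hCS]

lemma iterate_derivCLM_eq (n : ℕ) (f : SchwartzMap ℝ ℂ) :
    ⇑((fun g : SchwartzMap ℝ ℂ => SchwartzMap.derivCLM ℝ ℂ g)^[n] f) = iteratedDeriv n ⇑f := by
  induction n with
  | zero => simp [iteratedDeriv_zero]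
  | succ n ih =>
    rw [Function.iterate_succ_apply', iteratedDeriv_succ, ← ih]
    funext x
    exact SchwartzMap.derivCLM_apply (𝕜 := ℝ) _ x

end

end WIBPAux

open WIBPAux in
/-- **Lemma 2.5, first inequality.** For integers `j, k ≥ 1` there is `c = c(k,j) > 0`
such that for every Schwartz `f`,
`‖⟨x⟩^k ∂_x^j f‖₂² ≤ c ‖⟨x⟩^k ∂_x^{j+1} f‖₂ ‖⟨x⟩^k ∂_x^{j-1} f‖₂ + c ‖⟨x⟩^{k-1} ∂_x^{j-1} f‖₂²`. -/
theorem weighted_interpolation_by_parts_first (j k : ℕ) (hj : 1 ≤ j) (hk : 1 ≤ k) :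
    ∃ c : ℝ, 0 < c ∧ ∀ f : SchwartzMap ℝ ℂ,
      (∫ x : ℝ, ‖(Real.sqrt (1 + x ^ 2) ^ k : ℝ) • iteratedDeriv j (⇑f) x‖ ^ 2) ≤
        c * Real.sqrt (∫ x : ℝ,
            ‖(Real.sqrt (1 + x ^ 2) ^ k : ℝ) • iteratedDeriv (j + 1) (⇑f) x‖ ^ 2) *
          Real.sqrt (∫ x : ℝ,
            ‖(Real.sqrt (1 + x ^ 2) ^ k : ℝ) • iteratedDeriv (j - 1) (⇑f) x‖ ^ 2) +
        c * ∫ x : ℝ,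
          ‖(Real.sqrt (1 + x ^ 2) ^ (k - 1) : ℝ) • iteratedDeriv (j - 1) (⇑f) x‖ ^ 2 := by
  have hk1 : (1:ℝ) ≤ (k:ℝ) := by exact_mod_cast hk
  have hk0 : (0:ℝ) < (k:ℝ) := by linarith
  refine ⟨2 * (k:ℝ) ^ 2, by positivity, fun f => ?_⟩
  set G : SchwartzMap ℝ ℂ :=
    (fun g : SchwartzMap ℝ ℂ => SchwartzMap.derivCLM ℝ ℂ g)^[j - 1] f with hG
  have e0 : iteratedDeriv (j - 1) ⇑f = ⇑G := (iterate_derivCLM_eq (j - 1) f).symm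
  have e1 : iteratedDeriv j ⇑f = deriv ⇑G := by
    rw [show j = (j - 1) + 1 by omega, iteratedDeriv_succ, e0]
  have e2 : iteratedDeriv (j + 1) ⇑f = deriv (deriv ⇑G) := by
    rw [show j + 1 = (j - 1) + 1 + 1 by omega, iteratedDeriv_succ, iteratedDeriv_succ, e0]
  simp only [e1, e2, e0, norm_weight_smul]
  have hkey := key k hk G
  have h1 : (0:ℝ) ≤ Real.sqrt (∫ x : ℝ, W k x * ‖deriv (deriv (⇑G)) x‖ ^ 2) *
      Real.sqrt (∫ x : ℝ, W k x * ‖G x‖ ^ 2) := by positivity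
  have h3 : (0:ℝ) ≤ (2 * (k:ℝ) ^ 2 - 1) *
      (Real.sqrt (∫ x : ℝ, W k x * ‖deriv (deriv (⇑G)) x‖ ^ 2) *
        Real.sqrt (∫ x : ℝ, W k x * ‖G x‖ ^ 2)) :=
    mul_nonneg (by nlinarith) h1
  nlinarith [hkey, h3]
end

section
/- (Lemma 2.5, second inequality.) For all integers j, k ≥ 1 there exists c = c(k,j) > 0 such that for every Schwartz function f : ℝ → ℂ, ‖⟨x⟩^k ∂_x^j f‖₂² ≤ c ‖⟨x⟩^{k-1} ∂_x^{j+1} f‖₂ · ‖⟨x⟩^{k+1} ∂_x^{j-1} f‖₂ + c ‖⟨x⟩^{k-1} ∂_x^{j-1} f‖₂². -/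
open MeasureTheory

namespace WIBP

open Filter Complex Topology intervalIntegral

lemma weight_le (m : ℕ) (x : ℝ) : (1 + x ^ 2) ^ m ≤ 2 ^ m * (1 + ‖x‖ ^ (2 * m)) := by
  have hx : (0:ℝ) ≤ x ^ 2 := sq_nonneg x
  have hnorm : ‖x‖ ^ (2 * m) = (x ^ 2) ^ m := by
    rw [Real.norm_eq_abs, ← _root_.sq_abs x, ← pow_mul]
  have hpn : (0:ℝ) ≤ (x ^ 2) ^ m := pow_nonneg hx m
  rcases le_total (x ^ 2) 1 with h | h
  · calc (1 + x ^ 2) ^ m ≤ 2 ^ m := pow_le_pow_left₀ (by linarith) (by linarith) m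
    _ ≤ 2 ^ m * (1 + ‖x‖ ^ (2 * m)) :=
      le_mul_of_one_le_right (by positivity) (by rw [hnorm]; linarith)
  · calc (1 + x ^ 2) ^ m ≤ (2 * x ^ 2) ^ m := pow_le_pow_left₀ (by linarith) (by linarith) m
    _ = 2 ^ m * (x ^ 2) ^ m := mul_pow _ _ _
    _ ≤ 2 ^ m * (1 + ‖x‖ ^ (2 * m)) := by rw [hnorm]; nlinarith [pow_pos (by norm_num : (0:ℝ) < 2) m]

lemma sqrt_pow_sq (m : ℕ) (x : ℝ) : (Real.sqrt (1 + x ^ 2) ^ m) ^ 2 = (1 + x ^ 2) ^ m := by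
  rw [← pow_mul, mul_comm m 2, pow_mul, Real.sq_sqrt (by positivity)]

lemma integrable_aux (m : ℕ) (h h₂ : SchwartzMap ℝ ℂ) :
    Integrable (fun x : ℝ => (1 + x ^ 2) ^ m * (‖h x‖ * ‖h₂ x‖)) := by
  set M := ‖h₂.toBoundedContinuousFunction‖ with hM
  have hM0 : 0 ≤ M := norm_nonneg _
  have hMb : ∀ x, ‖h₂ x‖ ≤ M := fun x =>
    h₂.toBoundedContinuousFunction.norm_coe_le_norm x
  have hint : Integrable (fun x : ℝ =>
      2 ^ m * M * ‖h x‖ + 2 ^ m * M * (‖x‖ ^ (2 * m) * ‖h x‖)) := by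
    exact ((h.integrable.norm.const_mul _).add
      ((h.integrable_pow_mul volume (2 * m)).const_mul _))
  refine hint.mono' ?_ ?_
  · exact (Continuous.aestronglyMeasurable (by continuity))
  · refine Eventually.of_forall fun x => ?_
    have h1 : (0:ℝ) ≤ (1 + x ^ 2) ^ m := by positivity
    have h2 := weight_le m x
    rw [Real.norm_eq_abs, _root_.abs_of_nonneg (by positivity)]
    have : (1 + x ^ 2) ^ m * (‖h x‖ * ‖h₂ x‖) ≤ 2 ^ m * (1 + ‖x‖ ^ (2 * m)) * (‖h x‖ * M) := by
      apply mul_le_mul h2 (by nlinarith [hMb x, norm_nonneg (h x)]) (by positivity) (by positivity)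
    nlinarith [norm_nonneg (h x), pow_nonneg (norm_nonneg x) (2*m), this]




lemma memL2 (m : ℕ) (h : SchwartzMap ℝ ℂ) :
    MemLp (fun x : ℝ => Real.sqrt (1 + x ^ 2) ^ m * ‖h x‖) (ENNReal.ofReal 2) volume := by
  have h2 : (ENNReal.ofReal 2) = (2 : ENNReal) := by norm_num
  rw [h2, memLp_two_iff_integrable_sq]
  · refine (integrable_aux m h h).congr (Eventually.of_forall fun x => ?_)
    simp only [mul_pow, sqrt_pow_sq]; ring
  · exact Continuous.aestronglyMeasurable (by fun_prop)

lemma hoelder (m₁ m₂ : ℕ) (h₁ h₂ : SchwartzMap ℝ ℂ) :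
    (∫ x : ℝ, (Real.sqrt (1 + x ^ 2) ^ m₁ * ‖h₁ x‖) * (Real.sqrt (1 + x ^ 2) ^ m₂ * ‖h₂ x‖)) ≤
      Real.sqrt (∫ x : ℝ, (1 + x ^ 2) ^ m₁ * ‖h₁ x‖ ^ 2) *
        Real.sqrt (∫ x : ℝ, (1 + x ^ 2) ^ m₂ * ‖h₂ x‖ ^ 2) := by
  have hpq : Real.HolderConjugate 2 2 := Real.HolderConjugate.two_two
  have key := integral_mul_le_Lp_mul_Lq_of_nonneg hpq
    (f := fun x : ℝ => Real.sqrt (1 + x ^ 2) ^ m₁ * ‖h₁ x‖)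
    (g := fun x : ℝ => Real.sqrt (1 + x ^ 2) ^ m₂ * ‖h₂ x‖)
    (Eventually.of_forall fun x => by positivity)
    (Eventually.of_forall fun x => by positivity) (memL2 m₁ h₁) (memL2 m₂ h₂)
  refine le_trans key ?_
  have conv : ∀ (m : ℕ) (h : SchwartzMap ℝ ℂ),
      (∫ x : ℝ, (Real.sqrt (1 + x ^ 2) ^ m * ‖h x‖) ^ (2:ℝ)) ^ ((1:ℝ)/2) =
        Real.sqrt (∫ x : ℝ, (1 + x ^ 2) ^ m * ‖h x‖ ^ 2) := by
    intro m h
    rw [Real.sqrt_eq_rpow]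
    norm_num
    congr 1
    refine integral_congr_ae (Eventually.of_forall fun x => ?_)
    simp only [mul_pow, sqrt_pow_sq]
  rw [conv m₁ h₁, conv m₂ h₂]


lemma tendsto_weight (m : ℕ) (h : SchwartzMap ℝ ℂ) {l : Filter ℝ}
    (hl : Tendsto (fun x : ℝ => |x|) l atTop) :
    Tendsto (fun x : ℝ => (1 + x ^ 2) ^ m * ‖h x‖) l (𝓝 0) := by
  obtain ⟨C, -, hC⟩ := h.decay (2 * m + 1) 0
  have hC' : ∀ x : ℝ, |x| ^ (2 * m + 1) * ‖h x‖ ≤ C := by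
    intro x
    have := hC x
    simpa [Real.norm_eq_abs] using this
  have hbound : ∀ x : ℝ, 1 ≤ |x| → (1 + x ^ 2) ^ m * ‖h x‖ ≤ 2 ^ m * C / |x| := by
    intro x hx
    have hxpos : (0:ℝ) < |x| := by linarith
    rw [le_div_iff₀ hxpos]
    have h1 : (1 + x ^ 2) ^ m ≤ 2 ^ m * |x| ^ (2 * m) := by
      have hx2 : (1:ℝ) ≤ x ^ 2 := by nlinarith [_root_.sq_abs x]
      calc (1 + x ^ 2) ^ m ≤ (2 * x ^ 2) ^ m := pow_le_pow_left₀ (by positivity) (by linarith) m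
        _ = 2 ^ m * |x| ^ (2 * m) := by rw [mul_pow, pow_mul, _root_.sq_abs]
    calc (1 + x ^ 2) ^ m * ‖h x‖ * |x| ≤ 2 ^ m * |x| ^ (2 * m) * ‖h x‖ * |x| := by
          exact mul_le_mul_of_nonneg_right
            (mul_le_mul_of_nonneg_right h1 (norm_nonneg _)) (abs_nonneg x)
      _ = 2 ^ m * (|x| ^ (2 * m + 1) * ‖h x‖) := by ring
      _ ≤ 2 ^ m * C := by
          have := hC' x
          nlinarith [pow_pos (by norm_num : (0:ℝ) < 2) m]
  have htend : Tendsto (fun x : ℝ => 2 ^ m * C / |x|) l (𝓝 0) := by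
    rw [show (0:ℝ) = 2 ^ m * C * 0 by ring]
    simp only [div_eq_mul_inv]
    exact (tendsto_inv_atTop_zero.comp hl).const_mul _
  refine squeeze_zero' ?_ ?_ htend
  · exact Eventually.of_forall fun x => by positivity
  · exact (hl.eventually_ge_atTop 1).mono fun x hx => hbound x hx

lemma tendsto_F (m : ℕ) (g1 g : SchwartzMap ℝ ℂ) {l : Filter ℝ}
    (hl : Tendsto (fun x : ℝ => |x|) l atTop) :
    Tendsto (fun x : ℝ => (((1 + x ^ 2) ^ m : ℝ) : ℂ) * (g1 x * (starRingEnd ℂ) (g x)))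
      l (𝓝 0) := by
  rw [tendsto_zero_iff_norm_tendsto_zero]
  set M := ‖g.toBoundedContinuousFunction‖ with hM
  have hMb : ∀ x, ‖g x‖ ≤ M := fun x => g.toBoundedContinuousFunction.norm_coe_le_norm x
  have hM0 : 0 ≤ M := norm_nonneg _
  have h0 : Tendsto (fun x : ℝ => M * ((1 + x ^ 2) ^ m * ‖g1 x‖)) l (𝓝 0) := by
    rw [show (0:ℝ) = M * 0 by ring]
    exact (tendsto_weight m g1 hl).const_mul M
  refine squeeze_zero (fun x => norm_nonneg _) (fun x => ?_) h0
  rw [norm_mul, norm_mul, Complex.norm_real, Real.norm_eq_abs,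
    _root_.abs_of_nonneg (by positivity : (0:ℝ) ≤ (1 + x ^ 2) ^ m)]
  have : ‖(starRingEnd ℂ) (g x)‖ = ‖g x‖ := RCLike.norm_conj _
  rw [this]
  have h1 : (0:ℝ) ≤ (1 + x ^ 2) ^ m := by positivity
  calc (1 + x ^ 2) ^ m * (‖g1 x‖ * ‖g x‖) = ((1 + x ^ 2) ^ m * ‖g1 x‖) * ‖g x‖ := by ring
    _ ≤ ((1 + x ^ 2) ^ m * ‖g1 x‖) * M := mul_le_mul_of_nonneg_left (hMb x) (by positivity)
    _ = M * ((1 + x ^ 2) ^ m * ‖g1 x‖) := by ring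

lemma integral_deriv_zero {F F' : ℝ → ℂ} (hderiv : ∀ x, HasDerivAt F (F' x) x)
    (hint : Integrable F') (htop : Tendsto F atTop (𝓝 0)) (hbot : Tendsto F atBot (𝓝 0)) :
    ∫ x : ℝ, F' x = 0 := by
  rw [← integral_Iic_add_Ioi (b := (0:ℝ)) hint.integrableOn hint.integrableOn]
  rw [integral_Iic_of_hasDerivAt_of_tendsto' (fun x _ => hderiv x) hint.integrableOn hbot,
    integral_Ioi_of_hasDerivAt_of_tendsto' (fun x _ => hderiv x) hint.integrableOn htop]
  ring


set_option maxHeartbeats 1000000 in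
lemma key (k : ℕ) (hk : 1 ≤ k) (g : SchwartzMap ℝ ℂ) :
    (∫ x : ℝ, (1 + x ^ 2) ^ k * ‖(SchwartzMap.derivCLM ℝ ℂ g) x‖ ^ 2) ≤
      2 * Real.sqrt (∫ x : ℝ, (1 + x ^ 2) ^ (k - 1) *
          ‖(SchwartzMap.derivCLM ℝ ℂ (SchwartzMap.derivCLM ℝ ℂ g)) x‖ ^ 2) *
        Real.sqrt (∫ x : ℝ, (1 + x ^ 2) ^ (k + 1) * ‖g x‖ ^ 2) +
      (4 * (k : ℝ) ^ 2) * ∫ x : ℝ, (1 + x ^ 2) ^ (k - 1) * ‖g x‖ ^ 2 := by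
  set g1 := SchwartzMap.derivCLM ℝ ℂ g with hg1def
  set g2 := SchwartzMap.derivCLM ℝ ℂ g1 with hg2def
  have hg1 : ∀ x, HasDerivAt (⇑g) (g1 x) x := fun x => by
    simpa [hg1def, SchwartzMap.derivCLM_apply] using
      (g.differentiable.differentiableAt).hasDerivAt
  have hg2 : ∀ x, HasDerivAt (⇑g1) (g2 x) x := fun x => by
    simpa [hg2def, SchwartzMap.derivCLM_apply] using
      (g1.differentiable.differentiableAt).hasDerivAt
  -- the three pieces of the derivative of F
  set A : ℝ → ℂ := fun x =>
    (((k : ℝ) * (1 + x ^ 2) ^ (k - 1) * (2 * x ^ 1) : ℝ) : ℂ) * (g1 x * (starRingEnd ℂ) (g x))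
    with hA
  set B : ℝ → ℂ := fun x =>
    (((1 + x ^ 2) ^ k : ℝ) : ℂ) * (g2 x * (starRingEnd ℂ) (g x)) with hB
  set Cc : ℝ → ℂ := fun x =>
    (((1 + x ^ 2) ^ k : ℝ) : ℂ) * (g1 x * (starRingEnd ℂ) (g1 x)) with hCc
  set F : ℝ → ℂ := fun x =>
    (((1 + x ^ 2) ^ k : ℝ) : ℂ) * (g1 x * (starRingEnd ℂ) (g x)) with hF
  have hderiv : ∀ x, HasDerivAt F (A x + (B x + Cc x)) x := by
    intro x
    have hphi : HasDerivAt (fun x : ℝ => (((1 + x ^ 2) ^ k : ℝ) : ℂ))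
        (((k : ℝ) * (1 + x ^ 2) ^ (k - 1) * (2 * x ^ 1) : ℝ) : ℂ) x := by
      exact HasDerivAt.ofReal_comp (((hasDerivAt_pow 2 x).const_add 1).pow k)
    have hconj : HasDerivAt (fun x : ℝ => (starRingEnd ℂ) (g x))
        ((starRingEnd ℂ) (g1 x)) x := by
      simpa [Complex.star_def] using (hg1 x).star
    have hH : HasDerivAt (fun x : ℝ => g1 x * (starRingEnd ℂ) (g x))
        (g2 x * (starRingEnd ℂ) (g x) + g1 x * (starRingEnd ℂ) (g1 x)) x :=
      (hg2 x).mul hconj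
    have := hphi.mul hH
    convert this using 1
    · rfl
    · rfl
    simp only [hA, hB, hCc]
    ring
  -- integrability of the pieces
  have contg : Continuous (⇑g) := g.continuous
  have contg1 : Continuous (⇑g1) := g1.continuous
  have contg2 : Continuous (⇑g2) := g2.continuous
  have measA : AEStronglyMeasurable A (volume : Measure ℝ) := by
    apply Continuous.aestronglyMeasurable
    exact (Complex.continuous_ofReal.comp (by continuity)).mul
      (contg1.mul (Complex.continuous_conj.comp contg))
  have measB : AEStronglyMeasurable B (volume : Measure ℝ) := by
    apply Continuous.aestronglyMeasurable
    exact (Complex.continuous_ofReal.comp (by continuity)).mul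
      (contg2.mul (Complex.continuous_conj.comp contg))
  have measC : AEStronglyMeasurable Cc (volume : Measure ℝ) := by
    apply Continuous.aestronglyMeasurable
    exact (Complex.continuous_ofReal.comp (by continuity)).mul
      (contg1.mul (Complex.continuous_conj.comp contg1))
  have normA : ∀ x, ‖A x‖ = ((k : ℝ) * (1 + x ^ 2) ^ (k - 1) * (2 * |x|)) * (‖g1 x‖ * ‖g x‖) := by
    intro x
    simp only [hA, norm_mul, Complex.norm_real, Real.norm_eq_abs, RCLike.norm_conj]
    rw [Nat.abs_cast, _root_.abs_of_nonneg (by positivity : (0:ℝ) ≤ (1 + x ^ 2) ^ (k - 1)),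
      pow_one, _root_.abs_two]
  have normB : ∀ x, ‖B x‖ = (1 + x ^ 2) ^ k * (‖g2 x‖ * ‖g x‖) := by
    intro x
    simp only [hB, norm_mul, Complex.norm_real, Real.norm_eq_abs, RCLike.norm_conj]
    rw [_root_.abs_of_nonneg (by positivity : (0:ℝ) ≤ (1 + x ^ 2) ^ k)]
  have normC : ∀ x, ‖Cc x‖ = (1 + x ^ 2) ^ k * (‖g1 x‖ * ‖g1 x‖) := by
    intro x
    simp only [hCc, norm_mul, Complex.norm_real, Real.norm_eq_abs, RCLike.norm_conj]
    rw [_root_.abs_of_nonneg (by positivity : (0:ℝ) ≤ (1 + x ^ 2) ^ k)]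
  have habs_le : ∀ x : ℝ, |x| ≤ Real.sqrt (1 + x ^ 2) := by
    intro x
    rw [← Real.sqrt_sq_eq_abs]
    exact Real.sqrt_le_sqrt (by nlinarith)
  have hpowk : ∀ x : ℝ, (1 + x ^ 2) ^ (k - 1) * (1 + x ^ 2) = (1 + x ^ 2) ^ k := by
    intro x
    rw [← pow_succ]
    congr 1
    omega
  have intA : Integrable A := by
    refine ((integrable_aux k g1 g).const_mul (2 * (k : ℝ))).mono' measA ?_
    refine Eventually.of_forall fun x => ?_
    rw [normA]
    have h1 : |x| ≤ 1 + x ^ 2 := by nlinarith [abs_nonneg x, _root_.sq_abs x]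
    have h2 : (0:ℝ) ≤ (1 + x ^ 2) ^ (k - 1) := by positivity
    have h3 : (0:ℝ) ≤ ‖g1 x‖ * ‖g x‖ := by positivity
    calc (k : ℝ) * (1 + x ^ 2) ^ (k - 1) * (2 * |x|) * (‖g1 x‖ * ‖g x‖)
        ≤ (k : ℝ) * (1 + x ^ 2) ^ (k - 1) * (2 * (1 + x ^ 2)) * (‖g1 x‖ * ‖g x‖) := by
          have hk0 : (0:ℝ) ≤ (k:ℝ) := Nat.cast_nonneg k
          gcongr
      _ = 2 * (k : ℝ) * ((1 + x ^ 2) ^ (k - 1) * (1 + x ^ 2) * (‖g1 x‖ * ‖g x‖)) := by ring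
      _ = 2 * (k : ℝ) * ((1 + x ^ 2) ^ k * (‖g1 x‖ * ‖g x‖)) := by rw [hpowk]
  have intB : Integrable B := by
    refine (integrable_aux k g2 g).mono' measB ?_
    exact Eventually.of_forall fun x => le_of_eq (normB x)
  have intC : Integrable Cc := by
    refine (integrable_aux k g1 g1).mono' measC ?_
    exact Eventually.of_forall fun x => le_of_eq (normC x)
  have hzero : (∫ x : ℝ, (A x + (B x + Cc x))) = 0 :=
    integral_deriv_zero hderiv (intA.add (intB.add intC))
      (tendsto_F k g1 g tendsto_abs_atTop_atTop) (tendsto_F k g1 g tendsto_abs_atBot_atTop)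
  have hsplit : (∫ x : ℝ, A x) + ((∫ x : ℝ, B x) + (∫ x : ℝ, Cc x)) = 0 := by
    rw [integral_add (f := A) (g := fun x => B x + Cc x) intA (intB.add intC),
      integral_add intB intC] at hzero
    exact hzero
  -- the LHS equals the real part of ∫ Cc
  have hIAeq : (∫ x : ℝ, (1 + x ^ 2) ^ k * ‖g1 x‖ ^ 2) = (∫ x : ℝ, Cc x).re := by
    rw [show (∫ x : ℝ, Cc x).re = RCLike.re (∫ x : ℝ, Cc x) from rfl, ← integral_re intC]
    refine integral_congr_ae (Eventually.of_forall fun x => ?_)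
    simp only [hCc, Complex.mul_conj, RCLike.re_to_complex, ← Complex.ofReal_mul]
    rw [Complex.ofReal_re, Complex.normSq_eq_norm_sq]
  set IA := ∫ x : ℝ, (1 + x ^ 2) ^ k * ‖g1 x‖ ^ 2 with hIAdef
  set IB1 := ∫ x : ℝ, (1 + x ^ 2) ^ (k - 1) * ‖g2 x‖ ^ 2 with hIB1def
  set IB2 := ∫ x : ℝ, (1 + x ^ 2) ^ (k + 1) * ‖g x‖ ^ 2 with hIB2def
  set IC := ∫ x : ℝ, (1 + x ^ 2) ^ (k - 1) * ‖g x‖ ^ 2 with hICdef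
  have hIA0 : 0 ≤ IA := integral_nonneg fun x => by positivity
  have hIB10 : 0 ≤ IB1 := integral_nonneg fun x => by positivity
  have hIB20 : 0 ≤ IB2 := integral_nonneg fun x => by positivity
  have hIC0 : 0 ≤ IC := integral_nonneg fun x => by positivity
  -- main estimate : IA ≤ ∫‖A‖ + ∫‖B‖
  have step1 : IA ≤ (∫ x : ℝ, ‖A x‖) + (∫ x : ℝ, ‖B x‖) := by
    have h1 : (∫ x : ℝ, Cc x) = -(∫ x : ℝ, A x) - (∫ x : ℝ, B x) := by
      linear_combination hsplit
    have h2 : IA = (-(∫ x : ℝ, A x) - (∫ x : ℝ, B x)).re := by rw [hIAeq, h1]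
    rw [h2]
    have h3 : (-(∫ x : ℝ, A x) - (∫ x : ℝ, B x)).re
        = -(∫ x : ℝ, A x).re - (∫ x : ℝ, B x).re := by simp
    rw [h3]
    have h4 : -(∫ x : ℝ, A x).re ≤ ‖∫ x : ℝ, A x‖ := by
      refine le_trans (neg_le_abs _) ?_
      exact Complex.abs_re_le_norm _
    have h5 : -(∫ x : ℝ, B x).re ≤ ‖∫ x : ℝ, B x‖ := by
      refine le_trans (neg_le_abs _) ?_
      exact Complex.abs_re_le_norm _
    have h6 := norm_integral_le_integral_norm A (μ := (volume : Measure ℝ))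
    have h7 := norm_integral_le_integral_norm B (μ := (volume : Measure ℝ))
    linarith
  -- bound ∫‖B‖ by Hölder
  have boundB : (∫ x : ℝ, ‖B x‖) ≤ Real.sqrt IB1 * Real.sqrt IB2 := by
    have heq : (∫ x : ℝ, ‖B x‖) = ∫ x : ℝ,
        (Real.sqrt (1 + x ^ 2) ^ (k - 1) * ‖g2 x‖) * (Real.sqrt (1 + x ^ 2) ^ (k + 1) * ‖g x‖) := by
      refine integral_congr_ae (Eventually.of_forall fun x => ?_)
      simp only [normB x]
      have : Real.sqrt (1 + x ^ 2) ^ (k - 1) * Real.sqrt (1 + x ^ 2) ^ (k + 1)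
          = (1 + x ^ 2) ^ k := by
        rw [← pow_add, show (k - 1) + (k + 1) = 2 * k by omega, pow_mul,
          Real.sq_sqrt (by positivity)]
      calc (1 + x ^ 2) ^ k * (‖g2 x‖ * ‖g x‖)
          = (Real.sqrt (1 + x ^ 2) ^ (k - 1) * Real.sqrt (1 + x ^ 2) ^ (k + 1)) *
            (‖g2 x‖ * ‖g x‖) := by rw [this]
        _ = _ := by ring
    rw [heq]
    exact hoelder (k - 1) (k + 1) g2 g
  -- bound ∫‖A‖ by Hölder after pointwise bound
  have boundA : (∫ x : ℝ, ‖A x‖) ≤ 2 * (k : ℝ) * (Real.sqrt IA * Real.sqrt IC) := by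
    have hrhs_int : Integrable (fun x : ℝ =>
        2 * (k : ℝ) * ((Real.sqrt (1 + x ^ 2) ^ k * ‖g1 x‖) *
          (Real.sqrt (1 + x ^ 2) ^ (k - 1) * ‖g x‖))) := by
      refine ((integrable_aux k g1 g).const_mul (2 * (k : ℝ))).mono'
        (Continuous.aestronglyMeasurable (by fun_prop)) ?_
      refine Eventually.of_forall fun x => ?_
      have hs0 : (0:ℝ) ≤ Real.sqrt (1 + x ^ 2) := Real.sqrt_nonneg _
      have h1 : Real.sqrt (1 + x ^ 2) ^ k * Real.sqrt (1 + x ^ 2) ^ (k - 1)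
          ≤ (1 + x ^ 2) ^ k := by
        rw [← pow_add]
        calc Real.sqrt (1 + x ^ 2) ^ (k + (k - 1)) ≤ Real.sqrt (1 + x ^ 2) ^ (2 * k) := by
              apply pow_le_pow_right₀ ?_ (by omega)
              have h1s : Real.sqrt 1 ≤ Real.sqrt (1 + x ^ 2) :=
                Real.sqrt_le_sqrt (by nlinarith)
              simpa using h1s
          _ = (1 + x ^ 2) ^ k := by rw [pow_mul, Real.sq_sqrt (by positivity)]
      rw [Real.norm_eq_abs, _root_.abs_of_nonneg (by positivity)]
      calc 2 * (k : ℝ) * ((Real.sqrt (1 + x ^ 2) ^ k * ‖g1 x‖) *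
            (Real.sqrt (1 + x ^ 2) ^ (k - 1) * ‖g x‖))
          = 2 * (k : ℝ) * ((Real.sqrt (1 + x ^ 2) ^ k * Real.sqrt (1 + x ^ 2) ^ (k - 1)) *
            (‖g1 x‖ * ‖g x‖)) := by ring
        _ ≤ 2 * (k : ℝ) * ((1 + x ^ 2) ^ k * (‖g1 x‖ * ‖g x‖)) := by
            have hk0 : (0:ℝ) ≤ (k:ℝ) := Nat.cast_nonneg k
            gcongr
    have hpoint : ∀ x : ℝ, ‖A x‖ ≤
        2 * (k : ℝ) * ((Real.sqrt (1 + x ^ 2) ^ k * ‖g1 x‖) *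
          (Real.sqrt (1 + x ^ 2) ^ (k - 1) * ‖g x‖)) := by
      intro x
      rw [normA]
      set s := Real.sqrt (1 + x ^ 2) with hs
      have hs0 : (0:ℝ) ≤ s := Real.sqrt_nonneg _
      have hs2 : s ^ 2 = 1 + x ^ 2 := Real.sq_sqrt (by positivity)
      have e1 : (1 + x ^ 2) ^ (k - 1) = s ^ (2 * (k - 1)) := by
        rw [pow_mul, hs2]
      have e2 : s ^ k * s ^ (k - 1) = s ^ (2 * (k - 1)) * s := by
        rw [← pow_succ, ← pow_add]
        congr 1
        omega
      have hxs : |x| ≤ s := habs_le x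
      calc (k : ℝ) * (1 + x ^ 2) ^ (k - 1) * (2 * |x|) * (‖g1 x‖ * ‖g x‖)
          ≤ (k : ℝ) * (1 + x ^ 2) ^ (k - 1) * (2 * s) * (‖g1 x‖ * ‖g x‖) := by
            have hk0 : (0:ℝ) ≤ (k:ℝ) := Nat.cast_nonneg k
            have h2 : (0:ℝ) ≤ (1 + x ^ 2) ^ (k - 1) := by positivity
            gcongr
        _ = 2 * (k : ℝ) * ((s ^ (2 * (k - 1)) * s) * (‖g1 x‖ * ‖g x‖)) := by rw [e1]; ring
        _ = 2 * (k : ℝ) * ((s ^ k * ‖g1 x‖) * (s ^ (k - 1) * ‖g x‖)) := by rw [← e2]; ring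
    calc (∫ x : ℝ, ‖A x‖)
        ≤ ∫ x : ℝ, 2 * (k : ℝ) * ((Real.sqrt (1 + x ^ 2) ^ k * ‖g1 x‖) *
            (Real.sqrt (1 + x ^ 2) ^ (k - 1) * ‖g x‖)) :=
          integral_mono intA.norm hrhs_int hpoint
      _ = 2 * (k : ℝ) * ∫ x : ℝ, (Real.sqrt (1 + x ^ 2) ^ k * ‖g1 x‖) *
            (Real.sqrt (1 + x ^ 2) ^ (k - 1) * ‖g x‖) := integral_const_mul _ _
      _ ≤ 2 * (k : ℝ) * (Real.sqrt IA * Real.sqrt IC) := by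
          have := hoelder k (k - 1) g1 g
          have hk0 : (0:ℝ) ≤ (k:ℝ) := Nat.cast_nonneg k
          have h2 : (0:ℝ) ≤ 2 * (k:ℝ) := by positivity
          exact mul_le_mul_of_nonneg_left this h2
  -- AM–GM and conclusion
  have amgm : 2 * (k : ℝ) * (Real.sqrt IA * Real.sqrt IC) ≤
      IA / 2 + 2 * (k : ℝ) ^ 2 * IC := by
    nlinarith [sq_nonneg (Real.sqrt IA - 2 * (k : ℝ) * Real.sqrt IC),
      Real.sq_sqrt hIA0, Real.sq_sqrt hIC0, Real.sqrt_nonneg IA, Real.sqrt_nonneg IC,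
      Nat.cast_nonneg (α := ℝ) k]
  have hfinal : IA ≤ 2 * (Real.sqrt IB1 * Real.sqrt IB2) + 4 * (k : ℝ) ^ 2 * IC := by
    linarith
  calc IA ≤ 2 * (Real.sqrt IB1 * Real.sqrt IB2) + 4 * (k : ℝ) ^ 2 * IC := hfinal
    _ = 2 * Real.sqrt IB1 * Real.sqrt IB2 + 4 * (k : ℝ) ^ 2 * IC := by ring


lemma exists_schwartz_iteratedDeriv (n : ℕ) (f : SchwartzMap ℝ ℂ) :
    ∃ g : SchwartzMap ℝ ℂ, ⇑g = iteratedDeriv n (⇑f) := by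
  induction n with
  | zero => exact ⟨f, by simp [iteratedDeriv_zero]⟩
  | succ n ih =>
    obtain ⟨g, hg⟩ := ih
    refine ⟨SchwartzMap.derivCLM ℝ ℂ g, ?_⟩
    ext x
    rw [iteratedDeriv_succ, ← hg]
    exact SchwartzMap.derivCLM_apply ℝ g x


end WIBP

/-- **Lemma 2.5, second inequality.** For integers `j, k ≥ 1` there is `c = c(k,j) > 0`
such that for every Schwartz `f`,
`‖⟨x⟩^k ∂_x^j f‖₂² ≤ c ‖⟨x⟩^{k-1} ∂_x^{j+1} f‖₂ ‖⟨x⟩^{k+1} ∂_x^{j-1} f‖₂ + c ‖⟨x⟩^{k-1} ∂_x^{j-1} f‖₂²`. -/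
theorem weighted_interpolation_by_parts_second (j k : ℕ) (hj : 1 ≤ j) (hk : 1 ≤ k) :
    ∃ c : ℝ, 0 < c ∧ ∀ f : SchwartzMap ℝ ℂ,
      (∫ x : ℝ, ‖(Real.sqrt (1 + x ^ 2) ^ k : ℝ) • iteratedDeriv j (⇑f) x‖ ^ 2) ≤
        c * Real.sqrt (∫ x : ℝ,
            ‖(Real.sqrt (1 + x ^ 2) ^ (k - 1) : ℝ) • iteratedDeriv (j + 1) (⇑f) x‖ ^ 2) *
          Real.sqrt (∫ x : ℝ,
            ‖(Real.sqrt (1 + x ^ 2) ^ (k + 1) : ℝ) • iteratedDeriv (j - 1) (⇑f) x‖ ^ 2) +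
        c * ∫ x : ℝ,
          ‖(Real.sqrt (1 + x ^ 2) ^ (k - 1) : ℝ) • iteratedDeriv (j - 1) (⇑f) x‖ ^ 2 := by
  refine ⟨4 * (k : ℝ) ^ 2, by positivity, fun f => ?_⟩
  obtain ⟨m, rfl⟩ : ∃ m, j = m + 1 := ⟨j - 1, (Nat.succ_pred_eq_of_pos hj).symm⟩
  obtain ⟨g, hg⟩ := WIBP.exists_schwartz_iteratedDeriv m f
  have hd1 : iteratedDeriv (m + 1) (⇑f) = ⇑(SchwartzMap.derivCLM ℝ ℂ g) := by
    ext x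
    rw [iteratedDeriv_succ, ← hg]
    exact (SchwartzMap.derivCLM_apply ℝ g x).symm
  have hd2 : iteratedDeriv (m + 1 + 1) (⇑f) =
      ⇑(SchwartzMap.derivCLM ℝ ℂ (SchwartzMap.derivCLM ℝ ℂ g)) := by
    ext x
    rw [iteratedDeriv_succ, hd1]
    exact (SchwartzMap.derivCLM_apply ℝ (SchwartzMap.derivCLM ℝ ℂ g) x).symm
  have hsmul : ∀ (n : ℕ) (v : ℂ) (x : ℝ),
      ‖(Real.sqrt (1 + x ^ 2) ^ n : ℝ) • v‖ ^ 2 = (1 + x ^ 2) ^ n * ‖v‖ ^ 2 := by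
    intro n v x
    rw [norm_smul, mul_pow, Real.norm_eq_abs, _root_.abs_of_nonneg (by positivity),
      WIBP.sqrt_pow_sq]
  simp only [hd1, hd2, Nat.add_sub_cancel, ← hg, hsmul]
  have h2le : (2 : ℝ) ≤ 4 * (k : ℝ) ^ 2 := by
    have : (1:ℝ) ≤ (k:ℝ) := by exact_mod_cast hk
    nlinarith
  have hsq1 : (0:ℝ) ≤ Real.sqrt (∫ x : ℝ, (1 + x ^ 2) ^ (k - 1) *
      ‖(SchwartzMap.derivCLM ℝ ℂ (SchwartzMap.derivCLM ℝ ℂ g)) x‖ ^ 2) := Real.sqrt_nonneg _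
  have hsq2 : (0:ℝ) ≤ Real.sqrt (∫ x : ℝ, (1 + x ^ 2) ^ (k + 1) * ‖g x‖ ^ 2) :=
    Real.sqrt_nonneg _
  calc (∫ x : ℝ, (1 + x ^ 2) ^ k * ‖(SchwartzMap.derivCLM ℝ ℂ g) x‖ ^ 2)
      ≤ 2 * Real.sqrt (∫ x : ℝ, (1 + x ^ 2) ^ (k - 1) *
            ‖(SchwartzMap.derivCLM ℝ ℂ (SchwartzMap.derivCLM ℝ ℂ g)) x‖ ^ 2) *
          Real.sqrt (∫ x : ℝ, (1 + x ^ 2) ^ (k + 1) * ‖g x‖ ^ 2) +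
        (4 * (k : ℝ) ^ 2) * ∫ x : ℝ, (1 + x ^ 2) ^ (k - 1) * ‖g x‖ ^ 2 := WIBP.key k hk g
    _ ≤ _ := by
        gcongr ?_ + _
        have := mul_le_mul_of_nonneg_right (mul_le_mul_of_nonneg_right h2le hsq1) hsq2
        linarith
end

section
/- (Lemma 2.5, third inequality.) For all integers j, k ≥ 1 there exists c = c(k,j) > 0 such that for every Schwartz function f : ℝ → ℂ, ‖⟨x⟩^k ∂_x^j f‖₂² ≤ c ‖⟨x⟩^{k+1} ∂_x^{j+1} f‖₂ · ‖⟨x⟩^{k-1} ∂_x^{j-1} f‖₂ + c ‖⟨x⟩^{k-1} ∂_x^{j-1} f‖₂². -/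
open MeasureTheory Filter Topology

namespace WIBPaux

lemma poly_bound (m : ℕ) (x : ℝ) : (1 + x ^ 2) ^ m ≤ 2 ^ m * (1 + |x| ^ (2 * m)) := by
  have habs : (0:ℝ) ≤ |x| ^ (2*m) := by positivity
  have h2m : (0:ℝ) < 2 ^ m := by positivity
  rcases le_total (x ^ 2) 1 with h | h
  · have h2 : (1 + x ^ 2) ^ m ≤ 2 ^ m := pow_le_pow_left₀ (by positivity) (by linarith) m
    nlinarith
  · have h2 : (1 + x ^ 2) ^ m ≤ (2 * x ^ 2) ^ m := pow_le_pow_left₀ (by positivity) (by linarith) m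
    have h3 : (2 * x ^ 2 : ℝ) ^ m = 2 ^ m * |x| ^ (2 * m) := by
      rw [mul_pow, pow_mul, _root_.sq_abs]
    nlinarith

lemma poly_bound' (m : ℕ) {x : ℝ} (hx : 1 ≤ |x|) : (1 + x ^ 2) ^ m ≤ 2 ^ m * |x| ^ (2 * m) := by
  have h1 : 1 ≤ x ^ 2 := by nlinarith [_root_.sq_abs x]
  have h2 : (1 + x ^ 2) ^ m ≤ (2 * x ^ 2) ^ m := pow_le_pow_left₀ (by positivity) (by linarith) m
  have h3 : (2 * x ^ 2 : ℝ) ^ m = 2 ^ m * |x| ^ (2 * m) := by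
    rw [mul_pow, pow_mul, _root_.sq_abs]
  linarith

lemma cont_weight (m : ℕ) (g h : SchwartzMap ℝ ℂ) :
    Continuous (fun x : ℝ => (1 + x ^ 2) ^ m * (‖g x‖ * ‖h x‖)) :=
  ((continuous_const.add (continuous_pow 2)).pow m).mul
    (g.continuous.norm.mul h.continuous.norm)

lemma integrable_weight (m : ℕ) (g h : SchwartzMap ℝ ℂ) :
    Integrable (fun x : ℝ => (1 + x ^ 2) ^ m * (‖g x‖ * ‖h x‖)) := by
  set M := SchwartzMap.seminorm ℝ 0 0 h with hMdef
  have hM : ∀ x, ‖h x‖ ≤ M := fun x => SchwartzMap.norm_le_seminorm ℝ h x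
  have hM0 : 0 ≤ M := apply_nonneg _ _
  have hint : Integrable (fun x : ℝ =>
      2 ^ m * M * ‖g x‖ + 2 ^ m * M * (‖x‖ ^ (2*m) * ‖g x‖)) :=
    ((g.integrable (μ := volume)).norm.const_mul _).add
      ((g.integrable_pow_mul volume (2*m)).const_mul _)
  apply hint.mono' (cont_weight m g h).aestronglyMeasurable
  filter_upwards with x
  have hgx := norm_nonneg (g x)
  have hhx := norm_nonneg (h x)
  have habs : (0:ℝ) ≤ |x| ^ (2*m) := by positivity
  rw [Real.norm_of_nonneg (by positivity), Real.norm_eq_abs]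
  have step : (1 + x ^ 2) ^ m * (‖g x‖ * ‖h x‖)
      ≤ (2 ^ m * (1 + |x| ^ (2 * m))) * (‖g x‖ * M) := by
    apply mul_le_mul (poly_bound m x) (by nlinarith [hM x]) (by positivity) (by positivity)
  nlinarith [step]

lemma tendsto_weight (m : ℕ) (g h : SchwartzMap ℝ ℂ) :
    Tendsto (fun x : ℝ => (1 + x ^ 2) ^ m * (‖g x‖ * ‖h x‖)) (cocompact ℝ) (𝓝 0) := by
  set C := SchwartzMap.seminorm ℝ (2*m) 0 g with hCdef
  have hC0 : (0:ℝ) ≤ C := apply_nonneg _ _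
  have hbig : ∀ᶠ x : ℝ in cocompact ℝ, 1 ≤ |x| := by
    rw [cocompact_eq_atBot_atTop, eventually_sup]
    constructor
    · filter_upwards [eventually_le_atBot (-1 : ℝ)] with x hx
      rw [abs_of_nonpos (by linarith)]; linarith
    · filter_upwards [eventually_ge_atTop (1 : ℝ)] with x hx
      rw [abs_of_nonneg (by linarith)]; linarith
  have hlim : Tendsto (fun x : ℝ => 2 ^ m * C * ‖h x‖) (cocompact ℝ) (𝓝 0) := by
    have := (zero_at_infty (h : SchwartzMap ℝ ℂ)).norm
    simpa using this.const_mul (2 ^ m * C)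
  apply squeeze_zero_norm' _ hlim
  filter_upwards [hbig] with x hx
  have hWn : (0:ℝ) ≤ (1 + x ^ 2) ^ m * (‖g x‖ * ‖h x‖) := by positivity
  rw [Real.norm_of_nonneg hWn]
  have hbound : |x| ^ (2*m) * ‖g x‖ ≤ C := by
    simpa [hCdef, Real.norm_eq_abs] using SchwartzMap.norm_pow_mul_le_seminorm ℝ g (2*m) x
  have step1 : (1 + x ^ 2) ^ m * (‖g x‖ * ‖h x‖) ≤ (2 ^ m * |x| ^ (2*m)) * (‖g x‖ * ‖h x‖) :=
    mul_le_mul_of_nonneg_right (poly_bound' m hx) (by positivity)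
  have step2 : (2:ℝ) ^ m * (|x| ^ (2*m) * ‖g x‖) * ‖h x‖ ≤ 2 ^ m * C * ‖h x‖ := by
    apply mul_le_mul_of_nonneg_right _ (norm_nonneg _)
    exact mul_le_mul_of_nonneg_left hbound (by positivity)
  nlinarith [step1, step2]

lemma coe_iter (f : SchwartzMap ℝ ℂ) :
    ∀ n : ℕ, ⇑((SchwartzMap.derivCLM ℝ ℂ)^[n] f) = iteratedDeriv n (⇑f)
  | 0 => by simp
  | (n+1) => by
    rw [Function.iterate_succ_apply', iteratedDeriv_succ, ← coe_iter f n]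
    funext x
    exact SchwartzMap.derivCLM_apply ℝ _ x

lemma schwartz_hasDerivAt (g : SchwartzMap ℝ ℂ) (x : ℝ) :
    HasDerivAt (⇑g) (SchwartzMap.derivCLM ℝ ℂ g x) x := by
  have := ((g.smooth 1).differentiable (by norm_num)).differentiableAt (x := x)
  simpa [SchwartzMap.derivCLM_apply] using this.hasDerivAt

lemma sq_weight (m : ℕ) (x r : ℝ) :
    (Real.sqrt (1+x^2) ^ m * r) ^ 2 = ((1+x^2) ^ m : ℝ) * (r * r) := by
  have hs2 : Real.sqrt (1+x^2) ^ 2 = 1+x^2 := Real.sq_sqrt (by positivity)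
  rw [mul_pow, ← pow_mul, mul_comm m 2, pow_mul, hs2]
  ring

lemma split_weight {m : ℕ} (hm : 1 ≤ m) (x r s : ℝ) :
    ((1+x^2) ^ m : ℝ) * (r * s)
      = (Real.sqrt (1+x^2) ^ (m+1) * r) * (Real.sqrt (1+x^2) ^ (m-1) * s) := by
  have hs2 : Real.sqrt (1+x^2) ^ 2 = 1+x^2 := Real.sq_sqrt (by positivity)
  have h : ((1+x^2) ^ m : ℝ) = Real.sqrt (1+x^2) ^ (m+1) * Real.sqrt (1+x^2) ^ (m-1) := by
    rw [← pow_add, show m+1+(m-1) = 2*m by omega, pow_mul, hs2]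
  rw [h]; ring

lemma holder2 (p q : ℝ → ℝ) (hcp : Continuous p) (hcq : Continuous q)
    (hp : ∀ x, 0 ≤ p x) (hq : ∀ x, 0 ≤ q x)
    (hp2 : Integrable (fun x => p x ^ 2)) (hq2 : Integrable (fun x => q x ^ 2)) :
    ∫ x : ℝ, p x * q x ≤ Real.sqrt (∫ x : ℝ, p x ^ 2) * Real.sqrt (∫ x : ℝ, q x ^ 2) := by
  have hpm : MemLp p (ENNReal.ofReal 2) volume := by
    rw [show ENNReal.ofReal 2 = 2 by norm_num]
    exact (memLp_two_iff_integrable_sq hcp.aestronglyMeasurable).2 hp2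
  have hqm : MemLp q (ENNReal.ofReal 2) volume := by
    rw [show ENNReal.ofReal 2 = 2 by norm_num]
    exact (memLp_two_iff_integrable_sq hcq.aestronglyMeasurable).2 hq2
  have h := integral_mul_le_Lp_mul_Lq_of_nonneg Real.HolderConjugate.two_two (Filter.Eventually.of_forall hp) (Filter.Eventually.of_forall hq)
      hpm hqm
  have e2 : ∀ g : ℝ → ℝ, (∫ x : ℝ, g x ^ (2:ℝ)) = ∫ x : ℝ, g x ^ 2 := by
    intro g
    apply integral_congr_ae
    filter_upwards with x
    rw [show (2:ℝ) = ((2:ℕ):ℝ) by norm_num, Real.rpow_natCast]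
  rw [e2 p, e2 q] at h
  rw [Real.sqrt_eq_rpow, Real.sqrt_eq_rpow]
  exact h

end WIBPaux

open WIBPaux

set_option maxHeartbeats 2000000 in
/-- **Lemma 2.5, third inequality.** For integers `j, k ≥ 1` there is `c = c(k,j) > 0`
such that for every Schwartz `f`,
`‖⟨x⟩^k ∂_x^j f‖₂² ≤ c ‖⟨x⟩^{k+1} ∂_x^{j+1} f‖₂ ‖⟨x⟩^{k-1} ∂_x^{j-1} f‖₂ + c ‖⟨x⟩^{k-1} ∂_x^{j-1} f‖₂²`. -/
theorem weighted_interpolation_by_parts_third (j k : ℕ) (hj : 1 ≤ j) (hk : 1 ≤ k) :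
    ∃ c : ℝ, 0 < c ∧ ∀ f : SchwartzMap ℝ ℂ,
      (∫ x : ℝ, ‖(Real.sqrt (1 + x ^ 2) ^ k : ℝ) • iteratedDeriv j (⇑f) x‖ ^ 2) ≤
        c * Real.sqrt (∫ x : ℝ,
            ‖(Real.sqrt (1 + x ^ 2) ^ (k + 1) : ℝ) • iteratedDeriv (j + 1) (⇑f) x‖ ^ 2) *
          Real.sqrt (∫ x : ℝ,
            ‖(Real.sqrt (1 + x ^ 2) ^ (k - 1) : ℝ) • iteratedDeriv (j - 1) (⇑f) x‖ ^ 2) +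
        c * ∫ x : ℝ,
          ‖(Real.sqrt (1 + x ^ 2) ^ (k - 1) : ℝ) • iteratedDeriv (j - 1) (⇑f) x‖ ^ 2 := by
  have hk1 : (1:ℝ) ≤ (k:ℝ) := by exact_mod_cast hk
  refine ⟨4 * (k:ℝ)^2, by nlinarith, fun f => ?_⟩
  obtain ⟨U, hU⟩ : ∃ U : SchwartzMap ℝ ℂ, U = (SchwartzMap.derivCLM ℝ ℂ)^[j] f := ⟨_, rfl⟩
  obtain ⟨V, hV⟩ : ∃ V : SchwartzMap ℝ ℂ, V = (SchwartzMap.derivCLM ℝ ℂ)^[j-1] f := ⟨_, rfl⟩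
  obtain ⟨W, hW⟩ : ∃ W : SchwartzMap ℝ ℂ, W = (SchwartzMap.derivCLM ℝ ℂ)^[j+1] f := ⟨_, rfl⟩
  have hUc : ⇑U = iteratedDeriv j (⇑f) := by rw [hU]; exact coe_iter f j
  have hVc : ⇑V = iteratedDeriv (j-1) (⇑f) := by rw [hV]; exact coe_iter f (j-1)
  have hWc : ⇑W = iteratedDeriv (j+1) (⇑f) := by rw [hW]; exact coe_iter f (j+1)
  have hVU : SchwartzMap.derivCLM ℝ ℂ V = U := by
    rw [hV, hU]
    conv_rhs => rw [show j = (j-1)+1 from (Nat.succ_pred_eq_of_pos hj).symm]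
    exact (Function.iterate_succ_apply' (⇑(SchwartzMap.derivCLM ℝ ℂ)) (j-1) f).symm
  have hUW : SchwartzMap.derivCLM ℝ ℂ U = W := by
    rw [hU, hW]
    exact (Function.iterate_succ_apply' (⇑(SchwartzMap.derivCLM ℝ ℂ)) j f).symm
  rw [← hUc, ← hVc, ← hWc]
  -- normalize the integrands
  have habs_sqrt : ∀ y : ℝ, |Real.sqrt y| = Real.sqrt y := fun y =>
    abs_of_nonneg (Real.sqrt_nonneg y)
  simp only [norm_smul, Real.norm_eq_abs, abs_pow, habs_sqrt]
  -- the three integration-by-parts pieces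
  set Fc : ℝ → ℂ := fun y => (((1+y^2)^k : ℝ) : ℂ) * (U y * star (V y)) with hFdef
  set G1 : ℝ → ℂ := fun x => (((2*k*x*(1+x^2)^(k-1) : ℝ)) : ℂ) * (U x * star (V x)) with hG1def
  set G2 : ℝ → ℂ := fun x => ((((1+x^2)^k : ℝ)) : ℂ) * (W x * star (V x)) with hG2def
  set G3 : ℝ → ℂ := fun x => ((((1+x^2)^k : ℝ)) : ℂ) * (U x * star (U x)) with hG3def
  have hderiv : ∀ x, HasDerivAt Fc (G1 x + (G2 x + G3 x)) x := by
    intro x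
    have h0 : HasDerivAt (fun y : ℝ => 1 + y^2) (2*x) x := by
      simpa using ((hasDerivAt_pow 2 x).const_add 1)
    have hw : HasDerivAt (fun y : ℝ => (1 + y^2)^k) ((k:ℝ) * (1+x^2)^(k-1) * (2*x)) x := h0.pow k
    have hwC := hw.ofReal_comp
    have hUd : HasDerivAt (⇑U) (W x) x := by
      have := schwartz_hasDerivAt U x; rwa [hUW] at this
    have hVd : HasDerivAt (⇑V) (U x) x := by
      have := schwartz_hasDerivAt V x; rwa [hVU] at this
    have hVs : HasDerivAt (fun y => star (V y)) (star (U x)) x := hVd.star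
    have hfull := hwC.mul (hUd.mul hVs)
    simp only [hFdef, hG1def, hG2def, hG3def]
    refine hfull.congr_deriv ?_
    push_cast [Pi.mul_apply]
    ring
  have hiG1 : Integrable G1 := by
    apply ((integrable_weight k U V).const_mul (2*(k:ℝ))).mono'
    · apply Continuous.aestronglyMeasurable
      apply (Complex.continuous_ofReal.comp _).mul
        (U.continuous.mul (continuous_star.comp V.continuous))
      fun_prop
    · filter_upwards with x
      simp only [hG1def, norm_mul, Complex.norm_real, norm_star, Real.norm_eq_abs, abs_two,
        Nat.abs_cast, abs_of_nonneg (pow_nonneg (show (0:ℝ) ≤ 1+x^2 by positivity) (k-1))]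
      have hxb : |x| ≤ 1 + x^2 := by nlinarith [abs_nonneg x, _root_.sq_abs x]
      have hpow : ((1+x^2):ℝ)^(k-1) * (1+x^2) = (1+x^2)^k := by
        rw [← pow_succ, Nat.sub_add_cancel hk]
      have h1 : 2*(k:ℝ)*(|x|)*(1+x^2)^(k-1) ≤ 2*(k:ℝ)*((1+x^2)^k) := by
        calc 2*(k:ℝ)*(|x|)*(1+x^2)^(k-1) ≤ 2*(k:ℝ)*(1+x^2)*(1+x^2)^(k-1) := by gcongr
          _ = 2*(k:ℝ)*((1+x^2)^k) := by
              rw [mul_assoc, mul_comm (1+x^2) ((1+x^2)^(k-1)), hpow]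
      have h2 := mul_le_mul_of_nonneg_right h1
        (mul_nonneg (norm_nonneg (U x)) (norm_nonneg (V x)))
      exact le_trans (le_of_eq (by ring)) (le_trans h2 (le_of_eq (by ring)))
  have hiG2 : Integrable G2 := by
    apply (integrable_weight k W V).mono'
    · apply Continuous.aestronglyMeasurable
      apply (Complex.continuous_ofReal.comp _).mul
        (W.continuous.mul (continuous_star.comp V.continuous))
      fun_prop
    · filter_upwards with x
      simp only [hG2def, norm_mul, Complex.norm_real, norm_star, Real.norm_eq_abs,
        abs_of_nonneg (pow_nonneg (show (0:ℝ) ≤ 1+x^2 by positivity) k)]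
      exact le_rfl
  have hiG3 : Integrable G3 := by
    apply (integrable_weight k U U).mono'
    · apply Continuous.aestronglyMeasurable
      apply (Complex.continuous_ofReal.comp _).mul
        (U.continuous.mul (continuous_star.comp U.continuous))
      fun_prop
    · filter_upwards with x
      simp only [hG3def, norm_mul, Complex.norm_real, norm_star, Real.norm_eq_abs,
        abs_of_nonneg (pow_nonneg (show (0:ℝ) ≤ 1+x^2 by positivity) k)]
      exact le_rfl
  have hFnorm : ∀ x, ‖Fc x‖ ≤ (1+x^2)^k * (‖U x‖ * ‖V x‖) := by
    intro x
    simp only [hFdef, norm_mul, Complex.norm_real, norm_star, Real.norm_eq_abs,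
      abs_of_nonneg (pow_nonneg (show (0:ℝ) ≤ 1+x^2 by positivity) k)]
    exact le_rfl
  have hbot : Tendsto Fc atBot (𝓝 0) :=
    squeeze_zero_norm hFnorm ((tendsto_weight k U V).mono_left
      (by rw [cocompact_eq_atBot_atTop]; exact le_sup_left))
  have htop : Tendsto Fc atTop (𝓝 0) :=
    squeeze_zero_norm hFnorm ((tendsto_weight k U V).mono_left
      (by rw [cocompact_eq_atBot_atTop]; exact le_sup_right))
  have hIBP : (∫ x : ℝ, (G1 x + (G2 x + G3 x))) = 0 := by
    have h0 := integral_of_hasDerivAt_of_tendsto hderiv (hiG1.add (hiG2.add hiG3)) hbot htop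
    simpa using h0
  have h23 : Integrable (fun x : ℝ => G2 x + G3 x) volume := hiG2.add hiG3
  rw [integral_add hiG1 h23, integral_add hiG2 hiG3] at hIBP
  have hG3eq : (∫ x : ℝ, G3 x)
      = ((∫ x : ℝ, (Real.sqrt (1+x^2)^k * ‖U x‖)^2 : ℝ) : ℂ) := by
    have hpt : ∀ x : ℝ, G3 x = (((Real.sqrt (1+x^2)^k * ‖U x‖)^2 : ℝ) : ℂ) := by
      intro x
      simp only [hG3def]
      rw [RCLike.star_def, Complex.mul_conj, ← Complex.ofReal_mul]
      norm_cast
      rw [Complex.normSq_eq_norm_sq, sq_weight]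
      ring
    simp_rw [hpt]
    exact integral_ofReal
  -- pointwise bounds by sqrt-weighted products
  have hab_bound : ∀ x : ℝ, (Real.sqrt (1+x^2)^k * ‖U x‖) * (Real.sqrt (1+x^2)^(k-1) * ‖V x‖)
      ≤ ((1+x^2)^k : ℝ) * (‖U x‖ * ‖V x‖) := by
    intro x
    have hs2 : Real.sqrt (1+x^2) ^ 2 = 1+x^2 := Real.sq_sqrt (by positivity)
    have hs1 : 1 ≤ Real.sqrt (1+x^2) := by
      have h := Real.sqrt_le_sqrt (show (1:ℝ) ≤ 1+x^2 by nlinarith)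
      rwa [Real.sqrt_one] at h
    have h1 : Real.sqrt (1+x^2)^k * Real.sqrt (1+x^2)^(k-1) ≤ (1+x^2)^k := by
      rw [← pow_add, show ((1+x^2)^k : ℝ) = Real.sqrt (1+x^2)^(2*k) by rw [pow_mul, hs2]]
      exact pow_le_pow_right₀ hs1 (by omega)
    have := mul_le_mul_of_nonneg_right h1 (mul_nonneg (norm_nonneg (U x)) (norm_nonneg (V x)))
    exact le_trans (le_of_eq (by ring)) (le_trans this (le_of_eq (by ring)))
  have csq : Continuous (fun x : ℝ => Real.sqrt (1+x^2)) :=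
    Real.continuous_sqrt.comp (by fun_prop)
  have hiab : Integrable (fun x : ℝ =>
      (Real.sqrt (1+x^2)^k * ‖U x‖) * (Real.sqrt (1+x^2)^(k-1) * ‖V x‖)) := by
    apply (integrable_weight k U V).mono'
    · exact (((csq.pow k).mul U.continuous.norm).mul
        ((csq.pow (k-1)).mul V.continuous.norm)).aestronglyMeasurable
    · filter_upwards with x
      rw [Real.norm_of_nonneg (by positivity)]
      exact hab_bound x
  have hicb : Integrable (fun x : ℝ =>
      (Real.sqrt (1+x^2)^(k+1) * ‖W x‖) * (Real.sqrt (1+x^2)^(k-1) * ‖V x‖)) := by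
    apply (integrable_weight k W V).congr
    filter_upwards with x
    exact split_weight hk x (‖W x‖) (‖V x‖)
  -- bounds on the integrals of G1 and G2
  have hpt1 : ∀ x : ℝ, ‖G1 x‖ ≤ 2*(k:ℝ) *
      ((Real.sqrt (1+x^2)^k * ‖U x‖) * (Real.sqrt (1+x^2)^(k-1) * ‖V x‖)) := by
    intro x
    simp only [hG1def, norm_mul, Complex.norm_real, norm_star, Real.norm_eq_abs, abs_two,
      Nat.abs_cast, abs_of_nonneg (pow_nonneg (show (0:ℝ) ≤ 1+x^2 by positivity) (k-1))]
    have hs2 : Real.sqrt (1+x^2) ^ 2 = 1+x^2 := Real.sq_sqrt (by positivity)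
    have hxs : |x| ≤ Real.sqrt (1+x^2) := by
      rw [← Real.sqrt_sq_eq_abs]
      exact Real.sqrt_le_sqrt (by nlinarith)
    have hpow : ((1+x^2):ℝ)^(k-1) = Real.sqrt (1+x^2) ^ (2*(k-1)) := by
      rw [pow_mul, hs2]
    have hcomb : Real.sqrt (1+x^2) * Real.sqrt (1+x^2) ^ (2*(k-1))
        = Real.sqrt (1+x^2)^k * Real.sqrt (1+x^2)^(k-1) := by
      rw [← pow_succ', ← pow_add]
      congr 1
      omega
    have h := mul_le_mul_of_nonneg_right hxs
      (pow_nonneg (Real.sqrt_nonneg (1+x^2)) (2*(k-1)))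
    have hk0 : (0:ℝ) ≤ (k:ℝ) := Nat.cast_nonneg k
    have h1 : 2*(k:ℝ)*(|x|)*(1+x^2)^(k-1)
        ≤ 2*(k:ℝ)*(Real.sqrt (1+x^2)^k * Real.sqrt (1+x^2)^(k-1)) := by
      rw [hpow, ← hcomb]
      nlinarith [h]
    have h2 := mul_le_mul_of_nonneg_right h1
      (mul_nonneg (norm_nonneg (U x)) (norm_nonneg (V x)))
    exact le_trans (le_of_eq (by ring)) (le_trans h2 (le_of_eq (by ring)))
  have hpt2 : ∀ x : ℝ, ‖G2 x‖ ≤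
      (Real.sqrt (1+x^2)^(k+1) * ‖W x‖) * (Real.sqrt (1+x^2)^(k-1) * ‖V x‖) := by
    intro x
    simp only [hG2def, norm_mul, Complex.norm_real, norm_star, Real.norm_eq_abs,
      abs_of_nonneg (pow_nonneg (show (0:ℝ) ≤ 1+x^2 by positivity) k)]
    rw [← split_weight hk x (‖W x‖) (‖V x‖)]
  have hbG1 : ‖∫ x : ℝ, G1 x‖ ≤ 2*(k:ℝ) * ∫ x : ℝ,
      (Real.sqrt (1+x^2)^k * ‖U x‖) * (Real.sqrt (1+x^2)^(k-1) * ‖V x‖) := by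
    have h := norm_integral_le_of_norm_le (hiab.const_mul (2*(k:ℝ)))
      (Filter.Eventually.of_forall hpt1)
    rwa [integral_const_mul] at h
  have hbG2 : ‖∫ x : ℝ, G2 x‖ ≤ ∫ x : ℝ,
      (Real.sqrt (1+x^2)^(k+1) * ‖W x‖) * (Real.sqrt (1+x^2)^(k-1) * ‖V x‖) :=
    norm_integral_le_of_norm_le hicb (Filter.Eventually.of_forall hpt2)
  -- integrability of the squared weighted functions
  have hia2 : Integrable (fun x : ℝ => (Real.sqrt (1+x^2)^k * ‖U x‖)^2) :=
    (integrable_weight k U U).congr (Filter.Eventually.of_forall fun x => (sq_weight k x _).symm)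
  have hib2 : Integrable (fun x : ℝ => (Real.sqrt (1+x^2)^(k-1) * ‖V x‖)^2) :=
    (integrable_weight (k-1) V V).congr
      (Filter.Eventually.of_forall fun x => (sq_weight (k-1) x _).symm)
  have hic2 : Integrable (fun x : ℝ => (Real.sqrt (1+x^2)^(k+1) * ‖W x‖)^2) :=
    (integrable_weight (k+1) W W).congr
      (Filter.Eventually.of_forall fun x => (sq_weight (k+1) x _).symm)
  -- Cauchy-Schwarz
  have hold1 : (∫ x : ℝ, (Real.sqrt (1+x^2)^k * ‖U x‖) * (Real.sqrt (1+x^2)^(k-1) * ‖V x‖))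
      ≤ Real.sqrt (∫ x : ℝ, (Real.sqrt (1+x^2)^k * ‖U x‖)^2) *
        Real.sqrt (∫ x : ℝ, (Real.sqrt (1+x^2)^(k-1) * ‖V x‖)^2) :=
    holder2 _ _ ((csq.pow k).mul U.continuous.norm) ((csq.pow (k-1)).mul V.continuous.norm)
      (fun x => by positivity) (fun x => by positivity) hia2 hib2
  have hold2 : (∫ x : ℝ, (Real.sqrt (1+x^2)^(k+1) * ‖W x‖) * (Real.sqrt (1+x^2)^(k-1) * ‖V x‖))
      ≤ Real.sqrt (∫ x : ℝ, (Real.sqrt (1+x^2)^(k+1) * ‖W x‖)^2) *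
        Real.sqrt (∫ x : ℝ, (Real.sqrt (1+x^2)^(k-1) * ‖V x‖)^2) :=
    holder2 _ _ ((csq.pow (k+1)).mul W.continuous.norm) ((csq.pow (k-1)).mul V.continuous.norm)
      (fun x => by positivity) (fun x => by positivity) hic2 hib2
  -- assemble the main estimate
  set A2 := ∫ x : ℝ, (Real.sqrt (1+x^2)^k * ‖U x‖)^2 with hA2def
  set B2 := ∫ x : ℝ, (Real.sqrt (1+x^2)^(k-1) * ‖V x‖)^2 with hB2def
  set C2 := ∫ x : ℝ, (Real.sqrt (1+x^2)^(k+1) * ‖W x‖)^2 with hC2def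
  have hG3neg : (∫ x : ℝ, G3 x) = -(∫ x : ℝ, G1 x) - ∫ x : ℝ, G2 x := by
    linear_combination hIBP
  have hre : ∀ z : ℂ, z.re ≤ ‖z‖ := fun z => by
    simpa using le_trans (le_abs_self z.re) (Complex.abs_re_le_norm z)
  have hmain : A2 ≤ 2*(k:ℝ) * (Real.sqrt A2 * Real.sqrt B2) + Real.sqrt C2 * Real.sqrt B2 := by
    have e1 : A2 = (((A2 : ℝ)) : ℂ).re := by rw [Complex.ofReal_re]
    have e2 : A2 ≤ ‖-(∫ x : ℝ, G1 x) - ∫ x : ℝ, G2 x‖ := by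
      rw [e1, ← hG3eq, hG3neg]
      exact hre _
    have e3 : ‖-(∫ x : ℝ, G1 x) - ∫ x : ℝ, G2 x‖ ≤ ‖∫ x : ℝ, G1 x‖ + ‖∫ x : ℝ, G2 x‖ := by
      have := norm_sub_le (-(∫ x : ℝ, G1 x)) (∫ x : ℝ, G2 x)
      rwa [norm_neg] at this
    have e4 : ‖∫ x : ℝ, G1 x‖ + ‖∫ x : ℝ, G2 x‖
        ≤ 2*(k:ℝ) * (Real.sqrt A2 * Real.sqrt B2) + Real.sqrt C2 * Real.sqrt B2 := by
      apply add_le_add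
      · exact hbG1.trans (mul_le_mul_of_nonneg_left hold1 (by positivity))
      · exact hbG2.trans hold2
    linarith
  have hA2nn : 0 ≤ A2 := integral_nonneg fun x => sq_nonneg _
  have hB2nn : 0 ≤ B2 := integral_nonneg fun x => sq_nonneg _
  have hsa := Real.sq_sqrt hA2nn
  have hsb := Real.sq_sqrt hB2nn
  have hyoung : 4*(k:ℝ) * (Real.sqrt A2 * Real.sqrt B2) ≤ A2 + 4*(k:ℝ)^2 * B2 := by
    nlinarith [sq_nonneg (Real.sqrt A2 - 2*(k:ℝ)*Real.sqrt B2), hsa, hsb]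
  have hcs : 0 ≤ Real.sqrt C2 * Real.sqrt B2 :=
    mul_nonneg (Real.sqrt_nonneg C2) (Real.sqrt_nonneg B2)
  have hk2 : (1:ℝ) ≤ (k:ℝ)^2 := by nlinarith [hk1]
  have hstep : A2 ≤ 4*(k:ℝ)^2 * B2 + 2 * (Real.sqrt C2 * Real.sqrt B2) := by linarith
  have hlast : 2 * (Real.sqrt C2 * Real.sqrt B2)
      ≤ 4*(k:ℝ)^2 * (Real.sqrt C2 * Real.sqrt B2) := by nlinarith [hcs, hk2]
  calc A2 ≤ 4*(k:ℝ)^2 * B2 + 2 * (Real.sqrt C2 * Real.sqrt B2) := hstep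
    _ ≤ 4*(k:ℝ)^2 * B2 + 4*(k:ℝ)^2 * (Real.sqrt C2 * Real.sqrt B2) := by linarith
    _ = 4 * (k:ℝ)^2 * Real.sqrt C2 * Real.sqrt B2 + 4 * (k:ℝ)^2 * B2 := by ring
end

section
/- (Summed Sobolev embedding (3.16)/(a010).) There exists a universal constant C > 0 such that for every continuously differentiable function f : ℝ → ℂ, ∑_{j∈ℤ} sup_{x∈[j,j+1]} |f(x)| ≤ C ( ‖⟨x⟩ f‖₂ + ‖⟨x⟩ f'‖₂ ), where the right-hand side may be +∞. -/
open MeasureTheory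

section SSEAux

open Set ENNReal

/-- Pointwise bound by the averages over a unit interval. -/
lemma sse_loc_real (f : ℝ → ℂ) (hf : ContDiff ℝ 1 f) (a : ℝ) {x : ℝ}
    (hx : x ∈ Icc a (a + 1)) :
    ‖f x‖ ≤ (∫ y in Icc a (a + 1), ‖f y‖) + ∫ y in Icc a (a + 1), ‖deriv f y‖ := by
  have hfc : Continuous f := hf.continuous
  have hg : Continuous (deriv f) := hf.continuous_deriv le_rfl
  have hIf : IntegrableOn (fun y => ‖f y‖) (Icc a (a + 1)) volume :=
    (hfc.norm.continuousOn).integrableOn_Icc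
  have hIg : IntegrableOn (fun y => ‖deriv f y‖) (Icc a (a + 1)) volume :=
    (hg.norm.continuousOn).integrableOn_Icc
  set K := ∫ y in Icc a (a + 1), ‖deriv f y‖ with hKdef
  have hK : ∀ y ∈ Icc a (a + 1), ‖f x‖ ≤ ‖f y‖ + K := by
    intro y hy
    have hsub : f x - f y = ∫ t in y..x, deriv f t :=
      (intervalIntegral.integral_deriv_eq_sub
        (fun t _ => (hf.differentiable one_ne_zero).differentiableAt)
        (hg.intervalIntegrable y x)).symm
    have hb : ‖f x - f y‖ ≤ K := by
      rw [hsub]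
      refine (intervalIntegral.norm_integral_le_integral_norm_uIoc).trans ?_
      refine setIntegral_mono_set hIg ?_ ?_
      · exact Filter.Eventually.of_forall fun t => norm_nonneg _
      · exact HasSubset.Subset.eventuallyLE
          (uIoc_subset_uIcc.trans (uIcc_subset_Icc hy hx))
    calc ‖f x‖ = ‖f y + (f x - f y)‖ := by ring_nf
      _ ≤ ‖f y‖ + ‖f x - f y‖ := norm_add_le _ _
      _ ≤ ‖f y‖ + K := by linarith
  have hvol : volume.real (Icc a (a + 1)) = 1 := by
    rw [measureReal_def, Real.volume_Icc]; norm_num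
  have havg : ∫ (_ : ℝ) in Icc a (a + 1), ‖f x‖ ≤ ∫ y in Icc a (a + 1), (‖f y‖ + K) := by
    refine setIntegral_mono_on (integrableOn_const (ne_of_lt ?_))
      (hIf.add (integrableOn_const (ne_of_lt ?_))) measurableSet_Icc hK
    · rw [Real.volume_Icc]; exact ENNReal.ofReal_lt_top
    · rw [Real.volume_Icc]; exact ENNReal.ofReal_lt_top
  have hKint : IntegrableOn (fun _ : ℝ => K) (Icc a (a + 1)) volume := by
    refine integrableOn_const (ne_of_lt ?_)
    rw [Real.volume_Icc]; exact ENNReal.ofReal_lt_top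
  rw [setIntegral_const, hvol, one_smul, integral_add hIf hKint,
    setIntegral_const, hvol, one_smul] at havg
  linarith [havg]

/-- Local `ENNReal` sup bound by `L¹` norms on the interval. -/
lemma sse_loc (f : ℝ → ℂ) (hf : ContDiff ℝ 1 f) (a : ℝ) :
    (⨆ x ∈ Icc a (a + 1), (‖f x‖₊ : ℝ≥0∞)) ≤
      (∫⁻ y in Icc a (a + 1), ‖f y‖₊) + ∫⁻ y in Icc a (a + 1), ‖deriv f y‖₊ := by
  refine iSup₂_le fun x hx => ?_
  have h1 := sse_loc_real f hf a hx
  have e1 : ENNReal.ofReal (∫ y in Icc a (a + 1), ‖f y‖) = ∫⁻ y in Icc a (a + 1), ‖f y‖₊ :=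
    ofReal_integral_norm_eq_lintegral_enorm (hf.continuous.continuousOn.integrableOn_Icc)
  have e2 : ENNReal.ofReal (∫ y in Icc a (a + 1), ‖deriv f y‖)
      = ∫⁻ y in Icc a (a + 1), ‖deriv f y‖₊ :=
    ofReal_integral_norm_eq_lintegral_enorm
      ((hf.continuous_deriv le_rfl).continuousOn.integrableOn_Icc)
  calc (‖f x‖₊ : ℝ≥0∞) = ENNReal.ofReal ‖f x‖ := (ofReal_norm _).symm
    _ ≤ ENNReal.ofReal ((∫ y in Icc a (a + 1), ‖f y‖) + ∫ y in Icc a (a + 1), ‖deriv f y‖) :=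
        ENNReal.ofReal_le_ofReal h1
    _ ≤ _ := by rw [← e1, ← e2]; exact ENNReal.ofReal_add_le

/-- Cauchy–Schwarz on a unit interval. -/
lemma sse_cs (h : ℝ → ℝ≥0∞) (hm : Measurable h) (a : ℝ) :
    (∫⁻ y in Icc a (a + 1), h y) ≤ (∫⁻ y in Icc a (a + 1), h y ^ (2 : ℝ)) ^ (1/2 : ℝ) := by
  have hpq : Real.HolderConjugate 2 2 := Real.holderConjugate_iff.mpr ⟨one_lt_two, by norm_num⟩
  have := ENNReal.lintegral_mul_le_Lp_mul_Lq (volume.restrict (Icc a (a + 1))) hpq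
    hm.aemeasurable aemeasurable_const (g := fun _ => (1 : ℝ≥0∞))
  simpa [Real.volume_Icc, ENNReal.one_rpow, lintegral_const,
    Measure.restrict_apply_univ] using this

/-- Weight comparison on a unit interval. -/
lemma sse_weight (j : ℤ) {x : ℝ} (hx : x ∈ Icc (j : ℝ) ((j : ℝ) + 1)) :
    ENNReal.ofReal (1 + (j : ℝ) ^ 2) ≤ 3 * ENNReal.ofReal (1 + x ^ 2) := by
  obtain ⟨h1, h2⟩ := hx
  have habs : |(j : ℝ)| ≤ |x| + 1 :=
    abs_le.2 ⟨by linarith [neg_abs_le x], by linarith [le_abs_self x]⟩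
  have : (1 : ℝ) + (j : ℝ) ^ 2 ≤ 3 * (1 + x ^ 2) := by
    nlinarith [sq_nonneg (|x| - 1), abs_nonneg x, sq_abs x, sq_abs (j : ℝ), abs_nonneg (j : ℝ)]
  calc ENNReal.ofReal (1 + (j : ℝ) ^ 2) ≤ ENNReal.ofReal (3 * (1 + x ^ 2)) :=
        ENNReal.ofReal_le_ofReal this
    _ = ENNReal.ofReal 3 * ENNReal.ofReal (1 + x ^ 2) := ENNReal.ofReal_mul (by norm_num)
    _ = 3 * ENNReal.ofReal (1 + x ^ 2) := by norm_num

/-- Summing integrals over the unit intervals `[j, j+1]` gives the total integral. -/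
lemma sse_partition (h : ℝ → ℝ≥0∞) (hm : Measurable h) :
    (∑' j : ℤ, ∫⁻ x in Icc (j : ℝ) ((j : ℝ) + 1), h x) = ∫⁻ x, h x := by
  have e1 : ∀ j : ℤ, (∫⁻ x in Icc (j : ℝ) ((j : ℝ) + 1), h x)
      = ∫⁻ x in Ico (j : ℝ) ((j : ℝ) + 1), h x := fun j =>
    (setLIntegral_congr (Ico_ae_eq_Icc (μ := volume))).symm
  simp_rw [e1]
  rw [← lintegral_iUnion (fun j : ℤ => measurableSet_Ico)
    (Set.pairwise_disjoint_Ico_intCast ℝ) h, iUnion_Ico_intCast, Measure.restrict_univ]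

/-- Cauchy–Schwarz for sums over `ℤ`. -/
lemma sse_tsum_cs (s : ℤ → ℝ≥0∞) (w : ℤ → ℝ≥0∞) (hw0 : ∀ j, w j ≠ 0) (hwt : ∀ j, w j ≠ ∞) :
    (∑' j, s j) ≤ (∑' j, (w j)⁻¹) ^ (1/2 : ℝ) * (∑' j, w j * s j ^ (2 : ℝ)) ^ (1/2 : ℝ) := by
  have hpq : Real.HolderConjugate 2 2 := Real.holderConjugate_iff.mpr ⟨one_lt_two, by norm_num⟩
  have key := ENNReal.lintegral_mul_le_Lp_mul_Lq (Measure.count : Measure ℤ) hpq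
    (f := fun j => (w j) ^ (-(1/2) : ℝ)) (g := fun j => (w j) ^ (1/2 : ℝ) * s j)
    (measurable_of_countable _).aemeasurable (measurable_of_countable _).aemeasurable
  rw [lintegral_count, lintegral_count, lintegral_count] at key
  have e0 : ∀ j, ((fun j => (w j) ^ (-(1/2) : ℝ)) * fun j => (w j) ^ (1/2 : ℝ) * s j) j = s j := by
    intro j
    simp only [Pi.mul_apply]
    rw [← mul_assoc, ← ENNReal.rpow_add _ _ (hw0 j) (hwt j)]
    norm_num
  have e1 : ∀ j, ((w j) ^ (-(1/2) : ℝ)) ^ (2 : ℝ) = (w j)⁻¹ := by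
    intro j
    rw [← ENNReal.rpow_mul]
    norm_num [ENNReal.rpow_neg_one]
  have e2 : ∀ j, ((w j) ^ (1/2 : ℝ) * s j) ^ (2 : ℝ) = w j * s j ^ (2 : ℝ) := by
    intro j
    rw [ENNReal.mul_rpow_of_nonneg _ _ (by norm_num), ← ENNReal.rpow_mul]
    norm_num
  calc (∑' j, s j)
      = ∑' j, ((fun j => (w j) ^ (-(1/2) : ℝ)) * fun j => (w j) ^ (1/2 : ℝ) * s j) j :=
        tsum_congr fun j => (e0 j).symm
    _ ≤ (∑' j, ((w j) ^ (-(1/2) : ℝ)) ^ (2 : ℝ)) ^ (1/2 : ℝ) *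
          (∑' j, ((w j) ^ (1/2 : ℝ) * s j) ^ (2 : ℝ)) ^ (1/2 : ℝ) := key
    _ = _ := by rw [tsum_congr e1, tsum_congr e2]

/-- Elementary square bound in `ℝ≥0∞`. -/
lemma sse_sq (a b : ℝ≥0∞) : (a + b) ^ (2 : ℝ) ≤ 4 * (a ^ (2 : ℝ) + b ^ (2 : ℝ)) := by
  have h1 : a + b ≤ 2 * (a ⊔ b) := by
    rw [two_mul]; exact add_le_add le_sup_left le_sup_right
  have h2 : ((2 : ℝ≥0∞)) ^ (2 : ℝ) = 4 := by
    rw [show (2:ℝ) = ((2:ℕ):ℝ) by norm_num, ENNReal.rpow_natCast]; norm_num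
  calc (a + b) ^ (2:ℝ) ≤ (2 * (a ⊔ b)) ^ (2:ℝ) := ENNReal.rpow_le_rpow h1 (by norm_num)
    _ = 4 * (a ⊔ b) ^ (2:ℝ) := by
        rw [ENNReal.mul_rpow_of_nonneg _ _ (by norm_num : (0:ℝ) ≤ 2), h2]
    _ ≤ 4 * (a ^ (2:ℝ) + b ^ (2:ℝ)) := by
        gcongr
        rcases le_total a b with h | h
        · rw [sup_eq_right.2 h]; exact le_add_self
        · rw [sup_eq_left.2 h]; exact le_add_right le_rfl

/-- The weighted `L²` norm as a lintegral. -/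
lemma sse_eLpNorm (u : ℝ → ℂ) :
    eLpNorm (fun x : ℝ => (Real.sqrt (1 + x ^ 2) : ℝ) • u x) 2 volume
      = (∫⁻ x : ℝ, ENNReal.ofReal (1 + x ^ 2) * (‖u x‖₊ : ℝ≥0∞) ^ (2 : ℝ)) ^ (1/2 : ℝ) := by
  rw [eLpNorm_eq_lintegral_rpow_enorm_toReal two_ne_zero ENNReal.ofNat_ne_top]
  have htr : (2 : ℝ≥0∞).toReal = (2 : ℝ) := by simp
  rw [htr]
  congr 1
  refine lintegral_congr fun x => ?_
  have h0 : (0:ℝ) ≤ 1 + x ^ 2 := by positivity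
  rw [enorm_smul,
    ENNReal.mul_rpow_of_nonneg _ _ (by norm_num : (0:ℝ) ≤ 2),
    Real.enorm_eq_ofReal (Real.sqrt_nonneg _),
    ENNReal.ofReal_rpow_of_nonneg (Real.sqrt_nonneg _) (by norm_num : (0:ℝ) ≤ 2)]
  congr 2
  rw [show (2:ℝ) = ((2:ℕ):ℝ) by norm_num, Real.rpow_natCast]
  exact Real.sq_sqrt h0

end SSEAux

open ENNReal

/-- **Summed Sobolev embedding (3.16)/(a010).** There is a universal `C > 0` such that
for every `C¹` function `f : ℝ → ℂ`,
`∑_{j∈ℤ} sup_{x∈[j,j+1]} |f(x)| ≤ C (‖⟨x⟩f‖₂ + ‖⟨x⟩f'‖₂)`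
(both sides interpreted in `[0,∞]`). -/
theorem summed_sobolev_embedding :
    ∃ C : ℝ, 0 < C ∧ ∀ f : ℝ → ℂ, ContDiff ℝ 1 f →
      (∑' j : ℤ, ⨆ x ∈ Set.Icc (j : ℝ) ((j : ℝ) + 1), (‖f x‖₊ : ENNReal)) ≤
        ENNReal.ofReal C *
          (eLpNorm (fun x : ℝ => (Real.sqrt (1 + x ^ 2) : ℝ) • f x) 2 volume +
            eLpNorm (fun x : ℝ => (Real.sqrt (1 + x ^ 2) : ℝ) • deriv f x) 2 volume) := by
  classical
  -- summability of the weights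
  have hnat : Summable (fun n : ℕ => 1 / (1 + (n : ℝ) ^ 2)) := by
    have hg : Summable (fun n : ℕ => 1 / ((n : ℝ)) ^ 2) :=
      Real.summable_one_div_nat_pow.2 one_lt_two
    have hg1 : Summable (fun n : ℕ => 1 / ((n : ℝ) + 1) ^ 2) := by
      have := (summable_nat_add_iff 1).2 hg
      simpa [Nat.cast_add] using this
    refine (hg1.mul_left 2).of_nonneg_of_le (fun n => by positivity) (fun n => ?_)
    rw [mul_one_div, div_le_div_iff₀ (by positivity) (by positivity)]
    nlinarith [sq_nonneg ((n : ℝ) - 1)]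
  have hZ : Summable (fun j : ℤ => 1 / (1 + (j : ℝ) ^ 2)) := by
    refine Summable.of_nat_of_neg ?_ ?_ <;> simpa using hnat
  set Sinv : ℝ≥0∞ := ∑' j : ℤ, (ENNReal.ofReal (1 + (j : ℝ) ^ 2))⁻¹ with hSdef
  have hSeq : Sinv = ENNReal.ofReal (∑' j : ℤ, 1 / (1 + (j : ℝ) ^ 2)) := by
    rw [ENNReal.ofReal_tsum_of_nonneg (fun j => by positivity) hZ]
    refine tsum_congr fun j => ?_
    rw [one_div, ENNReal.ofReal_inv_of_pos (by positivity)]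
  have hS : Sinv ≠ ⊤ := by rw [hSeq]; exact ENNReal.ofReal_ne_top
  set K : ℝ≥0∞ := Sinv ^ (1/2 : ℝ) * (12 : ℝ≥0∞) ^ (1/2 : ℝ) with hKdef
  have hK : K ≠ ⊤ := ENNReal.mul_ne_top (ENNReal.rpow_ne_top_of_nonneg (by norm_num) hS)
    (ENNReal.rpow_ne_top_of_nonneg (by norm_num) (by norm_num))
  refine ⟨K.toReal + 1, by positivity, fun f hf => ?_⟩
  have hfc : Continuous f := hf.continuous
  have hgc : Continuous (deriv f) := hf.continuous_deriv le_rfl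
  have hmf : Measurable (fun y => (‖f y‖₊ : ℝ≥0∞)) := hfc.measurable.nnnorm.coe_nnreal_ennreal
  have hmg : Measurable (fun y => (‖deriv f y‖₊ : ℝ≥0∞)) :=
    hgc.measurable.nnnorm.coe_nnreal_ennreal
  set F : ℝ → ℝ≥0∞ := fun x => ENNReal.ofReal (1 + x ^ 2) * (‖f x‖₊ : ℝ≥0∞) ^ (2 : ℝ) with hF
  set G : ℝ → ℝ≥0∞ := fun x =>
    ENNReal.ofReal (1 + x ^ 2) * (‖deriv f x‖₊ : ℝ≥0∞) ^ (2 : ℝ) with hG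
  have hmw : Measurable (fun x : ℝ => ENNReal.ofReal (1 + x ^ 2)) :=
    (measurable_const.add (measurable_id.pow_const 2)).ennreal_ofReal
  have hmF : Measurable F := hmw.mul (hmf.pow_const _)
  have hmG : Measurable G := hmw.mul (hmg.pow_const _)
  set s : ℤ → ℝ≥0∞ := fun j => ⨆ x ∈ Set.Icc (j : ℝ) ((j : ℝ) + 1), (‖f x‖₊ : ℝ≥0∞) with hs
  set w : ℤ → ℝ≥0∞ := fun j => ENNReal.ofReal (1 + (j : ℝ) ^ 2) with hw
  have hw0 : ∀ j, w j ≠ 0 := fun j =>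
    (ENNReal.ofReal_pos.2 (by positivity)).ne'
  have hwt : ∀ j, w j ≠ ⊤ := fun _ => ENNReal.ofReal_ne_top
  -- per-interval bound
  have hloc : ∀ j : ℤ, w j * s j ^ (2 : ℝ) ≤
      12 * ((∫⁻ x in Set.Icc (j : ℝ) ((j : ℝ) + 1), F x) +
        ∫⁻ x in Set.Icc (j : ℝ) ((j : ℝ) + 1), G x) := by
    intro j
    set A := ∫⁻ y in Set.Icc (j : ℝ) ((j : ℝ) + 1), (‖f y‖₊ : ℝ≥0∞) ^ (2 : ℝ) with hA
    set B := ∫⁻ y in Set.Icc (j : ℝ) ((j : ℝ) + 1), (‖deriv f y‖₊ : ℝ≥0∞) ^ (2 : ℝ) with hB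
    have h1 : s j ≤ A ^ (1/2 : ℝ) + B ^ (1/2 : ℝ) :=
      (sse_loc f hf (j : ℝ)).trans
        (add_le_add (sse_cs _ hmf (j : ℝ)) (sse_cs _ hmg (j : ℝ)))
    have h2 : s j ^ (2 : ℝ) ≤ 4 * (A + B) := by
      calc s j ^ (2:ℝ) ≤ (A ^ (1/2:ℝ) + B ^ (1/2:ℝ)) ^ (2:ℝ) :=
            ENNReal.rpow_le_rpow h1 (by norm_num)
        _ ≤ 4 * ((A ^ (1/2:ℝ)) ^ (2:ℝ) + (B ^ (1/2:ℝ)) ^ (2:ℝ)) := sse_sq _ _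
        _ = 4 * (A + B) := by
            rw [← ENNReal.rpow_mul, ← ENNReal.rpow_mul]; norm_num
    have h3 : w j * A ≤ 3 * ∫⁻ x in Set.Icc (j : ℝ) ((j : ℝ) + 1), F x := by
      rw [← lintegral_const_mul' _ _ (hwt j), ← lintegral_const_mul' _ _ ENNReal.ofNat_ne_top]
      refine setLIntegral_mono' measurableSet_Icc fun x hx => ?_
      rw [hF]
      calc w j * (‖f x‖₊ : ℝ≥0∞) ^ (2:ℝ)
          ≤ (3 * ENNReal.ofReal (1 + x ^ 2)) * (‖f x‖₊ : ℝ≥0∞) ^ (2:ℝ) :=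
            mul_le_mul_left (sse_weight j hx) _
        _ = 3 * (ENNReal.ofReal (1 + x ^ 2) * (‖f x‖₊ : ℝ≥0∞) ^ (2:ℝ)) := by ring
    have h4 : w j * B ≤ 3 * ∫⁻ x in Set.Icc (j : ℝ) ((j : ℝ) + 1), G x := by
      rw [← lintegral_const_mul' _ _ (hwt j), ← lintegral_const_mul' _ _ ENNReal.ofNat_ne_top]
      refine setLIntegral_mono' measurableSet_Icc fun x hx => ?_
      rw [hG]
      calc w j * (‖deriv f x‖₊ : ℝ≥0∞) ^ (2:ℝ)
          ≤ (3 * ENNReal.ofReal (1 + x ^ 2)) * (‖deriv f x‖₊ : ℝ≥0∞) ^ (2:ℝ) :=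
            mul_le_mul_left (sse_weight j hx) _
        _ = 3 * (ENNReal.ofReal (1 + x ^ 2) * (‖deriv f x‖₊ : ℝ≥0∞) ^ (2:ℝ)) := by ring
    calc w j * s j ^ (2:ℝ) ≤ w j * (4 * (A + B)) := mul_le_mul_right h2 _
      _ = 4 * (w j * A + w j * B) := by ring
      _ ≤ 4 * ((3 * ∫⁻ x in Set.Icc (j : ℝ) ((j : ℝ) + 1), F x) +
            3 * ∫⁻ x in Set.Icc (j : ℝ) ((j : ℝ) + 1), G x) := by gcongr
      _ = 12 * ((∫⁻ x in Set.Icc (j : ℝ) ((j : ℝ) + 1), F x) +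
            ∫⁻ x in Set.Icc (j : ℝ) ((j : ℝ) + 1), G x) := by ring
  have hsum2 : (∑' j : ℤ, w j * s j ^ (2 : ℝ)) ≤ 12 * ((∫⁻ x, F x) + ∫⁻ x, G x) := by
    calc (∑' j : ℤ, w j * s j ^ (2 : ℝ))
        ≤ ∑' j : ℤ, 12 * ((∫⁻ x in Set.Icc (j : ℝ) ((j : ℝ) + 1), F x) +
            ∫⁻ x in Set.Icc (j : ℝ) ((j : ℝ) + 1), G x) :=
          ENNReal.tsum_le_tsum hloc
      _ = 12 * ((∑' j : ℤ, ∫⁻ x in Set.Icc (j : ℝ) ((j : ℝ) + 1), F x) +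
            ∑' j : ℤ, ∫⁻ x in Set.Icc (j : ℝ) ((j : ℝ) + 1), G x) := by
          rw [ENNReal.tsum_mul_left, ENNReal.tsum_add]
      _ = 12 * ((∫⁻ x, F x) + ∫⁻ x, G x) := by
          rw [sse_partition F hmF, sse_partition G hmG]
  have hKof : K ≤ ENNReal.ofReal (K.toReal + 1) := by
    calc K = ENNReal.ofReal K.toReal := (ENNReal.ofReal_toReal hK).symm
      _ ≤ ENNReal.ofReal (K.toReal + 1) := ENNReal.ofReal_le_ofReal (by linarith)
  calc (∑' j : ℤ, s j)
      ≤ Sinv ^ (1/2 : ℝ) * (∑' j : ℤ, w j * s j ^ (2 : ℝ)) ^ (1/2 : ℝ) :=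
        sse_tsum_cs s w hw0 hwt
    _ ≤ Sinv ^ (1/2 : ℝ) * (12 * ((∫⁻ x, F x) + ∫⁻ x, G x)) ^ (1/2 : ℝ) :=
        mul_le_mul_right (ENNReal.rpow_le_rpow hsum2 (by norm_num)) _
    _ = K * ((∫⁻ x, F x) + ∫⁻ x, G x) ^ (1/2 : ℝ) := by
        rw [ENNReal.mul_rpow_of_nonneg _ _ (by norm_num : (0:ℝ) ≤ 1/2), hKdef, mul_assoc]
    _ ≤ K * ((∫⁻ x, F x) ^ (1/2 : ℝ) + (∫⁻ x, G x) ^ (1/2 : ℝ)) :=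
        mul_le_mul_right (ENNReal.rpow_add_le_add_rpow _ _ (by norm_num) (by norm_num)) _
    _ = K * (eLpNorm (fun x : ℝ => (Real.sqrt (1 + x ^ 2) : ℝ) • f x) 2 volume +
          eLpNorm (fun x : ℝ => (Real.sqrt (1 + x ^ 2) : ℝ) • deriv f x) 2 volume) := by
        rw [sse_eLpNorm f, sse_eLpNorm (deriv f)]
    _ ≤ ENNReal.ofReal (K.toReal + 1) *
          (eLpNorm (fun x : ℝ => (Real.sqrt (1 + x ^ 2) : ℝ) • f x) 2 volume +
            eLpNorm (fun x : ℝ => (Real.sqrt (1 + x ^ 2) : ℝ) • deriv f x) 2 volume) :=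
        mul_le_mul_left hKof _
end
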